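/- arXiv:2303.05738 — 6 statements merged into one kernel-verified Lean document; each statement's English description precedes it below -/
import Mathlib

section
/- Let n ≥ 1, K0 > 0, G ≥ 0. Let L : ℝⁿ × ℝⁿ × ℝⁿ → ℝ be continuous, ℤⁿ-periodic in its second argument, convex in its third argument, and satisfy |v|²/2 − K0 ≤ L(x,y,v) ≤ |v|²/2 + K0 for all x, y, v ∈ ℝⁿ. Let g : ℝⁿ → ℝ be Lipschitz with constant at most G. Then there exists a constant M0 > 0 depending only on n, K0 and G with the following property: for every x ∈ ℝⁿ, t > 0, ε > 0, if γ : [0,t] → ℝⁿ is absolutely continuous with γ(0) = x and ∫₀ᵗ L(γ(s), γ(s)/ε, −γ̇(s)) ds + g(γ(t)) ≤ ∫₀ᵗ L(η(s), η(s)/ε, −η̇(s)) ds + g(η(t)) for every absolutely continuous η : [0,t] → ℝⁿ with η(0) = x (i.e. γ is a minimizing curve for the control functional), then |γ̇(s)| ≤ M0 for almost every s ∈ [0,t]. -/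
open MeasureTheory Real Set

noncomputable section

/-- `ℝⁿ` with the Euclidean norm. -/
abbrev E (n : ℕ) : Type := EuclideanSpace ℝ (Fin n)

/-- A vector in `ℝⁿ` with integer coordinates. -/
def intVec (n : ℕ) (k : Fin n → ℤ) : E n := WithLp.toLp 2 (fun i => (k i : ℝ))

/-- `γ : [a,b] → ℝⁿ` is absolutely continuous with (a.e.) derivative `γ'`. -/
def IsAC {n : ℕ} (a b : ℝ) (γ γ' : ℝ → E n) : Prop :=
  IntegrableOn γ' (Icc a b) volume ∧
    ∀ c d : ℝ, a ≤ c → c ≤ d → d ≤ b → γ d - γ c = ∫ s in c..d, γ' s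

section Aux

variable {n : ℕ}

set_option maxHeartbeats 1000000 in
/-- Key interval estimate: on any subinterval `[c,d]` with `2d - c ≤ t`, the mean of
`‖γ'‖²` of a minimizing curve is bounded by `16 K0 + 2 G²`.  This is proved by comparing
the minimizer with the curve that traverses `γ|_{[c,d]}` at half speed and then follows a
time-delayed copy of `γ`, ending at `γ (t - (d - c))`. -/
private lemma key_bound {K0 G : ℝ} (hK0 : 0 < K0) (hG : 0 ≤ G)
    {L : E n → E n → E n → ℝ}
    (hLc : Continuous (fun q : E n × E n × E n => L q.1 q.2.1 q.2.2))
    (hLb : ∀ x y v, ‖v‖ ^ 2 / 2 - K0 ≤ L x y v ∧ L x y v ≤ ‖v‖ ^ 2 / 2 + K0)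
    {g : E n → ℝ} (hg : ∀ x₁ x₂, |g x₁ - g x₂| ≤ G * ‖x₁ - x₂‖)
    {x : E n} {t ε : ℝ} (ht : 0 < t)
    {γ γ' : ℝ → E n} (hAC : IsAC 0 t γ γ') (hγ0 : γ 0 = x)
    (hγint : IntervalIntegrable (fun s => L (γ s) (ε⁻¹ • γ s) (-γ' s)) volume 0 t)
    (hmin : ∀ η η' : ℝ → E n, IsAC 0 t η η' → η 0 = x →
      IntervalIntegrable (fun s => L (η s) (ε⁻¹ • η s) (-η' s)) volume 0 t →
      (∫ s in (0:ℝ)..t, L (γ s) (ε⁻¹ • γ s) (-γ' s)) + g (γ t) ≤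
        (∫ s in (0:ℝ)..t, L (η s) (ε⁻¹ • η s) (-η' s)) + g (η t))
    {c d : ℝ} (hc0 : 0 ≤ c) (hcd : c ≤ d) (hdt : 2 * d - c ≤ t) :
    (∫ s in c..d, ‖γ' s‖ ^ 2) ≤ (16 * K0 + 2 * G ^ 2) * (d - c) := by
  have hm0 : 0 ≤ d - c := by linarith
  set m : ℝ := d - c with hm
  set p : ℝ := 2 * d - c with hp
  set q : ℝ := t - m with hq
  have hdp : d ≤ p := by rw [hp]; linarith
  have hpt : p ≤ t := hdt
  have hdt' : d ≤ t := le_trans hdp hpt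
  have hct : c ≤ t := le_trans hcd hdt'
  have hd0 : 0 ≤ d := le_trans hc0 hcd
  have hp0 : 0 ≤ p := le_trans hd0 hdp
  have hdq : d ≤ q := by rw [hq, hm]; rw [hp] at hpt; linarith
  have hq0 : 0 ≤ q := le_trans hd0 hdq
  have hqt : q ≤ t := by rw [hq]; linarith
  have hcp : c ≤ p := le_trans hcd hdp
  -- basic consequences of the bounds on L
  have hlb : ∀ y z v : E n, ‖v‖ ^ 2 / 2 - K0 ≤ L y z v := fun y z v => (hLb y z v).1
  have hub : ∀ y z v : E n, L y z v ≤ ‖v‖ ^ 2 / 2 + K0 := fun y z v => (hLb y z v).2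
  have habs : ∀ y z v : E n, |L y z v| ≤ ‖v‖ ^ 2 / 2 + K0 := by
    intro y z v
    have h1 := hlb y z v
    have h2 := hub y z v
    have h3 : (0:ℝ) ≤ ‖v‖ ^ 2 := by positivity
    rw [abs_le]; constructor <;> nlinarith
  -- AC identity for γ
  have hγ : ∀ a b : ℝ, 0 ≤ a → a ≤ b → b ≤ t → γ b - γ a = ∫ s in a..b, γ' s := hAC.2
  have hγ'I : IntegrableOn γ' (Icc 0 t) volume := hAC.1
  have hγ'II : IntervalIntegrable γ' volume 0 t :=
    (intervalIntegrable_iff_integrableOn_Icc_of_le ht.le).mpr hγ'I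
  have hIIγ' : ∀ a b : ℝ, 0 ≤ a → a ≤ b → b ≤ t → IntervalIntegrable γ' volume a b := by
    intro a b h1 h2 h3
    exact hγ'II.mono_set (by rw [uIcc_of_le h2, uIcc_of_le ht.le]; exact Icc_subset_Icc h1 h3)
  -- continuity of γ on [0, t]
  have hγcont : ContinuousOn γ (Icc 0 t) := by
    have h1 : ContinuousOn (fun s => x + ∫ u in (0:ℝ)..s, γ' u) (Icc 0 t) := by
      have h2 : IntegrableOn γ' (uIcc 0 t) volume := by rwa [uIcc_of_le ht.le]
      have h3 := intervalIntegral.continuousOn_primitive_interval h2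
      rw [uIcc_of_le ht.le] at h3
      exact continuousOn_const.add h3
    apply h1.congr
    intro s hs
    have h3 := hγ 0 s le_rfl hs.1 hs.2
    rw [hγ0] at h3
    exact eq_add_of_sub_eq' h3
  have hγmeas : AEStronglyMeasurable γ (volume.restrict (Icc 0 t)) :=
    hγcont.aestronglyMeasurable measurableSet_Icc
  have hγ'meas : AEStronglyMeasurable γ' (volume.restrict (Icc 0 t)) :=
    hγ'I.aestronglyMeasurable
  -- integrability of ‖γ'‖²
  have hsqI : IntegrableOn (fun s => ‖γ' s‖ ^ 2) (Icc 0 t) volume := by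
    have hLγI : IntegrableOn (fun s => L (γ s) (ε⁻¹ • γ s) (-γ' s)) (Icc 0 t) volume :=
      (intervalIntegrable_iff_integrableOn_Icc_of_le ht.le).mp hγint
    have hdom : IntegrableOn (fun s => 2 * L (γ s) (ε⁻¹ • γ s) (-γ' s) + 2 * K0)
        (Icc 0 t) volume := by
      refine (hLγI.const_mul 2).add ?_
      exact integrableOn_const measure_Icc_lt_top.ne
    refine Integrable.mono' hdom ?_ ?_
    · exact (continuous_pow 2).comp_aestronglyMeasurable hγ'meas.norm
    · refine Filter.Eventually.of_forall fun s => ?_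
      have h1 := hlb (γ s) (ε⁻¹ • γ s) (-γ' s)
      rw [norm_neg] at h1
      have h2 : (0:ℝ) ≤ ‖γ' s‖ ^ 2 := by positivity
      rw [Real.norm_eq_abs, abs_of_nonneg h2]
      linarith
  have hsqII : ∀ a b : ℝ, 0 ≤ a → a ≤ b → b ≤ t →
      IntervalIntegrable (fun s => ‖γ' s‖ ^ 2) volume a b := by
    intro a b h1 h2 h3
    rw [intervalIntegrable_iff_integrableOn_Icc_of_le h2]
    exact hsqI.mono_set (Icc_subset_Icc h1 h3)
  have hIILγ : ∀ a b : ℝ, 0 ≤ a → a ≤ b → b ≤ t →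
      IntervalIntegrable (fun s => L (γ s) (ε⁻¹ • γ s) (-γ' s)) volume a b := by
    intro a b h1 h2 h3
    exact hγint.mono_set (by rw [uIcc_of_le h2, uIcc_of_le ht.le]; exact Icc_subset_Icc h1 h3)
  -- the half-speed integrand
  set Fc : ℝ → ℝ := fun u => L (γ u) (ε⁻¹ • γ u) (-((2:ℝ)⁻¹ • γ' u)) with hFc
  have hFcnorm : ∀ u, ‖-((2:ℝ)⁻¹ • γ' u)‖ ^ 2 / 2 = ‖γ' u‖ ^ 2 / 8 := by
    intro u
    rw [norm_neg, norm_smul, Real.norm_eq_abs, abs_of_pos (by norm_num : (0:ℝ) < 2⁻¹)]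
    ring
  have hFcmeas : AEStronglyMeasurable Fc (volume.restrict (Icc 0 t)) := by
    have h1 := hLc.comp_aestronglyMeasurable
      (hγmeas.prodMk ((hγmeas.const_smul ε⁻¹).prodMk ((hγ'meas.const_smul (2:ℝ)⁻¹).neg)))
    exact h1
  have hFcII : IntervalIntegrable Fc volume c d := by
    rw [intervalIntegrable_iff_integrableOn_Icc_of_le hcd]
    have hdom : IntegrableOn (fun u => ‖γ' u‖ ^ 2 / 8 + K0) (Icc c d) volume := by
      refine ((hsqI.mono_set (Icc_subset_Icc hc0 hdt')).div_const 8).add ?_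
      exact integrableOn_const measure_Icc_lt_top.ne
    refine Integrable.mono' hdom ?_ ?_
    · exact hFcmeas.mono_measure (Measure.restrict_mono (Icc_subset_Icc hc0 hdt') le_rfl)
    · refine Filter.Eventually.of_forall fun u => ?_
      have h1 := habs (γ u) (ε⁻¹ • γ u) (-((2:ℝ)⁻¹ • γ' u))
      rw [hFcnorm u] at h1
      simpa [Real.norm_eq_abs, hFc] using h1
  -- the comparison curve
  set η : ℝ → E n := fun s => if s ≤ c then γ s else if s ≤ p then γ ((s + c) / 2)
    else γ (s - m) with hη
  set η' : ℝ → E n := fun s => if s ≤ c then γ' s else if s ≤ p then (2:ℝ)⁻¹ • γ' ((s + c) / 2)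
    else γ' (s - m) with hη'
  -- interval integrability of η' on the three pieces
  have P1 : IntervalIntegrable η' volume 0 c := by
    rw [intervalIntegrable_iff_integrableOn_Ioc_of_le hc0]
    refine ((intervalIntegrable_iff_integrableOn_Ioc_of_le hc0).mp
      (hIIγ' 0 c le_rfl hc0 hct)).congr_fun (fun s hs => ?_) measurableSet_Ioc
    simp only [hη', if_pos hs.2]
  have P2 : IntervalIntegrable η' volume c p := by
    have step : IntervalIntegrable (fun s => γ' ((s + c) * 2⁻¹)) volume c p := by
      have h1 := ((hIIγ' c d hc0 hcd hdt').comp_mul_right (c := 2⁻¹)).comp_add_right c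
      have e1 : c / 2⁻¹ - c = c := by ring
      have e2 : d / 2⁻¹ - c = p := by rw [hp]; ring
      rwa [e1, e2] at h1
    have step2 : IntervalIntegrable (fun s => (2:ℝ)⁻¹ • γ' ((s + c) / 2)) volume c p := by
      have h2 := step.smul (2:ℝ)⁻¹
      have e : (fun s => (2:ℝ)⁻¹ • γ' ((s + c) / 2))
          = ((2:ℝ)⁻¹ • fun s => γ' ((s + c) * 2⁻¹)) := by
        funext s; simp [div_eq_mul_inv]
      rwa [e]
    rw [intervalIntegrable_iff_integrableOn_Ioc_of_le hcp]
    refine ((intervalIntegrable_iff_integrableOn_Ioc_of_le hcp).mp step2).congr_fun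
      (fun s hs => ?_) measurableSet_Ioc
    simp only [hη', if_neg (not_le.mpr hs.1), if_pos hs.2]
  have P3 : IntervalIntegrable η' volume p t := by
    have step : IntervalIntegrable (fun s => γ' (s - m)) volume p t := by
      have h1 := (hIIγ' d q hd0 hdq hqt).comp_sub_right m
      have e1 : d + m = p := by rw [hp, hm]; ring
      have e2 : q + m = t := by rw [hq]; ring
      rwa [e1, e2] at h1
    rw [intervalIntegrable_iff_integrableOn_Ioc_of_le hpt]
    refine ((intervalIntegrable_iff_integrableOn_Ioc_of_le hpt).mp step).congr_fun
      (fun s hs => ?_) measurableSet_Ioc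
    simp only [hη', if_neg (not_le.mpr (lt_of_le_of_lt hcp hs.1)), if_neg (not_le.mpr hs.1)]
  have hII_η' : IntervalIntegrable η' volume 0 t := (P1.trans P2).trans P3
  have hIIη'any : ∀ a b : ℝ, 0 ≤ a → a ≤ b → b ≤ t → IntervalIntegrable η' volume a b := by
    intro a b h1 h2 h3
    exact hII_η'.mono_set (by rw [uIcc_of_le h2, uIcc_of_le ht.le]; exact Icc_subset_Icc h1 h3)
  -- integral of η' over the pieces
  have hint1 : ∀ a b : ℝ, 0 ≤ a → a ≤ b → b ≤ c → (∫ s in a..b, η' s) = γ b - γ a := by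
    intro a b h1 h2 h3
    have e : (∫ s in a..b, η' s) = ∫ s in a..b, γ' s := by
      apply intervalIntegral.integral_congr
      intro s hs
      rw [uIcc_of_le h2] at hs
      simp only [hη', if_pos (le_trans hs.2 h3)]
    rw [e, ← hγ a b h1 h2 (le_trans h3 hct)]
  have hint2 : ∀ a b : ℝ, c ≤ a → a ≤ b → b ≤ p →
      (∫ s in a..b, η' s) = γ ((b + c) / 2) - γ ((a + c) / 2) := by
    intro a b h1 h2 h3
    have e1 : (∫ s in a..b, η' s) = ∫ s in a..b, (2:ℝ)⁻¹ • γ' ((s + c) / 2) := by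
      rw [intervalIntegral.integral_of_le h2, intervalIntegral.integral_of_le h2]
      refine setIntegral_congr_fun measurableSet_Ioc fun s hs => ?_
      simp only [hη', if_neg (not_le.mpr (lt_of_le_of_lt h1 hs.1)), if_pos (le_trans hs.2 h3)]
    rw [e1, intervalIntegral.integral_smul]
    have e2 : (∫ s in a..b, γ' ((s + c) / 2))
        = (2:ℝ) • ∫ u in (a/2 + c/2)..(b/2 + c/2), γ' u := by
      have h4 := intervalIntegral.integral_comp_div_add (a := a) (b := b) γ' (by norm_num : (2:ℝ) ≠ 0) (c/2)
      simp only [add_div]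
      exact h4
    rw [e2, smul_smul]
    norm_num
    rw [show a/2 + c/2 = (a + c)/2 by ring, show b/2 + c/2 = (b + c)/2 by ring]
    refine (hγ _ _ (by linarith) (by linarith) ?_).symm
    rw [hp] at h3; linarith
  have hint3 : ∀ a b : ℝ, p ≤ a → a ≤ b → b ≤ t →
      (∫ s in a..b, η' s) = γ (b - m) - γ (a - m) := by
    intro a b h1 h2 h3
    have e1 : (∫ s in a..b, η' s) = ∫ s in a..b, γ' (s - m) := by
      rw [intervalIntegral.integral_of_le h2, intervalIntegral.integral_of_le h2]
      refine setIntegral_congr_fun measurableSet_Ioc fun s hs => ?_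
      have hs1 : ¬ s ≤ c := not_le.mpr (lt_of_le_of_lt (le_trans hcp h1) hs.1)
      have hs2 : ¬ s ≤ p := not_le.mpr (lt_of_le_of_lt h1 hs.1)
      simp only [hη', if_neg hs1, if_neg hs2]
    rw [e1, intervalIntegral.integral_comp_sub_right γ' m]
    have hb1 : 0 ≤ a - m := by rw [hm]; rw [hp] at h1; linarith
    have hb2 : a - m ≤ b - m := by linarith
    have hb3 : b - m ≤ t := by linarith
    exact (hγ _ _ hb1 hb2 hb3).symm
  -- the primitive identity for η
  have prim : ∀ s : ℝ, 0 ≤ s → s ≤ t → (∫ u in (0:ℝ)..s, η' u) = η s - x := by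
    intro s hs0 hst
    by_cases h1 : s ≤ c
    · rw [hint1 0 s le_rfl hs0 h1]
      simp only [hη, if_pos h1, hγ0]
    · push_neg at h1
      by_cases h2 : s ≤ p
      · rw [← intervalIntegral.integral_add_adjacent_intervals
          (hIIη'any 0 c le_rfl hc0 hct) (hIIη'any c s hc0 h1.le hst),
          hint1 0 c le_rfl hc0 le_rfl, hint2 c s le_rfl h1.le h2]
        simp only [hη, if_neg (not_le.mpr h1), if_pos h2, add_self_div_two, hγ0]
        abel
      · push_neg at h2
        rw [← intervalIntegral.integral_add_adjacent_intervals
          (hIIη'any 0 p le_rfl hp0 hpt) (hIIη'any p s hp0 h2.le hst),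
          ← intervalIntegral.integral_add_adjacent_intervals
          (hIIη'any 0 c le_rfl hc0 hct) (hIIη'any c p hc0 hcp hpt),
          hint1 0 c le_rfl hc0 le_rfl, hint2 c p le_rfl hcp le_rfl,
          hint3 p s le_rfl h2.le hst]
        have e3 : (p + c)/2 = p - m := by rw [hp, hm]; ring
        simp only [hη, if_neg (not_le.mpr (lt_of_le_of_lt hcp h2)), if_neg (not_le.mpr h2),
          add_self_div_two, e3, hγ0]
        abel
  have hACη : IsAC 0 t η η' := by
    constructor
    · exact (intervalIntegrable_iff_integrableOn_Icc_of_le ht.le).mp hII_η'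
    · intro a b h1 h2 h3
      rw [← intervalIntegral.integral_interval_sub_left
        (hIIη'any 0 b le_rfl (le_trans h1 h2) h3) (hIIη'any 0 a le_rfl h1 (le_trans h2 h3)),
        prim b (le_trans h1 h2) h3, prim a h1 (le_trans h2 h3)]
      abel
  have hη0 : η 0 = x := by
    simp only [hη, if_pos hc0]; exact hγ0
  -- interval integrability of the cost of η
  have Q1 : IntervalIntegrable (fun s => L (η s) (ε⁻¹ • η s) (-η' s)) volume 0 c := by
    rw [intervalIntegrable_iff_integrableOn_Ioc_of_le hc0]
    refine ((intervalIntegrable_iff_integrableOn_Ioc_of_le hc0).mp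
      (hIILγ 0 c le_rfl hc0 hct)).congr_fun (fun s hs => ?_) measurableSet_Ioc
    simp only [hη, hη', if_pos hs.2]
  have Q2 : IntervalIntegrable (fun s => L (η s) (ε⁻¹ • η s) (-η' s)) volume c p := by
    have step : IntervalIntegrable (fun s => Fc ((s + c) * 2⁻¹)) volume c p := by
      have h1 := (hFcII.comp_mul_right (c := 2⁻¹)).comp_add_right c
      have e1 : c / 2⁻¹ - c = c := by ring
      have e2 : d / 2⁻¹ - c = p := by rw [hp]; ring
      rwa [e1, e2] at h1
    rw [intervalIntegrable_iff_integrableOn_Ioc_of_le hcp]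
    refine ((intervalIntegrable_iff_integrableOn_Ioc_of_le hcp).mp step).congr_fun
      (fun s hs => ?_) measurableSet_Ioc
    simp only [hFc, hη, hη', if_neg (not_le.mpr hs.1), if_pos hs.2]
    rw [show (s + c) * 2⁻¹ = (s + c)/2 by ring]
  have Q3 : IntervalIntegrable (fun s => L (η s) (ε⁻¹ • η s) (-η' s)) volume p t := by
    have step : IntervalIntegrable (fun s => L (γ (s - m)) (ε⁻¹ • γ (s - m)) (-γ' (s - m)))
        volume p t := by
      have h1 := (hIILγ d q hd0 hdq hqt).comp_sub_right m
      have e1 : d + m = p := by rw [hp, hm]; ring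
      have e2 : q + m = t := by rw [hq]; ring
      rwa [e1, e2] at h1
    rw [intervalIntegrable_iff_integrableOn_Ioc_of_le hpt]
    refine ((intervalIntegrable_iff_integrableOn_Ioc_of_le hpt).mp step).congr_fun
      (fun s hs => ?_) measurableSet_Ioc
    have hs1 : ¬ s ≤ c := not_le.mpr (lt_of_le_of_lt hcp hs.1)
    have hs2 : ¬ s ≤ p := not_le.mpr hs.1
    simp only [hη, hη', if_neg hs1, if_neg hs2]
  have hLηII : IntervalIntegrable (fun s => L (η s) (ε⁻¹ • η s) (-η' s)) volume 0 t :=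
    (Q1.trans Q2).trans Q3
  -- apply minimality
  have hkey := hmin η η' hACη hη0 hLηII
  have hηt : η t = γ q := by
    by_cases h1 : t ≤ c
    · have hc : c = t := le_antisymm hct h1
      have hd : d = t := le_antisymm hdt' (hc ▸ hcd)
      have hqeq : q = t := by rw [hq, hm, hd, hc]; ring
      simp only [hη, if_pos h1, hqeq]
    · by_cases h2 : t ≤ p
      · have hpe : p = t := le_antisymm hpt h2
        have e : (t + c)/2 = q := by rw [hq, hm, ← hpe, hp]; ring
        simp only [hη, if_neg h1, if_pos h2, e]
      · push_neg at h2
        have e : t - m = q := hq.symm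
        simp only [hη, if_neg h1, if_neg (not_le.mpr h2), e]
  -- rewrite the cost of η
  have A1 : (∫ s in (0:ℝ)..c, L (η s) (ε⁻¹ • η s) (-η' s))
      = ∫ s in (0:ℝ)..c, L (γ s) (ε⁻¹ • γ s) (-γ' s) := by
    rw [intervalIntegral.integral_of_le hc0, intervalIntegral.integral_of_le hc0]
    refine setIntegral_congr_fun measurableSet_Ioc fun s hs => ?_
    simp only [hη, hη', if_pos hs.2]
  have A2 : (∫ s in c..p, L (η s) (ε⁻¹ • η s) (-η' s)) = 2 * ∫ u in c..d, Fc u := by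
    have e1 : (∫ s in c..p, L (η s) (ε⁻¹ • η s) (-η' s)) = ∫ s in c..p, Fc ((s + c)/2) := by
      rw [intervalIntegral.integral_of_le hcp, intervalIntegral.integral_of_le hcp]
      refine setIntegral_congr_fun measurableSet_Ioc fun s hs => ?_
      simp only [hFc, hη, hη', if_neg (not_le.mpr hs.1), if_pos hs.2]
    rw [e1]
    have e2 := intervalIntegral.integral_comp_div_add (a := c) (b := p) Fc (by norm_num : (2:ℝ) ≠ 0) (c/2)
    simp only [add_div]
    rw [e2, show c/2 + c/2 = c by ring, show p/2 + c/2 = d by rw [hp]; ring, smul_eq_mul]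
  have A3 : (∫ s in p..t, L (η s) (ε⁻¹ • η s) (-η' s))
      = ∫ s in d..q, L (γ s) (ε⁻¹ • γ s) (-γ' s) := by
    have e2 := intervalIntegral.integral_comp_sub_right (a := p) (b := t)
      (fun u => L (γ u) (ε⁻¹ • γ u) (-γ' u)) m
    have e1 : (∫ s in p..t, L (η s) (ε⁻¹ • η s) (-η' s))
        = ∫ s in p..t, L (γ (s - m)) (ε⁻¹ • γ (s - m)) (-γ' (s - m)) := by
      rw [intervalIntegral.integral_of_le hpt, intervalIntegral.integral_of_le hpt]
      refine setIntegral_congr_fun measurableSet_Ioc fun s hs => ?_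
      have hs1 : ¬ s ≤ c := not_le.mpr (lt_of_le_of_lt hcp hs.1)
      have hs2 : ¬ s ≤ p := not_le.mpr hs.1
      simp only [hη, hη', if_neg hs1, if_neg hs2]
    rw [e1, e2, show p - m = d by rw [hp, hm]; ring, show t - m = q from hq.symm]
  have eη : (∫ s in (0:ℝ)..t, L (η s) (ε⁻¹ • η s) (-η' s))
      = (∫ s in (0:ℝ)..c, L (γ s) (ε⁻¹ • γ s) (-γ' s)) + 2 * (∫ u in c..d, Fc u)
        + ∫ s in d..q, L (γ s) (ε⁻¹ • γ s) (-γ' s) := by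
    rw [← intervalIntegral.integral_add_adjacent_intervals (Q1.trans Q2) Q3,
      ← intervalIntegral.integral_add_adjacent_intervals Q1 Q2, A1, A2, A3]
  have eγ : (∫ s in (0:ℝ)..t, L (γ s) (ε⁻¹ • γ s) (-γ' s))
      = (((∫ s in (0:ℝ)..c, L (γ s) (ε⁻¹ • γ s) (-γ' s))
        + ∫ s in c..d, L (γ s) (ε⁻¹ • γ s) (-γ' s))
        + ∫ s in d..q, L (γ s) (ε⁻¹ • γ s) (-γ' s))
        + ∫ s in q..t, L (γ s) (ε⁻¹ • γ s) (-γ' s) := by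
    rw [intervalIntegral.integral_add_adjacent_intervals (hIILγ 0 c le_rfl hc0 hct)
        (hIILγ c d hc0 hcd hdt'),
      intervalIntegral.integral_add_adjacent_intervals (hIILγ 0 d le_rfl hd0 hdt')
        (hIILγ d q hd0 hdq hqt),
      intervalIntegral.integral_add_adjacent_intervals (hIILγ 0 q le_rfl hq0 hqt)
        (hIILγ q t hq0 hqt le_rfl)]
  rw [eη, eγ, hηt] at hkey
  -- the four estimates
  have hE1 : (∫ s in c..d, ‖γ' s‖ ^ 2)/2 - m * K0
      ≤ ∫ s in c..d, L (γ s) (ε⁻¹ • γ s) (-γ' s) := by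
    have h1 : (∫ s in c..d, (‖γ' s‖ ^ 2/2 - K0))
        ≤ ∫ s in c..d, L (γ s) (ε⁻¹ • γ s) (-γ' s) := by
      refine intervalIntegral.integral_mono_on hcd
        (((hsqII c d hc0 hcd hdt').div_const 2).sub intervalIntegrable_const)
        (hIILγ c d hc0 hcd hdt') (fun s _ => ?_)
      have h2 := hlb (γ s) (ε⁻¹ • γ s) (-γ' s)
      rwa [norm_neg] at h2
    rw [intervalIntegral.integral_sub ((hsqII c d hc0 hcd hdt').div_const 2)
      intervalIntegrable_const, intervalIntegral.integral_div,
      intervalIntegral.integral_const, smul_eq_mul, ← hm] at h1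
    linarith
  have hE2 : G * (∫ s in q..t, ‖γ' s‖) - m * (G ^ 2/2 + K0)
      ≤ ∫ s in q..t, L (γ s) (ε⁻¹ • γ s) (-γ' s) := by
    have h1 : (∫ s in q..t, (G * ‖γ' s‖ - (G ^ 2/2 + K0)))
        ≤ ∫ s in q..t, L (γ s) (ε⁻¹ • γ s) (-γ' s) := by
      refine intervalIntegral.integral_mono_on hqt
        (((hIIγ' q t hq0 hqt le_rfl).norm.const_mul G).sub intervalIntegrable_const)
        (hIILγ q t hq0 hqt le_rfl) (fun s _ => ?_)
      have h2 := hlb (γ s) (ε⁻¹ • γ s) (-γ' s)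
      rw [norm_neg] at h2
      nlinarith [sq_nonneg (‖γ' s‖ - G)]
    rw [intervalIntegral.integral_sub ((hIIγ' q t hq0 hqt le_rfl).norm.const_mul G)
      intervalIntegrable_const, intervalIntegral.integral_const_mul,
      intervalIntegral.integral_const, smul_eq_mul, show t - q = m by rw [hq]; ring] at h1
    linarith
  have hE3 : (∫ u in c..d, Fc u) ≤ (∫ s in c..d, ‖γ' s‖ ^ 2)/8 + m * K0 := by
    have h1 : (∫ u in c..d, Fc u) ≤ ∫ s in c..d, (‖γ' s‖ ^ 2/8 + K0) := by
      refine intervalIntegral.integral_mono_on hcd hFcII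
        (((hsqII c d hc0 hcd hdt').div_const 8).add intervalIntegrable_const) (fun s _ => ?_)
      have h2 := hub (γ s) (ε⁻¹ • γ s) (-((2:ℝ)⁻¹ • γ' s))
      rw [hFcnorm s] at h2
      simpa [hFc] using h2
    rw [intervalIntegral.integral_add ((hsqII c d hc0 hcd hdt').div_const 8)
      intervalIntegrable_const, intervalIntegral.integral_div,
      intervalIntegral.integral_const, smul_eq_mul, ← hm] at h1
    linarith
  have hE4 : g (γ q) - g (γ t) ≤ G * ∫ s in q..t, ‖γ' s‖ := by
    have h1 := hg (γ q) (γ t)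
    have h2 : γ t - γ q = ∫ s in q..t, γ' s := hγ q t hq0 hqt le_rfl
    have h3 : ‖γ q - γ t‖ ≤ ∫ s in q..t, ‖γ' s‖ := by
      rw [norm_sub_rev, h2]
      exact intervalIntegral.norm_integral_le_integral_norm hqt
    calc g (γ q) - g (γ t) ≤ |g (γ q) - g (γ t)| := le_abs_self _
      _ ≤ G * ‖γ q - γ t‖ := h1
      _ ≤ G * ∫ s in q..t, ‖γ' s‖ := mul_le_mul_of_nonneg_left h3 hG
  -- conclude
  nlinarith [hkey, hE1, hE2, hE3, hE4]
end Aux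

set_option maxHeartbeats 1000000 in
/-- Lemma 2.1: minimizing curves of the Cauchy optimal control functional have
velocity bounded a.e. by a constant `M0 = M0(n, K0, G)`, uniformly in `ε`. -/
theorem stmt_3 (n : ℕ) (hn : 1 ≤ n) (K0 G : ℝ) (hK0 : 0 < K0) (hG : 0 ≤ G) :
    ∃ M0 : ℝ, 0 < M0 ∧
      ∀ L : E n → E n → E n → ℝ,
        Continuous (fun q : E n × E n × E n => L q.1 q.2.1 q.2.2) →
        (∀ (x y v : E n) (k : Fin n → ℤ), L x (y + intVec n k) v = L x y v) →
        (∀ x y, ConvexOn ℝ univ (fun v => L x y v)) →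
        (∀ x y v, ‖v‖ ^ 2 / 2 - K0 ≤ L x y v ∧ L x y v ≤ ‖v‖ ^ 2 / 2 + K0) →
        ∀ g : E n → ℝ, (∀ x₁ x₂, |g x₁ - g x₂| ≤ G * ‖x₁ - x₂‖) →
        ∀ (x : E n) (t ε : ℝ), 0 < t → 0 < ε →
        ∀ γ γ' : ℝ → E n, IsAC 0 t γ γ' → γ 0 = x →
          IntervalIntegrable (fun s => L (γ s) (ε⁻¹ • γ s) (-γ' s)) volume 0 t →
          (∀ η η' : ℝ → E n, IsAC 0 t η η' → η 0 = x →
            IntervalIntegrable (fun s => L (η s) (ε⁻¹ • η s) (-η' s)) volume 0 t →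
            (∫ s in (0:ℝ)..t, L (γ s) (ε⁻¹ • γ s) (-γ' s)) + g (γ t) ≤
              (∫ s in (0:ℝ)..t, L (η s) (ε⁻¹ • η s) (-η' s)) + g (η t)) →
          ∀ᵐ s ∂(volume.restrict (Icc 0 t)), ‖γ' s‖ ≤ M0 := by
  have hM0sq : (0:ℝ) < 16 * K0 + 2 * G ^ 2 := by nlinarith [sq_nonneg G]
  refine ⟨Real.sqrt (16 * K0 + 2 * G ^ 2), Real.sqrt_pos.mpr hM0sq, ?_⟩
  intro L hLc hLper hLconv hLb g hg x t ε ht hε γ γ' hAC hγ0 hγint hmin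
  have key : ∀ a b : ℝ, 0 ≤ a → a ≤ b → 2 * b - a ≤ t →
      (∫ s in a..b, ‖γ' s‖ ^ 2) ≤ (16 * K0 + 2 * G ^ 2) * (b - a) :=
    fun a b h1 h2 h3 => key_bound hK0 hG hLc hLb hg ht hAC hγ0 hγint hmin h1 h2 h3
  -- measurable representative of γ'
  have hγ'meas : AEStronglyMeasurable γ' (volume.restrict (Icc 0 t)) :=
    hAC.1.aestronglyMeasurable
  set g' : ℝ → E n := hγ'meas.mk γ' with hg'
  have heq : γ' =ᵐ[volume.restrict (Icc 0 t)] g' := hγ'meas.ae_eq_mk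
  have heq' : ∀ᵐ y ∂(volume : Measure ℝ), y ∈ Icc 0 t → γ' y = g' y :=
    (ae_restrict_iff' measurableSet_Icc).mp heq
  -- integrability of ‖γ'‖² on [0,t]
  have hlb : ∀ y z v : E n, ‖v‖ ^ 2 / 2 - K0 ≤ L y z v := fun y z v => (hLb y z v).1
  have hsqI : IntegrableOn (fun s => ‖γ' s‖ ^ 2) (Icc 0 t) volume := by
    have hLγI : IntegrableOn (fun s => L (γ s) (ε⁻¹ • γ s) (-γ' s)) (Icc 0 t) volume :=
      (intervalIntegrable_iff_integrableOn_Icc_of_le ht.le).mp hγint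
    have hdom : IntegrableOn (fun s => 2 * L (γ s) (ε⁻¹ • γ s) (-γ' s) + 2 * K0)
        (Icc 0 t) volume := by
      refine (hLγI.const_mul 2).add ?_
      exact integrableOn_const measure_Icc_lt_top.ne
    refine Integrable.mono' hdom ?_ ?_
    · exact (continuous_pow 2).comp_aestronglyMeasurable hγ'meas.norm
    · refine Filter.Eventually.of_forall fun s => ?_
      have h1 := hlb (γ s) (ε⁻¹ • γ s) (-γ' s)
      rw [norm_neg] at h1
      have h2 : (0:ℝ) ≤ ‖γ' s‖ ^ 2 := by positivity
      rw [Real.norm_eq_abs, abs_of_nonneg h2]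
      linarith
  -- a globally defined integrable representative
  set f : ℝ → ℝ := (Icc (0:ℝ) t).indicator (fun s => ‖g' s‖ ^ 2) with hf
  have hfint : Integrable f volume := by
    rw [hf]
    refine IntegrableOn.integrable_indicator ?_ measurableSet_Icc
    exact hsqI.congr_fun_ae (heq.mono fun s hs => by simp only [hs])
  have hfloc : LocallyIntegrable f volume := hfint.locallyIntegrable
  have hLeb := IsUnifLocDoublingMeasure.ae_tendsto_average (μ := volume) (E := ℝ) hfloc 1
  -- a.e. pointwise bound on f in the interior
  have hbound : ∀ᵐ s ∂(volume : Measure ℝ), s ∈ Ioo 0 t → f s ≤ 16 * K0 + 2 * G ^ 2 := by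
    filter_upwards [hLeb, heq'] with s hs hseq hsIoo
    have htend : Filter.Tendsto (fun r => ⨍ y in Metric.closedBall s r, f y)
        (nhdsWithin 0 (Ioi 0)) (nhds (f s)) :=
      hs (fun _ => s) id Filter.tendsto_id
        (by filter_upwards [self_mem_nhdsWithin] with r hr
            simp [Metric.mem_closedBall, le_of_lt (mem_Ioi.mp hr)])
    refine le_of_tendsto htend ?_
    have hδ : 0 < min s ((t - s)/3) := by
      apply lt_min hsIoo.1
      have := hsIoo.2
      linarith
    have hmem : Ioo (0:ℝ) (min s ((t - s)/3)) ∈ nhdsWithin (0:ℝ) (Ioi 0) :=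
      Ioo_mem_nhdsGT_of_mem ⟨le_rfl, hδ⟩
    filter_upwards [hmem] with r hr
    have hr0 : 0 < r := hr.1
    have hrs : r < s := lt_of_lt_of_le hr.2 (min_le_left _ _)
    have hrt : s + 3 * r ≤ t := by
      have := lt_of_lt_of_le hr.2 (min_le_right _ _)
      linarith
    have hab : s - r ≤ s + r := by linarith
    have hIccsub : Icc (s - r) (s + r) ⊆ Icc 0 t :=
      Icc_subset_Icc (by linarith) (by linarith)
    have hIint : (∫ y in Metric.closedBall s r, f y)
        = ∫ y in (s - r)..(s + r), ‖γ' y‖ ^ 2 := by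
      rw [Real.closedBall_eq_Icc, integral_Icc_eq_integral_Ioc,
        ← intervalIntegral.integral_of_le hab]
      apply intervalIntegral.integral_congr_ae
      filter_upwards [heq'] with y hy hyI
      rw [uIoc_of_le hab] at hyI
      have hyIcc : y ∈ Icc (0:ℝ) t := hIccsub (Ioc_subset_Icc_self hyI)
      rw [hf, indicator_of_mem hyIcc, hy hyIcc]
    have hvol : (volume (Metric.closedBall s r)).toReal = 2 * r := by
      rw [Real.volume_closedBall]
      exact ENNReal.toReal_ofReal (by linarith)
    have havg : (⨍ y in Metric.closedBall s r, f y)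
        = (2 * r)⁻¹ * ∫ y in (s - r)..(s + r), ‖γ' y‖ ^ 2 := by
      rw [setAverage_eq, measureReal_def, hvol, smul_eq_mul, hIint]
    rw [havg]
    have hk := key (s - r) (s + r) (by linarith) hab (by linarith)
    rw [show (s + r) - (s - r) = 2 * r by ring] at hk
    calc (2 * r)⁻¹ * ∫ y in (s - r)..(s + r), ‖γ' y‖ ^ 2
        ≤ (2 * r)⁻¹ * ((16 * K0 + 2 * G ^ 2) * (2 * r)) :=
          mul_le_mul_of_nonneg_left hk (by positivity)
      _ = 16 * K0 + 2 * G ^ 2 := by field_simp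
  -- transfer to the restricted measure
  have hIoo : ∀ᵐ s ∂(volume.restrict (Icc (0:ℝ) t)), s ∈ Ioo 0 t := by
    have hnull : (volume : Measure ℝ) ({0, t} : Set ℝ) = 0 :=
      ((Set.finite_singleton t).insert 0).measure_zero _
    have hnmem : ∀ᵐ s ∂(volume : Measure ℝ), s ∉ ({0, t} : Set ℝ) :=
      measure_eq_zero_iff_ae_notMem.mp hnull
    filter_upwards [ae_restrict_mem measurableSet_Icc, ae_restrict_of_ae hnmem] with s h1 h2
    simp only [Set.mem_insert_iff, Set.mem_singleton_iff, not_or] at h2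
    exact ⟨lt_of_le_of_ne h1.1 (Ne.symm h2.1), lt_of_le_of_ne h1.2 h2.2⟩
  filter_upwards [ae_restrict_of_ae hbound, hIoo, heq] with s hb hsIoo hsg
  have h1 : f s ≤ 16 * K0 + 2 * G ^ 2 := hb hsIoo
  rw [hf, indicator_of_mem (Ioo_subset_Icc_self hsIoo)] at h1
  rw [← hsg] at h1
  calc ‖γ' s‖ = Real.sqrt (‖γ' s‖ ^ 2) := (Real.sqrt_sq (norm_nonneg _)).symm
    _ ≤ Real.sqrt (16 * K0 + 2 * G ^ 2) := Real.sqrt_le_sqrt h1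
end
end

section
/- Let n ≥ 1 and K0 > 0. Let L : ℝⁿ × ℝⁿ × ℝⁿ → ℝ be continuous, ℤⁿ-periodic in its second argument, convex in its third argument, and satisfy |v|²/2 − K0 ≤ L(x,y,v) ≤ |v|²/2 + K0 for all x, y, v ∈ ℝⁿ. Then there exists a constant M0 > 0 depending only on n and K0 with the following property: for every x ∈ ℝⁿ, λ > 0, ε > 0, if γ : [0,∞) → ℝⁿ is locally absolutely continuous with γ(0) = x and ∫₀^∞ e^{−λs} L(γ(s), γ(s)/ε, −γ̇(s)) ds ≤ ∫₀^∞ e^{−λs} L(η(s), η(s)/ε, −η̇(s)) ds for every locally absolutely continuous η : [0,∞) → ℝⁿ with η(0) = x (i.e. γ is a minimizing curve for the discounted control functional), then |γ̇(s)| ≤ M0 for almost every s ∈ [0,∞). -/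
open MeasureTheory Real Set

noncomputable section

section Aux

variable {X : Type*} [NormedAddCommGroup X] [NormedSpace ℝ X]

lemma exp_int_Ioi {lam : ℝ} (hl : 0 < lam) (a : ℝ) :
    ∫ s in Ioi a, Real.exp (-lam * s) = Real.exp (-lam * a) / lam := by
  have hd : ∀ x ∈ Ici a, HasDerivAt (fun s => -Real.exp (-lam * s) / lam)
      (Real.exp (-lam * x)) x := by
    intro x _
    have h1 : HasDerivAt (fun s : ℝ => -lam * s) (-lam) x := by
      simpa using (hasDerivAt_id x).const_mul (-lam)
    have := (h1.exp).neg.div_const lam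
    refine this.congr_deriv ?_
    field_simp
  have hint : IntegrableOn (fun s => Real.exp (-lam * s)) (Ioi a) volume :=
    exp_neg_integrableOn_Ioi a hl
  have hlim : Filter.Tendsto (fun s => -Real.exp (-lam * s) / lam) Filter.atTop (nhds 0) := by
    have h2 : Filter.Tendsto (fun s : ℝ => -lam * s) Filter.atTop Filter.atBot :=
      Filter.tendsto_id.const_mul_atTop_of_neg (by linarith)
    have h3 := (Real.tendsto_exp_atBot).comp h2
    have := (h3.neg).div_const lam
    simpa using this
  have := integral_Ioi_of_hasDerivAt_of_tendsto' hd hint hlim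
  rw [this]; ring

lemma glue2 [CompleteSpace X] {f f' : ℝ → X} {a p : ℝ}
    (h1 : ∀ c d, a ≤ c → c ≤ d → d ≤ p → f d - f c = ∫ s in c..d, f' s)
    (h2 : ∀ c d, p ≤ c → c ≤ d → f d - f c = ∫ s in c..d, f' s)
    (hint : ∀ c d, a ≤ c → c ≤ d → IntervalIntegrable f' volume c d)
    (hap : a ≤ p) :
    ∀ c d, a ≤ c → c ≤ d → f d - f c = ∫ s in c..d, f' s := by
  intro c d hac hcd
  rcases le_total d p with h | h
  · exact h1 c d hac hcd h
  rcases le_total p c with h' | h'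
  · exact h2 c d h' hcd
  have e1 := h1 c p hac h' le_rfl
  have e2 := h2 p d le_rfl h
  have := intervalIntegral.integral_add_adjacent_intervals
    (hint c p hac h') (hint p d hap h)
  calc f d - f c = (f p - f c) + (f d - f p) := by abel
    _ = (∫ s in c..p, f' s) + ∫ s in p..d, f' s := by rw [e1, e2]
    _ = ∫ s in c..d, f' s := this

lemma shift_integrableOn {g : ℝ → ℝ} {b : ℝ} (c : ℝ)
    (h : IntegrableOn g (Ioi (b + c)) volume) :
    IntegrableOn (fun s => g (s + c)) (Ioi b) volume := by
  have A : MeasurableEmbedding fun x : ℝ => x + c :=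
    (Homeomorph.addRight c).isClosedEmbedding.measurableEmbedding
  have h' : IntegrableOn g (Ioi (b + c)) (Measure.map (· + c) volume) := by
    rwa [map_add_right_eq_self]
  have h2 := (MeasurableEmbedding.integrableOn_map_iff A).mp h'
  have hs : (fun x : ℝ => x + c) ⁻¹' Ioi (b + c) = Ioi b := by
    ext x; simp [add_lt_add_iff_right]
  rwa [hs] at h2

lemma shift_integral {g : ℝ → ℝ} (b c : ℝ) :
    ∫ s in Ioi b, g (s + c) = ∫ s in Ioi (b + c), g s := by
  have A : MeasurableEmbedding fun x : ℝ => x + c :=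
    (Homeomorph.addRight c).isClosedEmbedding.measurableEmbedding
  have h1 : (∫ s in Ioi (b+c), g s ∂(Measure.map (· + c) volume))
      = ∫ x in (fun x : ℝ => x + c) ⁻¹' (Ioi (b+c)), g (x + c) := A.setIntegral_map g _
  rw [map_add_right_eq_self] at h1
  have hs : (fun x : ℝ => x + c) ⁻¹' Ioi (b + c) = Ioi b := by
    ext x; simp [add_lt_add_iff_right]
  rw [hs] at h1
  exact h1.symm

lemma leb_pts {g : ℝ → X} (hg : LocallyIntegrable g volume) :
    ∀ᵐ t ∂(volume : Measure ℝ), ∀ e : ℝ, 0 < e → ∀ h1 : ℝ, 0 < h1 → ∃ h : ℝ, 0 < h ∧ h ≤ h1 ∧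
      (∫ s in Ioc t (t+h), ‖g s - g t‖) ≤ e * h := by
  filter_upwards [IsUnifLocDoublingMeasure.ae_tendsto_average_norm_sub
    (volume : Measure ℝ) hg 1] with t ht
  intro e he h1 hh1
  have hT : Filter.Tendsto (fun h : ℝ => ⨍ y in Metric.closedBall t h, ‖g y - g t‖)
      (nhdsWithin 0 (Ioi 0)) (nhds 0) := by
    refine ht (fun _ => t) id Filter.tendsto_id ?_
    filter_upwards [self_mem_nhdsWithin] with h hh
    exact Metric.mem_closedBall_self (by simp at hh ⊢; linarith)
  have hev : ∀ᶠ h in nhdsWithin 0 (Ioi 0),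
      (⨍ y in Metric.closedBall t h, ‖g y - g t‖) < e/2 := by
    have := hT.eventually (Filter.Tendsto.eventually_lt_const (by linarith : (0:ℝ) < e/2)
      Filter.tendsto_id)
    simpa using this
  have hev2 : ∀ᶠ h in nhdsWithin (0:ℝ) (Ioi 0), h ∈ Ioc 0 h1 :=
    Ioc_mem_nhdsGT_of_mem ⟨le_rfl, hh1⟩
  rcases (hev.and hev2).exists with ⟨h, hlt, h0, hle⟩
  refine ⟨h, h0, hle, ?_⟩
  have hint : IntegrableOn (fun y => ‖g y - g t‖) (Metric.closedBall t h) volume := by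
    exact ((hg.integrableOn_isCompact (isCompact_closedBall t h)).sub
      (integrableOn_const measure_closedBall_lt_top.ne)).norm
  have hmono : (∫ s in Ioc t (t+h), ‖g s - g t‖) ≤
      ∫ y in Metric.closedBall t h, ‖g y - g t‖ := by
    refine setIntegral_mono_set hint ?_ ?_
    · exact Filter.Eventually.of_forall (fun y => norm_nonneg _)
    · refine HasSubset.Subset.eventuallyLE (fun y hy => ?_)
      rw [Real.closedBall_eq_Icc]
      exact ⟨by linarith [hy.1], hy.2⟩
  have hcb : (∫ y in Metric.closedBall t h, ‖g y - g t‖) ≤ e * h := by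
    have havg := setAverage_eq (fun y => ‖g y - g t‖) (Metric.closedBall t h) (μ := volume)
    have hvol : volume.real (Metric.closedBall t h) = 2 * h := by
      rw [measureReal_def, Real.volume_closedBall]
      rw [ENNReal.toReal_ofReal (by linarith)]
    rw [hvol] at havg
    have h2 : (∫ y in Metric.closedBall t h, ‖g y - g t‖)
        = (2*h) * ⨍ y in Metric.closedBall t h, ‖g y - g t‖ := by
      rw [havg, smul_eq_mul]
      field_simp
    rw [h2]
    calc (2*h) * ⨍ y in Metric.closedBall t h, ‖g y - g t‖ ≤ (2*h) * (e/2) := by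
          apply mul_le_mul_of_nonneg_left (le_of_lt hlt) (by linarith)
      _ = e * h := by ring
  linarith

lemma split3 {f : ℝ → ℝ} {a b c : ℝ} (hab : a ≤ b) (hbc : b ≤ c)
    (hf : IntegrableOn f (Ioi a) volume) :
    ∫ s in Ioi a, f s = (∫ s in Ioc a b, f s) + ((∫ s in Ioc b c, f s) + ∫ s in Ioi c, f s) := by
  have h1 : Ioi a = Ioc a b ∪ Ioi b := (Ioc_union_Ioi_eq_Ioi hab).symm
  have h2 : Ioi b = Ioc b c ∪ Ioi c := (Ioc_union_Ioi_eq_Ioi hbc).symm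
  have hIc : Ioi c ⊆ Ioi a := Ioi_subset_Ioi (hab.trans hbc)
  rw [h1, setIntegral_union (Ioc_disjoint_Ioi le_rfl) measurableSet_Ioi
    (hf.mono_set (by rw [h1]; exact subset_union_left))
    (hf.mono_set (by rw [h1]; exact subset_union_right))]
  congr 1
  rw [h2, setIntegral_union (Ioc_disjoint_Ioi le_rfl) measurableSet_Ioi
    (hf.mono_set (by rw [h1, h2]; exact (subset_union_left).trans subset_union_right))
    (hf.mono_set hIc)]

end Aux

set_option maxHeartbeats 1600000000 in
/-- Lemma 3.1: minimizing curves of the discounted optimal control functional have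
velocity bounded a.e. by a constant `M0 = M0(n, K0)`, uniformly in `ε` and `λ`. -/
theorem stmt_5 (n : ℕ) (hn : 1 ≤ n) (K0 : ℝ) (hK0 : 0 < K0) :
    ∃ M0 : ℝ, 0 < M0 ∧
      ∀ L : E n → E n → E n → ℝ,
        Continuous (fun q : E n × E n × E n => L q.1 q.2.1 q.2.2) →
        (∀ (x y v : E n) (k : Fin n → ℤ), L x (y + intVec n k) v = L x y v) →
        (∀ x y, ConvexOn ℝ univ (fun v => L x y v)) →
        (∀ x y v, ‖v‖ ^ 2 / 2 - K0 ≤ L x y v ∧ L x y v ≤ ‖v‖ ^ 2 / 2 + K0) →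
        ∀ (x : E n) (lam ε : ℝ), 0 < lam → 0 < ε →
        ∀ γ γ' : ℝ → E n, (∀ T : ℝ, 0 < T → IsAC 0 T γ γ') → γ 0 = x →
          IntegrableOn (fun s => Real.exp (-lam * s) * L (γ s) (ε⁻¹ • γ s) (-γ' s))
            (Ioi 0) volume →
          (∀ η η' : ℝ → E n, (∀ T : ℝ, 0 < T → IsAC 0 T η η') → η 0 = x →
            IntegrableOn (fun s => Real.exp (-lam * s) * L (η s) (ε⁻¹ • η s) (-η' s))
              (Ioi 0) volume →
            (∫ s in Ioi (0:ℝ), Real.exp (-lam * s) * L (γ s) (ε⁻¹ • γ s) (-γ' s)) ≤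
              ∫ s in Ioi (0:ℝ), Real.exp (-lam * s) * L (η s) (ε⁻¹ • η s) (-η' s)) →
          ∀ᵐ s ∂(volume.restrict (Ioi (0:ℝ))), ‖γ' s‖ ≤ M0 := by
  refine ⟨5 + 20*K0, by linarith, ?_⟩
  intro L hLc hLper hLconv hLbd x lam ε hlam hε γ γ' hAC hγ0 hFint hmin
  set F : ℝ → ℝ := fun s => Real.exp (-lam * s) * L (γ s) (ε⁻¹ • γ s) (-γ' s) with hFdef
  -- measurability of γ' on (0,∞)
  have hγ'm : AEStronglyMeasurable γ' (volume.restrict (Ioi (0:ℝ))) := by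
    have hsub : Ioi (0:ℝ) ⊆ ⋃ m : ℕ, Icc (0:ℝ) (m+1) := by
      intro s hs
      rcases exists_nat_ge s with ⟨m, hm⟩
      exact mem_iUnion.2 ⟨m, ⟨le_of_lt hs, by linarith⟩⟩
    have hm : AEStronglyMeasurable γ' (volume.restrict (⋃ m : ℕ, Icc (0:ℝ) (m+1))) :=
      aestronglyMeasurable_iUnion_iff.2
        (fun m => ((hAC (m+1) (by positivity)).1).aestronglyMeasurable)
    exact hm.mono_measure (Measure.restrict_mono hsub le_rfl)
  -- weighted square integrability
  have hw2 : IntegrableOn (fun s => Real.exp (-lam*s) * ‖γ' s‖^2) (Ioi (0:ℝ)) volume := by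
    have hg : Integrable (fun s => 2 * F s + 2*K0 * Real.exp (-lam*s))
        (volume.restrict (Ioi (0:ℝ))) :=
      (hFint.const_mul 2).add ((exp_neg_integrableOn_Ioi 0 hlam).const_mul (2*K0))
    refine Integrable.mono' hg ?_ ?_
    · exact ((Real.continuous_exp.comp (continuous_const.mul continuous_id)).aestronglyMeasurable).mul
        ((hγ'm.norm).pow 2)
    · filter_upwards [ae_restrict_mem measurableSet_Ioi] with s _
      have hL := (hLbd (γ s) (ε⁻¹ • γ s) (-γ' s)).1
      rw [norm_neg] at hL
      have he : (0:ℝ) < Real.exp (-lam*s) := Real.exp_pos _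
      rw [Real.norm_eq_abs, abs_of_nonneg (by positivity)]
      have hmul := mul_le_mul_of_nonneg_left hL he.le
      simp only [hFdef]
      nlinarith [hmul]
  -- local integrability of the indicator extension
  have hloc : LocallyIntegrable (Set.indicator (Ioi (0:ℝ)) γ') volume := by
    rw [locallyIntegrable_iff]
    intro K hK
    rcases hK.isBounded.subset_closedBall 0 with ⟨r, hr⟩
    have h1 : IntegrableOn γ' (Ioi 0 ∩ Metric.closedBall 0 r) volume := by
      apply ((hAC (|r|+1) (by positivity)).1).mono_set
      intro s hs
      rcases hs with ⟨hs1, hs2⟩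
      rw [Real.closedBall_eq_Icc] at hs2
      exact ⟨le_of_lt hs1, by
        have : s ≤ r := by simpa using hs2.2
        have : r ≤ |r| := le_abs_self r
        linarith⟩
    have h2 : IntegrableOn (Set.indicator (Ioi (0:ℝ)) γ') (Metric.closedBall 0 r) volume := by
      rw [IntegrableOn, integrable_indicator_iff measurableSet_Ioi, IntegrableOn,
        Measure.restrict_restrict measurableSet_Ioi]
      exact h1
    exact h2.mono_set hr
  filter_upwards [ae_restrict_of_ae (leb_pts hloc), ae_restrict_mem measurableSet_Ioi]
    with t hLeb ht
  by_contra hR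
  push_neg at hR
  set R : ℝ := ‖γ' t‖ with hRdef
  have hRbig : 5 + 20*K0 < R := hR
  have htpos : (0:ℝ) < t := ht
  -- pick a good small h
  obtain ⟨h, hh0, hhle, hI⟩ := hLeb 1 one_pos (min 1 (Real.log 2 / lam))
    (lt_min one_pos (by positivity))
  have hvel : (∫ s in Ioc t (t+h), ‖γ' s - γ' t‖) ≤ h := by
    have heq : EqOn (fun s => ‖Set.indicator (Ioi (0:ℝ)) γ' s - Set.indicator (Ioi (0:ℝ)) γ' t‖)
        (fun s => ‖γ' s - γ' t‖) (Ioc t (t+h)) := by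
      intro s hs
      simp only
      rw [Set.indicator_of_mem (by exact lt_trans htpos hs.1 : s ∈ Ioi (0:ℝ)),
        Set.indicator_of_mem (ht : t ∈ Ioi (0:ℝ))]
    rw [setIntegral_congr_fun measurableSet_Ioc heq] at hI
    linarith [hI]
  have hexp2 : (1:ℝ)/2 ≤ Real.exp (-lam * h) := by
    have h1 : lam * h ≤ Real.log 2 := by
      have := hhle.trans (min_le_right _ _)
      calc lam * h ≤ lam * (Real.log 2 / lam) := by
            apply mul_le_mul_of_nonneg_left this (le_of_lt hlam)
        _ = Real.log 2 := by field_simp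
    have h2 : Real.exp (-Real.log 2) ≤ Real.exp (-lam * h) := by
      apply Real.exp_le_exp.2; linarith
    rw [Real.exp_neg, Real.exp_log two_pos] at h2
    linarith
  -- the displacement
  have hγd : γ (t+h) - γ t = ∫ s in Ioc t (t+h), γ' s := by
    have := (hAC (t+h) (by linarith)).2 t (t+h) (le_of_lt htpos) (by linarith) le_rfl
    rw [this, intervalIntegral.integral_of_le (by linarith)]
  set δ : ℝ := ‖γ (t+h) - γ t‖ with hδdef
  have hγ'int : IntegrableOn γ' (Ioc t (t+h)) volume :=
    (hAC (t+h) (by linarith)).1.mono_set (fun s hs => ⟨le_of_lt (lt_trans htpos hs.1), hs.2⟩)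
  have hδclose : |δ - h * R| ≤ h := by
    have hconst : (∫ _ in Ioc t (t+h), (γ' t)) = h • γ' t := by
      rw [setIntegral_const]
      congr 1
      rw [measureReal_def, Real.volume_Ioc]
      rw [show t + h - t = h by ring, ENNReal.toReal_ofReal hh0.le]
    have hcint : IntegrableOn (fun _ : ℝ => γ' t) (Ioc t (t+h)) volume :=
      integrableOn_const measure_Ioc_lt_top.ne
    have hsub : (∫ s in Ioc t (t+h), γ' s) - h • γ' t
        = ∫ s in Ioc t (t+h), (γ' s - γ' t) := by
      rw [integral_sub hγ'int hcint, hconst]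
    have hnorm : ‖(∫ s in Ioc t (t+h), γ' s) - h • γ' t‖ ≤ h := by
      rw [hsub]
      exact le_trans (norm_integral_le_integral_norm _) hvel
    have hRnorm : h * R = ‖h • γ' t‖ := by
      rw [norm_smul, Real.norm_eq_abs, abs_of_pos hh0, hRdef]
    rw [hδdef, hγd, hRnorm]
    exact le_trans (abs_norm_sub_norm_le _ _) hnorm
  have hδlow : (R - 1) * h ≤ δ := by
    rcases abs_le.1 hδclose with ⟨h1, _⟩; nlinarith
  have hδhigh : δ ≤ (R + 1) * h := by
    rcases abs_le.1 hδclose with ⟨_, h2⟩; nlinarith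
  have hδh : h < δ := by nlinarith
  have hδ0 : (0:ℝ) < δ := lt_trans hh0 hδh
  set u : E n := δ⁻¹ • (γ (t+h) - γ t) with hudef
  have hu : ‖u‖ = 1 := by
    rw [hudef, norm_smul, norm_inv, Real.norm_eq_abs, abs_of_pos hδ0, ← hδdef,
      inv_mul_cancel₀ (ne_of_gt hδ0)]
  have hline : γ t + δ • u = γ (t+h) := by
    rw [hudef, smul_smul, mul_inv_cancel₀ (ne_of_gt hδ0), one_smul]
    abel
  -- the comparison curve
  set η : ℝ → E n := fun s => if s ≤ t then γ s else if s ≤ t + δ then γ t + (s - t) • u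
    else γ (s + (h - δ)) with hηdef
  set η' : ℝ → E n := fun s => if s ≤ t then γ' s else if s ≤ t + δ then u
    else γ' (s + (h - δ)) with hη'def
  have hη'int : ∀ T : ℝ, 0 < T → IntegrableOn η' (Icc 0 T) volume := by
    intro T hT
    set T' := max T (t+δ) with hT'def
    have hT't : t + δ ≤ T' := le_max_right _ _
    have hpart : Icc (0:ℝ) T ⊆ Icc 0 t ∪ (Ioc t (t+δ) ∪ Ioc (t+δ) T') := by
      intro s hs
      rcases le_or_gt s t with h1 | h1
      · exact Or.inl ⟨hs.1, h1⟩
      rcases le_or_gt s (t+δ) with h2 | h2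
      · exact Or.inr (Or.inl ⟨h1, h2⟩)
      · exact Or.inr (Or.inr ⟨h2, le_trans hs.2 (le_max_left _ _)⟩)
    have i1 : IntegrableOn η' (Icc 0 t) volume := by
      refine ((hAC t htpos).1).congr_fun (fun s hs => ?_) measurableSet_Icc
      simp only [hη'def, if_pos hs.2]
    have i2 : IntegrableOn η' (Ioc t (t+δ)) volume := by
      refine (integrableOn_const measure_Ioc_lt_top.ne :
        IntegrableOn (fun _ : ℝ => u) _ _).congr_fun (fun s hs => ?_) measurableSet_Ioc
      simp only [hη'def, if_neg (not_le.2 hs.1), if_pos hs.2]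
    have i3 : IntegrableOn η' (Ioc (t+δ) T') volume := by
      have hii : IntervalIntegrable γ' volume (t+h) (T' + (h-δ)) := by
        apply IntegrableOn.intervalIntegrable
        apply ((hAC (T'+h) (by nlinarith)).1).mono_set
        rw [uIcc_of_le (by linarith)]
        intro s hs
        exact ⟨by linarith [hs.1], by linarith [hs.2]⟩
      have hii2 := hii.comp_add_right (h-δ)
      rw [show t + h - (h-δ) = t + δ by ring, show T' + (h-δ) - (h-δ) = T' by ring,
        intervalIntegrable_iff_integrableOn_Ioc_of_le (by linarith)] at hii2
      refine hii2.congr_fun (fun s hs => ?_) measurableSet_Ioc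
      have hs1 : ¬ s ≤ t := by push_neg; linarith [hs.1]
      have hs2 : ¬ s ≤ t + δ := not_le.2 hs.1
      simp only [hη'def, if_neg hs1, if_neg hs2]
    exact ((i1.union (i2.union i3)).mono_set hpart)
  have hint' : ∀ c d : ℝ, 0 ≤ c → c ≤ d → IntervalIntegrable η' volume c d := by
    intro c d hc hcd
    apply IntegrableOn.intervalIntegrable
    apply (hη'int (max d 1) (by positivity)).mono_set
    rw [uIcc_of_le hcd]
    intro s hs
    exact ⟨le_trans hc hs.1, le_trans hs.2 (le_max_left _ _)⟩
  have P1 : ∀ c d : ℝ, 0 ≤ c → c ≤ d → d ≤ t → η d - η c = ∫ s in c..d, η' s := by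
    intro c d hc hcd hdt
    have hγcd := (hAC t htpos).2 c d hc hcd hdt
    have hηc : η c = γ c := by simp only [hηdef, if_pos (hcd.trans hdt)]
    have hηd : η d = γ d := by simp only [hηdef, if_pos hdt]
    rw [hηc, hηd, hγcd]
    apply intervalIntegral.integral_congr
    intro s hs
    rw [uIcc_of_le hcd] at hs
    simp only [hη'def, if_pos (hs.2.trans hdt)]
  have P2 : ∀ c d : ℝ, t ≤ c → c ≤ d → d ≤ t + δ → η d - η c = ∫ s in c..d, η' s := by
    intro c d hc hcd hdδ
    have hval : ∀ e : ℝ, t ≤ e → e ≤ t + δ → η e = γ t + (e - t) • u := by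
      intro e he1 he2
      by_cases het : e ≤ t
      · have : e = t := le_antisymm het he1
        simp only [hηdef, this, if_pos le_rfl, sub_self, zero_smul, add_zero]
      · simp only [hηdef, if_neg het, if_pos he2]
    have hrhs : (∫ s in c..d, η' s) = (d - c) • u := by
      rw [intervalIntegral.integral_of_le hcd]
      have : (∫ s in Ioc c d, η' s) = ∫ _ in Ioc c d, u := by
        apply setIntegral_congr_fun measurableSet_Ioc
        intro s hs
        have h1 : ¬ s ≤ t := by push_neg; exact lt_of_le_of_lt hc hs.1
        have h2 : s ≤ t + δ := hs.2.trans hdδ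
        simp only [hη'def, if_neg h1, if_pos h2]
      rw [this, setIntegral_const, measureReal_def, Real.volume_Ioc, ENNReal.toReal_ofReal (by linarith)]
    rw [hrhs, hval c hc (hcd.trans hdδ), hval d (hc.trans hcd) hdδ]
    rw [add_sub_add_left_eq_sub, ← sub_smul]
    congr 1
    ring
  have P3 : ∀ c d : ℝ, t + δ ≤ c → c ≤ d → η d - η c = ∫ s in c..d, η' s := by
    intro c d hc hcd
    have hval : ∀ e : ℝ, t + δ ≤ e → η e = γ (e + (h - δ)) := by
      intro e he
      by_cases h1 : e ≤ t
      · exfalso; linarith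
      by_cases h2 : e ≤ t + δ
      · have he' : e = t + δ := le_antisymm h2 he
        subst he'
        simp only [hηdef, if_neg h1, if_pos le_rfl, show t + δ - t = δ by ring, hline]
        congr 1
        ring
      · simp only [hηdef, if_neg h1, if_neg h2]
    rw [hval c hc, hval d (hc.trans hcd)]
    have hγ2 := (hAC (d + h) (by nlinarith)).2 (c + (h - δ)) (d + (h - δ))
      (by nlinarith) (by linarith) (by linarith)
    rw [hγ2, ← intervalIntegral.integral_comp_add_right (fun s => γ' s) (h - δ)]
    rw [intervalIntegral.integral_of_le hcd, intervalIntegral.integral_of_le hcd]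
    apply setIntegral_congr_fun measurableSet_Ioc
    intro s hs
    have h1 : ¬ s ≤ t := by push_neg; linarith [hs.1]
    have h2 : ¬ s ≤ t + δ := not_le.2 (lt_of_le_of_lt hc hs.1)
    simp only [hη'def, if_neg h1, if_neg h2]
  have hFTC : ∀ c d : ℝ, 0 ≤ c → c ≤ d → η d - η c = ∫ s in c..d, η' s := by
    refine glue2 P1 (glue2 P2 P3 (fun c d hc hcd => hint' c d (le_trans htpos.le hc) hcd)
      (by linarith)) hint' htpos.le
  have hηAC : ∀ T : ℝ, 0 < T → IsAC 0 T η η' :=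
    fun T hT => ⟨hη'int T hT, fun c d hc hcd _ => hFTC c d hc hcd⟩
  set G : ℝ → ℝ := fun s => Real.exp (-lam * s) * L (η s) (ε⁻¹ • η s) (-η' s) with hGdef
  have hG1 : EqOn G F (Ioc 0 t) := by
    intro s hs
    have h1 : s ≤ t := hs.2
    simp only [hGdef, hηdef, hη'def, hFdef, if_pos h1]
  have hG3 : EqOn G (fun s => Real.exp (-lam*(δ-h)) * F (s + (h - δ))) (Ioi (t+δ)) := by
    intro s hs
    have h1 : ¬ s ≤ t := by simp only [mem_Ioi] at hs; push_neg; linarith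
    have h2 : ¬ s ≤ t + δ := by simp only [mem_Ioi] at hs; push_neg; linarith
    simp only [hGdef, hηdef, hη'def, hFdef, if_neg h1, if_neg h2]
    rw [← mul_assoc, ← Real.exp_add]
    ring_nf
  have hGcont : Continuous (fun s : ℝ => Real.exp (-lam * s) *
      L (γ t + (s - t) • u) (ε⁻¹ • (γ t + (s - t) • u)) (-u)) := by
    have hc1 : Continuous (fun s : ℝ => γ t + (s - t) • u) :=
      continuous_const.add ((continuous_id.sub continuous_const).smul continuous_const)
    have hc2 : Continuous (fun s : ℝ =>
        ((γ t + (s - t) • u, (ε⁻¹ • (γ t + (s - t) • u), -u)) : E n × E n × E n)) :=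
      hc1.prodMk ((hc1.const_smul ε⁻¹).prodMk continuous_const)
    exact (Real.continuous_exp.comp (continuous_const.mul continuous_id)).mul (hLc.comp hc2)
  have hG2 : EqOn G (fun s : ℝ => Real.exp (-lam * s) *
      L (γ t + (s - t) • u) (ε⁻¹ • (γ t + (s - t) • u)) (-u)) (Ioc t (t+δ)) := by
    intro s hs
    have h1 : ¬ s ≤ t := not_le.2 hs.1
    have h2 : s ≤ t + δ := hs.2
    simp only [hGdef, hηdef, hη'def, if_neg h1, if_pos h2]
  have hGiocδ : IntegrableOn G (Ioc t (t+δ)) volume :=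
    (hGcont.integrableOn_Ioc).congr_fun hG2.symm measurableSet_Ioc
  have hGint : IntegrableOn G (Ioi (0:ℝ)) volume := by
    have hsplit : Ioi (0:ℝ) = Ioc 0 t ∪ (Ioc t (t+δ) ∪ Ioi (t+δ)) := by
      rw [Ioc_union_Ioi_eq_Ioi (by linarith : t ≤ t+δ), Ioc_union_Ioi_eq_Ioi htpos.le]
    rw [hsplit]
    refine IntegrableOn.union ?_ (IntegrableOn.union hGiocδ ?_)
    · exact (hFint.mono_set Ioc_subset_Ioi_self).congr_fun hG1.symm measurableSet_Ioc
    · have hsh : IntegrableOn (fun s => F (s + (h-δ))) (Ioi (t+δ)) volume := by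
        apply shift_integrableOn (h-δ)
        rw [show t + δ + (h - δ) = t + h by ring]
        exact hFint.mono_set (Ioi_subset_Ioi (by linarith))
      have hsh2 : IntegrableOn (fun s => Real.exp (-lam*(δ-h)) * F (s + (h-δ)))
          (Ioi (t+δ)) volume := hsh.const_mul _
      exact hsh2.congr_fun hG3.symm measurableSet_Ioi
  have hη0 : η 0 = x := by
    simp only [hηdef, if_pos (le_of_lt htpos)]
    exact hγ0
  have hmin' := hmin η η' hηAC hη0 hGint
  -- splitting and cancellation
  set Tail : ℝ := ∫ s in Ioi (t+h), F s with hTdef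
  set A : ℝ := ∫ s in Ioc t (t+h), F s with hAdef
  set B : ℝ := ∫ s in Ioc t (t+δ), G s with hBdef
  have hkey : A + Tail ≤ B + Real.exp (-lam*(δ-h)) * Tail := by
    have hmin'' : (∫ s in Ioi (0:ℝ), F s) ≤ ∫ s in Ioi (0:ℝ), G s := hmin'
    have hsγ := split3 htpos.le (by linarith : t ≤ t+h) hFint
    have hsη := split3 htpos.le (by linarith : t ≤ t+δ) hGint
    have hcancel1 : (∫ s in Ioc 0 t, G s) = ∫ s in Ioc 0 t, F s :=
      setIntegral_congr_fun measurableSet_Ioc hG1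
    have hshift : (∫ s in Ioi (t+δ), G s) = Real.exp (-lam*(δ-h)) * Tail := by
      rw [setIntegral_congr_fun measurableSet_Ioi hG3, integral_const_mul]
      rw [hTdef]
      congr 1
      rw [shift_integral (t+δ) (h-δ), show t + δ + (h - δ) = t + h by ring]
    rw [hsγ, hsη, hcancel1, hshift] at hmin''
    rw [hAdef, hBdef, hTdef]
    rw [hTdef] at hmin''
    linarith [hmin'']
  -- lower bound for Tail
  have hTail : -(K0 * (Real.exp (-lam*(t+h)) / lam)) ≤ Tail := by
    have hlow : ∀ s ∈ Ioi (t+h), -K0 * Real.exp (-lam*s) ≤ F s := by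
      intro s _
      have hL := (hLbd (γ s) (ε⁻¹ • γ s) (-γ' s)).1
      have hL2 : -K0 ≤ L (γ s) (ε⁻¹ • γ s) (-γ' s) := by nlinarith [sq_nonneg ‖-γ' s‖]
      have hmm := mul_le_mul_of_nonneg_left hL2 (Real.exp_pos (-lam*s)).le
      calc -K0 * Real.exp (-lam*s) = Real.exp (-lam*s) * (-K0) := by ring
        _ ≤ Real.exp (-lam*s) * L (γ s) (ε⁻¹ • γ s) (-γ' s) := hmm
        _ = F s := rfl
    have hm := setIntegral_mono_on
      ((exp_neg_integrableOn_Ioi (t+h) hlam).const_mul (-K0))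
      (hFint.mono_set (Ioi_subset_Ioi (by linarith))) measurableSet_Ioi hlow
    rw [integral_const_mul, exp_int_Ioi hlam (t+h)] at hm
    rw [hTdef]
    linarith [hm]
  -- lower bound for A
  set Q : ℝ := ∫ s in Ioc t (t+h), ‖γ' s‖^2 with hQdef
  have hsq : IntegrableOn (fun s => ‖γ' s‖^2) (Ioc t (t+h)) volume := by
    have hmono : IntegrableOn (fun s => Real.exp (-lam*s) * ‖γ' s‖^2) (Ioc t (t+h)) volume :=
      hw2.mono_set (fun s hs => lt_trans htpos hs.1)
    refine Integrable.mono' (hmono.const_mul (Real.exp (lam*(t+h)))) ?_ ?_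
    · exact ((hγ'm.mono_measure (Measure.restrict_mono
        (fun s hs => lt_trans htpos hs.1) le_rfl)).norm.pow 2)
    · filter_upwards [ae_restrict_mem measurableSet_Ioc] with s hs
      rw [Real.norm_eq_abs, abs_of_nonneg (by positivity)]
      have h1 : (1:ℝ) ≤ Real.exp (lam*(t+h)) * Real.exp (-lam*s) := by
        rw [← Real.exp_add]
        apply Real.one_le_exp
        nlinarith [hs.2]
      nlinarith [mul_le_mul_of_nonneg_right h1 (sq_nonneg ‖γ' s‖)]
  have hA : Real.exp (-lam*(t+h)) * (Q/2) - K0 * Real.exp (-lam*t) * h ≤ A := by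
    have hpt : ∀ s ∈ Ioc t (t+h),
        (Real.exp (-lam*(t+h))/2) * ‖γ' s‖^2 - K0 * Real.exp (-lam*t) ≤ F s := by
      intro s hs
      have hL := (hLbd (γ s) (ε⁻¹ • γ s) (-γ' s)).1
      rw [norm_neg] at hL
      have e1 : Real.exp (-lam*(t+h)) ≤ Real.exp (-lam*s) :=
        Real.exp_le_exp.2 (by nlinarith [hs.2])
      have e2 : Real.exp (-lam*s) ≤ Real.exp (-lam*t) :=
        Real.exp_le_exp.2 (by nlinarith [hs.1.le])
      have e3 := mul_le_mul_of_nonneg_left hL (Real.exp_pos (-lam*s)).le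
      have e4 := mul_le_mul_of_nonneg_right e1 (sq_nonneg ‖γ' s‖)
      have e5 := mul_le_mul_of_nonneg_right e2 hK0.le
      show _ ≤ Real.exp (-lam * s) * L (γ s) (ε⁻¹ • γ s) (-γ' s)
      nlinarith [e3, e4, e5]
    have hcst : IntegrableOn (fun _ : ℝ => K0 * Real.exp (-lam*t)) (Ioc t (t+h)) volume :=
      integrableOn_const measure_Ioc_lt_top.ne
    have hlhsint : IntegrableOn (fun s =>
        (Real.exp (-lam*(t+h))/2) * ‖γ' s‖^2 - K0 * Real.exp (-lam*t)) (Ioc t (t+h)) volume :=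
      (hsq.const_mul _).sub hcst
    have hm := setIntegral_mono_on hlhsint
      (hFint.mono_set (fun s hs => lt_trans htpos hs.1)) measurableSet_Ioc hpt
    rw [integral_sub (hsq.const_mul (Real.exp (-lam*(t+h))/2)) hcst,
      integral_const_mul, setIntegral_const,
      smul_eq_mul, measureReal_def, Real.volume_Ioc, show t + h - t = h by ring,
      ENNReal.toReal_ofReal hh0.le] at hm
    rw [hAdef, hQdef]
    linarith [hm]
  have hQlow : δ^2 / h ≤ Q := by
    have hnint : IntegrableOn (fun s => ‖γ' s‖) (Ioc t (t+h)) volume := hγ'int.norm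
    have hnlow : δ ≤ ∫ s in Ioc t (t+h), ‖γ' s‖ := by
      rw [hδdef, hγd]
      exact norm_integral_le_integral_norm _
    have hpt : ∀ s ∈ Ioc t (t+h), 2*(δ/h)*‖γ' s‖ - (δ/h)^2 ≤ ‖γ' s‖^2 := by
      intro s _
      nlinarith [sq_nonneg (‖γ' s‖ - δ/h)]
    have hcst : IntegrableOn (fun _ : ℝ => ((δ/h)^2 : ℝ)) (Ioc t (t+h)) volume :=
      integrableOn_const measure_Ioc_lt_top.ne
    have hm := setIntegral_mono_on ((hnint.const_mul (2*(δ/h))).sub hcst) hsq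
      measurableSet_Ioc hpt
    have hcomp : (∫ s in Ioc t (t+h), (2*(δ/h)*‖γ' s‖ - (δ/h)^2))
        = 2*(δ/h)*(∫ s in Ioc t (t+h), ‖γ' s‖) - h*(δ/h)^2 := by
      rw [integral_sub (hnint.const_mul (2*(δ/h))) hcst, integral_const_mul, setIntegral_const,
        smul_eq_mul, measureReal_def, Real.volume_Ioc, show t + h - t = h by ring,
        ENNReal.toReal_ofReal hh0.le]
    have hmul : 2*(δ/h)*δ ≤ 2*(δ/h)*(∫ s in Ioc t (t+h), ‖γ' s‖) :=
      mul_le_mul_of_nonneg_left hnlow (by positivity)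
    have hrw : δ^2/h = 2*(δ/h)*δ - h*(δ/h)^2 := by
      field_simp
      ring
    rw [hQdef, hrw]
    calc 2*(δ/h)*δ - h*(δ/h)^2
        ≤ 2*(δ/h)*(∫ s in Ioc t (t+h), ‖γ' s‖) - h*(δ/h)^2 := by linarith [hmul]
      _ = ∫ s in Ioc t (t+h), (2*(δ/h)*‖γ' s‖ - (δ/h)^2) := hcomp.symm
      _ ≤ ∫ s in Ioc t (t+h), ‖γ' s‖^2 := hm
  -- upper bound for B
  have hB : B ≤ (1/2 + K0) * Real.exp (-lam*t) * δ := by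
    have hup : ∀ s ∈ Ioc t (t+δ), G s ≤ (1/2 + K0) * Real.exp (-lam*t) := by
      intro s hs
      rw [hG2 hs]
      have hL := (hLbd (γ t + (s - t) • u) (ε⁻¹ • (γ t + (s - t) • u)) (-u)).2
      rw [norm_neg, hu] at hL
      have he : Real.exp (-lam*s) ≤ Real.exp (-lam*t) :=
        Real.exp_le_exp.2 (by nlinarith [hs.1.le])
      have h0 : (0:ℝ) ≤ Real.exp (-lam*s) := (Real.exp_pos _).le
      have e1 := mul_le_mul_of_nonneg_left hL h0
      have e2 := mul_le_mul_of_nonneg_right he (by linarith : (0:ℝ) ≤ 1^2/2 + K0)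
      nlinarith [e1, e2]
    have hcst : IntegrableOn (fun _ : ℝ => (1/2 + K0) * Real.exp (-lam*t)) (Ioc t (t+δ)) volume :=
      integrableOn_const measure_Ioc_lt_top.ne
    have hm := setIntegral_mono_on hGiocδ hcst measurableSet_Ioc hup
    rw [setIntegral_const, smul_eq_mul, measureReal_def, Real.volume_Ioc, show t + δ - t = δ by ring,
      ENNReal.toReal_ofReal hδ0.le] at hm
    rw [hBdef]
    nlinarith [hm]
  -- tail error
  have hC : Real.exp (-lam*(δ-h)) * Tail - Tail ≤ K0 * δ * Real.exp (-lam*t) := by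
    have hc0 : Real.exp (-lam*(δ-h)) ≤ 1 :=
      Real.exp_le_one_iff.2 (by nlinarith [mul_nonneg hlam.le (by linarith : (0:ℝ) ≤ δ - h)])
    have hmul := mul_le_mul_of_nonpos_left hTail
      (by linarith : Real.exp (-lam*(δ-h)) - 1 ≤ 0)
    have h1mc : 1 - Real.exp (-lam*(δ-h)) ≤ lam*(δ-h) := by
      have := Real.add_one_le_exp (-lam*(δ-h))
      linarith
    have hw : (0:ℝ) ≤ K0 * (Real.exp (-lam*(t+h)) / lam) := by positivity
    have h3 : (1 - Real.exp (-lam*(δ-h))) * (K0 * (Real.exp (-lam*(t+h)) / lam))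
        ≤ (lam*(δ-h)) * (K0 * (Real.exp (-lam*(t+h)) / lam)) :=
      mul_le_mul_of_nonneg_right h1mc hw
    have h4 : (lam*(δ-h)) * (K0 * (Real.exp (-lam*(t+h)) / lam))
        = K0 * (δ-h) * Real.exp (-lam*(t+h)) := by
      field_simp
    have he : Real.exp (-lam*(t+h)) ≤ Real.exp (-lam*t) :=
      Real.exp_le_exp.2 (by nlinarith [mul_pos hlam hh0])
    have h5 : K0 * (δ-h) * Real.exp (-lam*(t+h)) ≤ K0 * δ * Real.exp (-lam*t) := by
      have e1 : K0 * (δ-h) ≤ K0 * δ :=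
        mul_le_mul_of_nonneg_left (by linarith) hK0.le
      have e2 : (0:ℝ) ≤ K0*(δ-h) := mul_nonneg hK0.le (by linarith)
      calc K0*(δ-h)*Real.exp (-lam*(t+h)) ≤ K0*(δ-h)*Real.exp (-lam*t) :=
            mul_le_mul_of_nonneg_left he e2
        _ ≤ K0*δ*Real.exp (-lam*t) :=
            mul_le_mul_of_nonneg_right e1 (Real.exp_pos _).le
    calc Real.exp (-lam*(δ-h)) * Tail - Tail
        = (Real.exp (-lam*(δ-h)) - 1) * Tail := by ring
      _ ≤ (Real.exp (-lam*(δ-h)) - 1) * (-(K0 * (Real.exp (-lam*(t+h)) / lam))) := hmul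
      _ = (1 - Real.exp (-lam*(δ-h))) * (K0 * (Real.exp (-lam*(t+h)) / lam)) := by ring
      _ ≤ (lam*(δ-h)) * (K0 * (Real.exp (-lam*(t+h)) / lam)) := h3
      _ = K0 * (δ-h) * Real.exp (-lam*(t+h)) := h4
      _ ≤ K0 * δ * Real.exp (-lam*t) := h5
  -- conclusion
  have hfin : Real.exp (-lam*(t+h)) * (Q/2) - K0 * Real.exp (-lam*t) * h ≤
      (1/2 + K0) * Real.exp (-lam*t) * δ + K0 * δ * Real.exp (-lam*t) := by
    linarith
  have hsplitexp : Real.exp (-lam*(t+h)) = Real.exp (-lam*t) * Real.exp (-lam*h) := by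
    rw [← Real.exp_add]; ring_nf
  set P : ℝ := Real.exp (-lam*t) with hPdef
  have hP : 0 < P := Real.exp_pos _
  have hfin2 : Real.exp (-lam*h) * (Q/2) ≤ (1/2 + K0) * δ + K0 * δ + K0 * h := by
    rw [hsplitexp] at hfin
    have h0 : P * (Real.exp (-lam*h) * (Q/2)) ≤ P * ((1/2 + K0) * δ + K0 * δ + K0 * h) := by
      nlinarith [hfin]
    exact le_of_mul_le_mul_left h0 hP
  have hQh : δ^2/(4*h) ≤ (1/2 + K0) * δ + K0 * δ + K0 * h := by
    have h1 : δ^2/h ≤ Q := hQlow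
    have h2 : (1/2) * (δ^2/h / 2) ≤ Real.exp (-lam*h) * (Q/2) := by
      apply mul_le_mul hexp2 (by linarith) (by positivity) (le_of_lt (Real.exp_pos _))
    calc δ^2/(4*h) = (1/2) * (δ^2/h/2) := by ring
      _ ≤ Real.exp (-lam*h) * (Q/2) := h2
      _ ≤ _ := hfin2
  -- final numeric contradiction
  have hδsq : δ^2 ≤ (2 + 8*K0) * h * δ + 4*K0*h^2 := by
    have h4 : (0:ℝ) < 4*h := by linarith
    rw [div_le_iff₀ h4] at hQh
    nlinarith [hQh]
  have ha : 4 + 20*K0 ≤ R - 1 := by linarith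
  have h5 : δ * (δ - (2+8*K0)*h) ≤ 4*K0*h^2 := by nlinarith [hδsq]
  have h6 : ((R-1)*h) * ((R-1)*h - (2+8*K0)*h) ≤ δ * (δ - (2+8*K0)*h) := by
    have hy : (0:ℝ) ≤ (R-1)*h - (2+8*K0)*h := by nlinarith
    apply mul_le_mul hδlow (by linarith) hy (le_of_lt hδ0)
  have h7 : (4+20*K0) * h * ((2+12*K0)*h) ≤ ((R-1)*h) * ((R-1)*h - (2+8*K0)*h) := by
    have e1 : (4+20*K0) * h ≤ (R-1)*h := mul_le_mul_of_nonneg_right ha hh0.le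
    have e2 : (2+12*K0)*h ≤ (R-1)*h - (2+8*K0)*h := by
      have e3 : (2+12*K0) ≤ (R-1) - (2+8*K0) := by linarith
      calc (2+12*K0)*h ≤ ((R-1) - (2+8*K0))*h := mul_le_mul_of_nonneg_right e3 hh0.le
        _ = (R-1)*h - (2+8*K0)*h := by ring
    exact mul_le_mul e1 e2 (mul_nonneg (by linarith) hh0.le) (mul_nonneg (by linarith) hh0.le)
  have h8 : (4+20*K0) * h * ((2+12*K0)*h) ≤ 4*K0*h^2 := le_trans h7 (le_trans h6 h5)
  have h9 : (8 + 88*K0 + 240*K0^2) * (h*h) ≤ 4*K0*(h*h) := by nlinarith [h8]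
  have h10 : (0:ℝ) < (8 + 84*K0 + 240*K0^2) * (h*h) :=
    mul_pos (by positivity) (mul_pos hh0 hh0)
  linarith [h9, h10]
end
end

section
/- Let V : ℝ → ℝ be continuous, 1-periodic, with V ≥ 0 on ℝ and V(y) ≥ 1 for every y ∈ [−1/3, 1/3]. Then for every ε ∈ (0,1), every t > 0, and every absolutely continuous curve η : [0, t/ε] → ℝ with η(0) = 0, one has ε ∫₀^{t/ε} ( V(η(s)) + |η̇(s)|²/2 ) ds ≥ (√2/3) · min{t, ε}. -/
open MeasureTheory Real Set

noncomputable section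

/-- `η : [a,b] → ℝ` is absolutely continuous with (a.e.) derivative `η'`. -/
def IsAC1 (a b : ℝ) (η η' : ℝ → ℝ) : Prop :=
  IntegrableOn η' (Icc a b) volume ∧
    ∀ c d : ℝ, a ≤ c → c ≤ d → d ≤ b → η d - η c = ∫ s in c..d, η' s

lemma amgm_aux (a : ℝ) : Real.sqrt 2 * |a| ≤ 1 + |a| ^ 2 / 2 := by
  nlinarith [sq_nonneg (|a| - Real.sqrt 2), Real.sq_sqrt (by norm_num : (0:ℝ) ≤ 2),
    abs_nonneg a, Real.sqrt_nonneg 2]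

lemma sqrt_two_le_two : Real.sqrt 2 ≤ 2 := by
  nlinarith [Real.sq_sqrt (by norm_num : (0:ℝ) ≤ 2), Real.sqrt_nonneg 2]

/-- Proposition 4.1 (variational content): for a potential `V ≥ 0` with `V ≥ 1` on
`[−1/3, 1/3]`, every admissible curve starting at `0` has rescaled cost at least
`(√2/3)·min{t, ε}`.  The cost integral is taken in `[0,∞]` since the integrand is
nonnegative. -/
theorem stmt_6 (V : ℝ → ℝ) (hVcont : Continuous V) (hVper : Function.Periodic V 1)
    (hVnonneg : ∀ y, 0 ≤ V y) (hVone : ∀ y ∈ Icc (-(1:ℝ)/3) (1/3), 1 ≤ V y) :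
    ∀ ε : ℝ, 0 < ε → ε < 1 → ∀ t : ℝ, 0 < t →
      ∀ η η' : ℝ → ℝ, IsAC1 0 (t / ε) η η' → η 0 = 0 →
        ENNReal.ofReal (Real.sqrt 2 / 3 * min t ε) ≤
          ENNReal.ofReal ε *
            ∫⁻ s in Icc (0:ℝ) (t / ε), ENNReal.ofReal (V (η s) + |η' s| ^ 2 / 2) := by
  intro ε hε hε1 t ht η η' hAC hη0
  obtain ⟨hint, hFTC⟩ := hAC
  set T := t / ε with hT
  have hT0 : 0 ≤ T := le_of_lt (div_pos ht hε)
  have hηeq : ∀ d ∈ Icc (0:ℝ) T, η d = ∫ s in (0:ℝ)..d, η' s := by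
    intro d hd
    have := hFTC 0 d le_rfl hd.1 hd.2
    linarith [this, hη0.symm ▸ this]
  have hcont : ContinuousOn η (Icc 0 T) := by
    have h1 : ContinuousOn (fun d => ∫ s in (0:ℝ)..d, η' s) (Icc 0 T) := by
      have h2 := intervalIntegral.continuousOn_primitive_interval
        (a := 0) (b := T) (f := η') (μ := volume) (by simpa [uIcc_of_le hT0] using hint)
      simpa [uIcc_of_le hT0] using h2
    exact h1.congr hηeq
  by_cases hS : ∃ s ∈ Icc (0:ℝ) T, 1/3 ≤ |η s|
  · -- crossing case
    set S : Set ℝ := {s ∈ Icc (0:ℝ) T | 1/3 ≤ |η s|} with hSdef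
    have hSclosed : IsClosed S := by
      have : S = Icc (0:ℝ) T ∩ η ⁻¹' {y : ℝ | 1/3 ≤ |y|} := rfl
      rw [this]
      exact hcont.preimage_isClosed_of_isClosed isClosed_Icc
        (isClosed_le continuous_const continuous_abs)
    have hScomp : IsCompact S :=
      isCompact_Icc.of_isClosed_subset hSclosed (fun s hs => hs.1)
    obtain ⟨s₀, hs₀S, hs₀min⟩ := hScomp.exists_isLeast (by
      obtain ⟨s, hs1, hs2⟩ := hS; exact ⟨s, hs1, hs2⟩)
    obtain ⟨⟨hs₀0, hs₀T⟩, hs₀abs⟩ := hs₀S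
    have hsub : Icc (0:ℝ) s₀ ⊆ Icc 0 T := Icc_subset_Icc le_rfl hs₀T
    have hint' : IntegrableOn η' (Icc (0:ℝ) s₀) volume := hint.mono_set hsub
    have hbound : ∀ s ∈ Ico (0:ℝ) s₀, Real.sqrt 2 * |η' s| ≤ V (η s) + |η' s| ^ 2 / 2 := by
      intro s hs
      have hnotS : s ∉ S := fun h => absurd (hs₀min h) (not_le.mpr hs.2)
      have hlt : |η s| < 1/3 := by
        by_contra h
        exact hnotS ⟨⟨hs.1, le_trans (le_of_lt hs.2) hs₀T⟩, not_lt.mp h⟩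
      have h1 : 1 ≤ V (η s) := by
        apply hVone
        have := abs_lt.mp hlt
        constructor <;> [linarith [this.1]; linarith [this.2]]
      calc Real.sqrt 2 * |η' s| ≤ 1 + |η' s| ^ 2 / 2 := amgm_aux _
        _ ≤ V (η s) + |η' s| ^ 2 / 2 := by linarith
    -- real-valued estimate on [0, s₀]
    have hηs₀ : η s₀ = ∫ s in Icc (0:ℝ) s₀, η' s := by
      rw [hηeq s₀ ⟨hs₀0, hs₀T⟩, intervalIntegral.integral_of_le hs₀0,
        MeasureTheory.integral_Icc_eq_integral_Ioc]
    have hintabs : IntegrableOn (fun s => Real.sqrt 2 * |η' s|) (Icc (0:ℝ) s₀) volume :=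
      hint'.abs.const_mul _
    have hreal : Real.sqrt 2 * (1/3) ≤ ∫ s in Icc (0:ℝ) s₀, Real.sqrt 2 * |η' s| := by
      rw [MeasureTheory.integral_const_mul]
      have h1 : |η s₀| ≤ ∫ s in Icc (0:ℝ) s₀, |η' s| := by
        rw [hηs₀]
        calc |∫ s in Icc (0:ℝ) s₀, η' s| = ‖∫ s in Icc (0:ℝ) s₀, η' s‖ := (Real.norm_eq_abs _).symm
          _ ≤ ∫ s in Icc (0:ℝ) s₀, ‖η' s‖ := MeasureTheory.norm_integral_le_integral_norm _
          _ = ∫ s in Icc (0:ℝ) s₀, |η' s| := by simp [Real.norm_eq_abs]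
      have h2 : (1:ℝ)/3 ≤ ∫ s in Icc (0:ℝ) s₀, |η' s| := le_trans hs₀abs h1
      exact mul_le_mul_of_nonneg_left h2 (Real.sqrt_nonneg 2)
    -- lintegral chain
    have hchain : ENNReal.ofReal (Real.sqrt 2 * (1/3)) ≤
        ∫⁻ s in Icc (0:ℝ) T, ENNReal.ofReal (V (η s) + |η' s| ^ 2 / 2) := by
      calc ENNReal.ofReal (Real.sqrt 2 * (1/3))
          ≤ ENNReal.ofReal (∫ s in Icc (0:ℝ) s₀, Real.sqrt 2 * |η' s|) :=
            ENNReal.ofReal_le_ofReal hreal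
        _ = ∫⁻ s in Icc (0:ℝ) s₀, ENNReal.ofReal (Real.sqrt 2 * |η' s|) :=
            MeasureTheory.ofReal_integral_eq_lintegral_ofReal hintabs
              (Filter.Eventually.of_forall fun s =>
                mul_nonneg (Real.sqrt_nonneg 2) (abs_nonneg _))
        _ ≤ ∫⁻ s in Icc (0:ℝ) s₀, ENNReal.ofReal (V (η s) + |η' s| ^ 2 / 2) := by
            apply lintegral_mono_ae
            have hns : ∀ᵐ s ∂(volume.restrict (Icc (0:ℝ) s₀)), s ∉ ({s₀} : Set ℝ) :=
              ae_restrict_of_ae (compl_mem_ae_iff.mpr (measure_singleton s₀))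
            filter_upwards [ae_restrict_mem measurableSet_Icc, hns] with s hs hne
            have hs' : s ∈ Ico (0:ℝ) s₀ :=
              ⟨hs.1, lt_of_le_of_ne hs.2 (by simpa using hne)⟩
            exact ENNReal.ofReal_le_ofReal (hbound s hs')
        _ ≤ ∫⁻ s in Icc (0:ℝ) T, ENNReal.ofReal (V (η s) + |η' s| ^ 2 / 2) :=
            lintegral_mono_set hsub
    calc ENNReal.ofReal (Real.sqrt 2 / 3 * min t ε)
        ≤ ENNReal.ofReal (ε * (Real.sqrt 2 * (1/3))) := by
          apply ENNReal.ofReal_le_ofReal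
          have h1 : min t ε ≤ ε := min_le_right _ _
          have h2 : 0 ≤ Real.sqrt 2 := Real.sqrt_nonneg 2
          nlinarith
      _ = ENNReal.ofReal ε * ENNReal.ofReal (Real.sqrt 2 * (1/3)) :=
          ENNReal.ofReal_mul (le_of_lt hε)
      _ ≤ _ := mul_le_mul_right hchain _
  · -- the curve stays inside [-1/3, 1/3]
    push_neg at hS
    have hchain : ENNReal.ofReal T ≤
        ∫⁻ s in Icc (0:ℝ) T, ENNReal.ofReal (V (η s) + |η' s| ^ 2 / 2) := by
      calc ENNReal.ofReal T = ∫⁻ s in Icc (0:ℝ) T, (1:ENNReal) := by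
            rw [MeasureTheory.setLIntegral_one, Real.volume_Icc]
            simp
        _ ≤ _ := by
            apply lintegral_mono_ae
            filter_upwards [ae_restrict_mem measurableSet_Icc] with s hs
            have hlt := hS s hs
            have h1 : 1 ≤ V (η s) := by
              apply hVone
              have := abs_lt.mp hlt
              constructor <;> [linarith [this.1]; linarith [this.2]]
            rw [show (1:ENNReal) = ENNReal.ofReal 1 by simp]
            apply ENNReal.ofReal_le_ofReal
            have : 0 ≤ |η' s| ^ 2 / 2 := by positivity
            linarith
    calc ENNReal.ofReal (Real.sqrt 2 / 3 * min t ε)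
        ≤ ENNReal.ofReal (ε * T) := by
          apply ENNReal.ofReal_le_ofReal
          have hεT : ε * T = t := by rw [hT]; field_simp
          rw [hεT]
          have h1 : min t ε ≤ t := min_le_left _ _
          have h2 : Real.sqrt 2 / 3 ≤ 1 := by linarith [sqrt_two_le_two]
          have h3 : 0 ≤ min t ε := le_min (le_of_lt ht) (le_of_lt hε)
          nlinarith
      _ = ENNReal.ofReal ε * ENNReal.ofReal T := ENNReal.ofReal_mul (le_of_lt hε)
      _ ≤ _ := mul_le_mul_right hchain _
end
end

section
/- Let V : ℝ → ℝ satisfy V ≥ 0 on ℝ and V(y) ≥ 1 for every y ∈ [−1/3, 1/3]. Let s₁ > 0 and let η : [0, s₁] → ℝ be absolutely continuous with η(0) = 0, η(s₁) = 1/3, and η(s) ∈ (−1/3, 1/3) for all s ∈ [0, s₁). Then ∫₀^{s₁} ( V(η(s)) + |η̇(s)|²/2 ) ds ≥ s₁ + 1/(18 s₁) ≥ √2/3. -/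
open MeasureTheory Real Set

noncomputable section

/-- Exit-cost estimate from the proof of Proposition 4.1: a curve starting at `0`
that first reaches `1/3` at time `s₁` pays running cost at least `s₁ + 1/(18 s₁)`,
which is at least `√2/3` by AM–GM.  The cost integral is taken in `[0,∞]` since the
integrand is nonnegative. -/
theorem stmt_7 (V : ℝ → ℝ) (hVnonneg : ∀ y, 0 ≤ V y)
    (hVone : ∀ y ∈ Icc (-(1:ℝ)/3) (1/3), 1 ≤ V y)
    (s₁ : ℝ) (hs₁ : 0 < s₁) (η η' : ℝ → ℝ) (hAC : IsAC1 0 s₁ η η')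
    (h0 : η 0 = 0) (h1 : η s₁ = 1/3)
    (hmid : ∀ s ∈ Ico (0:ℝ) s₁, η s ∈ Ioo (-(1:ℝ)/3) (1/3)) :
    ENNReal.ofReal (s₁ + 1 / (18 * s₁)) ≤
        (∫⁻ s in Icc (0:ℝ) s₁, ENNReal.ofReal (V (η s) + |η' s| ^ 2 / 2)) ∧
      Real.sqrt 2 / 3 ≤ s₁ + 1 / (18 * s₁) := by
  constructor
  · -- main estimate
    set μ := volume.restrict (Icc (0:ℝ) s₁) with hμ
    set g : ℝ → ENNReal := fun s => ENNReal.ofReal |η' s| with hg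
    have hint : IntegrableOn η' (Icc 0 s₁) volume := hAC.1
    have hgm : AEMeasurable g μ :=
      (ENNReal.measurable_ofReal.comp measurable_abs).comp_aemeasurable
        hint.aestronglyMeasurable.aemeasurable
    have habs_int : IntegrableOn (fun s => |η' s|) (Icc 0 s₁) volume := hint.abs
    have hlg : ∫⁻ s, g s ∂μ = ENNReal.ofReal (∫ s in Icc (0:ℝ) s₁, |η' s|) := by
      rw [← ofReal_integral_eq_lintegral_ofReal habs_int
        (Filter.Eventually.of_forall fun s => abs_nonneg _)]
    have hderiv : (1:ℝ)/3 = ∫ s in (0:ℝ)..s₁, η' s := by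
      have := hAC.2 0 s₁ le_rfl hs₁.le le_rfl
      rw [h0, h1] at this; simpa using this
    have hintabs : (1:ℝ)/3 ≤ ∫ s in Icc (0:ℝ) s₁, |η' s| := by
      have h2 : ∫ s in (0:ℝ)..s₁, η' s = ∫ s in Icc (0:ℝ) s₁, η' s := by
        rw [intervalIntegral.integral_of_le hs₁.le,
          MeasureTheory.integral_Icc_eq_integral_Ioc]
      calc (1:ℝ)/3 = ∫ s in Icc (0:ℝ) s₁, η' s := by rw [hderiv, h2]
        _ ≤ ∫ s in Icc (0:ℝ) s₁, |η' s| :=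
          integral_mono hint habs_int fun s => le_abs_self _
    have hμuniv : μ Set.univ = ENNReal.ofReal s₁ := by
      rw [hμ, Measure.restrict_apply_univ, Real.volume_Icc]; norm_num
    -- Cauchy-Schwarz
    have h22 : (2:ℝ).HolderConjugate 2 := Real.HolderConjugate.two_two
    have hCS := ENNReal.lintegral_mul_le_Lp_mul_Lq μ h22 hgm
      (aemeasurable_const (b := (1:ENNReal)))
    simp only [Pi.mul_apply, mul_one, ENNReal.one_rpow, lintegral_const, hμuniv,
      one_mul] at hCS
    -- so ofReal(1/3) ≤ (∫⁻ g^2)^(1/2) * (ofReal s₁)^(1/2)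
    have h13 : ENNReal.ofReal (1/3) ≤
        (∫⁻ s, g s ^ (2:ℝ) ∂μ) ^ ((1:ℝ)/2) * (ENNReal.ofReal s₁) ^ ((1:ℝ)/2) := by
      refine le_trans ?_ hCS
      rw [hlg]
      exact ENNReal.ofReal_le_ofReal hintabs
    -- square both sides
    have hsq : ENNReal.ofReal (1/9) ≤ (∫⁻ s, g s ^ 2 ∂μ) * ENNReal.ofReal s₁ := by
      have h2 := ENNReal.rpow_le_rpow h13 (by norm_num : (0:ℝ) ≤ 2)
      rw [ENNReal.mul_rpow_of_nonneg _ _ (by norm_num : (0:ℝ) ≤ 2),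
        ← ENNReal.rpow_mul, ← ENNReal.rpow_mul] at h2
      norm_num [ENNReal.rpow_one] at h2
      refine le_trans (le_of_eq ?_) h2
      rw [sq, ← ENNReal.ofReal_mul (by norm_num : (0:ℝ) ≤ 1/3)]
      norm_num
    have hglower : ENNReal.ofReal (1 / (9 * s₁)) ≤ ∫⁻ s, g s ^ 2 ∂μ := by
      rw [← ENNReal.mul_le_mul_iff_left (c := ENNReal.ofReal s₁)
        (by simp [hs₁, ENNReal.ofReal_pos.2 hs₁, ne_of_gt]) ENNReal.ofReal_ne_top]
      calc ENNReal.ofReal (1 / (9 * s₁)) * ENNReal.ofReal s₁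
          = ENNReal.ofReal (1 / (9 * s₁) * s₁) := (ENNReal.ofReal_mul (by positivity)).symm
        _ = ENNReal.ofReal (1/9) := by
            rw [show 1/(9*s₁)*s₁ = 1/9 from by field_simp]
        _ ≤ _ := hsq
    -- pointwise lower bound
    have hmem : ∀ s ∈ Icc (0:ℝ) s₁, η s ∈ Icc (-(1:ℝ)/3) (1/3) := by
      intro s hs
      rcases eq_or_lt_of_le hs.2 with h | h
      · rw [h, h1]; constructor <;> norm_num
      · exact Ioo_subset_Icc_self (hmid s ⟨hs.1, h⟩)
    have hpt : ∀ᵐ s ∂μ, (1:ENNReal) + g s ^ 2 * 2⁻¹ ≤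
        ENNReal.ofReal (V (η s) + |η' s| ^ 2 / 2) := by
      filter_upwards [ae_restrict_mem measurableSet_Icc] with s hs
      have hV : 1 ≤ V (η s) := hVone _ (hmem s hs)
      have : g s ^ 2 * 2⁻¹ = ENNReal.ofReal (|η' s| ^ 2 / 2) := by
        rw [hg, ← ENNReal.ofReal_pow (abs_nonneg _), div_eq_mul_inv,
          ENNReal.ofReal_mul (by positivity)]
        congr 1
        rw [ENNReal.ofReal_inv_of_pos (by norm_num : (0:ℝ) < 2), ENNReal.ofReal_ofNat]
      rw [this, ← ENNReal.ofReal_one, ← ENNReal.ofReal_add (by norm_num) (by positivity)]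
      exact ENNReal.ofReal_le_ofReal (by linarith [sq_nonneg (|η' s|)])
    calc ENNReal.ofReal (s₁ + 1 / (18 * s₁))
        = ENNReal.ofReal s₁ + ENNReal.ofReal (1 / (18 * s₁)) :=
          ENNReal.ofReal_add hs₁.le (by positivity)
      _ ≤ ENNReal.ofReal s₁ + ENNReal.ofReal (1 / (9 * s₁)) * 2⁻¹ := by
          gcongr ?_ + ?_
          · exact le_rfl
          · rw [show ((2:ENNReal))⁻¹ = ENNReal.ofReal 2⁻¹ by
              rw [eq_comm, ENNReal.ofReal_inv_of_pos (by norm_num : (0:ℝ) < 2),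
                ENNReal.ofReal_ofNat],
              ← ENNReal.ofReal_mul (by positivity)]
            apply ENNReal.ofReal_le_ofReal
            rw [div_mul_eq_mul_div, one_mul]
            rw [div_le_div_iff₀ (by positivity) (by positivity)]
            ring_nf
            nlinarith [hs₁]
      _ ≤ ENNReal.ofReal s₁ + (∫⁻ s, g s ^ 2 ∂μ) * 2⁻¹ := by
          gcongr
      _ = ∫⁻ s, ((1:ENNReal) + g s ^ 2 * 2⁻¹) ∂μ := by
          rw [lintegral_add_left measurable_const, lintegral_const, hμuniv, one_mul,
            lintegral_mul_const'' _ (hgm.pow_const _)]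
      _ ≤ ∫⁻ s, ENNReal.ofReal (V (η s) + |η' s| ^ 2 / 2) ∂μ := lintegral_mono_ae hpt
  · -- AM-GM
    have hr : Real.sqrt 2 ^ 2 = 2 := Real.sq_sqrt (by norm_num)
    have hrpos : 0 < Real.sqrt 2 := Real.sqrt_pos.2 (by norm_num)
    rw [div_le_iff₀ (by norm_num : (0:ℝ) < 3)] at *
    have key : Real.sqrt 2 * (6 * s₁) ≤ (s₁ + 1 / (18 * s₁)) * (18 * s₁) := by
      have h1 : (s₁ + 1 / (18 * s₁)) * (18 * s₁) = 18 * s₁ ^ 2 + 1 := by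
        field_simp
      rw [h1]
      nlinarith [sq_nonneg (3 * Real.sqrt 2 * s₁ - 1)]
    calc Real.sqrt 2 = Real.sqrt 2 * (6 * s₁) / (6 * s₁) := by
          field_simp
      _ ≤ (s₁ + 1 / (18 * s₁)) * (18 * s₁) / (6 * s₁) := by
          apply div_le_div_of_nonneg_right key (by positivity) |>.trans_eq rfl
      _ = (s₁ + 1 / (18 * s₁)) * 3 := by
          field_simp; ring
end
end

section
/- Let n ≥ 1 and M0, K0 > 0. Let L : ℝⁿ × ℝⁿ × ℝⁿ → ℝ be continuous, ℤⁿ-periodic in its second argument, convex in its third argument, and satisfy |v|²/2 − K0 ≤ L(x,y,v) ≤ |v|²/2 + K0 for all x, y, v ∈ ℝⁿ. For c, x, y ∈ ℝⁿ and t > 0 define m^c(t,x,y) := inf{ ∫₀ᵗ L(c, γ(s), γ̇(s)) ds : γ : [0,t] → ℝⁿ absolutely continuous, γ(0) = x, γ(t) = y }. Then there exists a constant C > 0 depending only on n, M0, K0 such that for every c ∈ ℝⁿ, every t > 0, and every y ∈ ℝⁿ with |y| ≤ M0 t, one has m^c(2t, 0, 2y) ≤ 2 m^c(t, 0, y) +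 C. -/
open MeasureTheory Real Set
noncomputable section
def mC {n : ℕ} (L : E n → E n → E n → ℝ) (c : E n) (t : ℝ) (x y : E n) : ℝ :=
  sInf { r | ∃ γ γ' : ℝ → E n, IsAC 0 t γ γ' ∧ γ 0 = x ∧ γ t = y ∧
    IntervalIntegrable (fun s => L c (γ s) (γ' s)) volume 0 t ∧
    r = ∫ s in (0:ℝ)..t, L c (γ s) (γ' s) }

namespace S13

lemma ioo_intIcc {X : Type*} [NormedAddCommGroup X] {f : ℝ → X} {a b : ℝ} (h : a ≤ b) :
    IntegrableOn f (Icc a b) ↔ IntervalIntegrable f volume a b := by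
  rw [integrableOn_Icc_iff_integrableOn_Ioc,
    intervalIntegrable_iff_integrableOn_Ioc_of_le h]

lemma ae_ne (b : ℝ) : ∀ᵐ x : ℝ, x ≠ b := by
  refine MeasureTheory.ae_iff.mpr ?_
  simp

variable {n : ℕ}

lemma isAC_mono {a b c d : ℝ} {γ γ' : ℝ → E n} (h : IsAC a b γ γ')
    (hac : a ≤ c) (hdb : d ≤ b) : IsAC c d γ γ' := by
  refine ⟨h.1.mono_set (Icc_subset_Icc hac hdb), fun u v hu huv hv => h.2 u v (hac.trans hu) huv (hv.trans hdb)⟩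

lemma isAC_line (a b : ℝ) (x v : E n) (s₀ : ℝ) :
    IsAC a b (fun s => x + (s - s₀) • v) (fun _ => v) := by
  constructor
  · exact integrableOn_const measure_Icc_lt_top.ne
  · intro c d _ _ _
    rw [intervalIntegral.integral_const]
    simp only
    rw [add_sub_add_left_eq_sub, ← sub_smul]
    ring_nf

lemma isAC_shift {a b : ℝ} {γ γ' : ℝ → E n} (h : IsAC a b γ γ') (hab : a ≤ b) (d : ℝ) (k : E n) :
    IsAC (a + d) (b + d) (fun s => γ (s - d) + k) (fun s => γ' (s - d)) := by
  constructor
  · rw [ioo_intIcc (by linarith)]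
    exact ((ioo_intIcc hab).mp h.1).comp_sub_right d
  · intro c' d' hc hcd hd
    simp only [add_sub_add_right_eq_sub]
    rw [intervalIntegral.integral_comp_sub_right (fun s => γ' s) d]
    exact h.2 (c' - d) (d' - d) (by linarith) (by linarith) (by linarith)

/-- piecewise glue -/
def pg {X : Type*} (b : ℝ) (F G : ℝ → X) : ℝ → X := fun s => if s ≤ b then F s else G s

lemma pg_left {X : Type*} {b s : ℝ} (F G : ℝ → X) (h : s ≤ b) : pg b F G s = F s := if_pos h
lemma pg_right {X : Type*} {b s : ℝ} (F G : ℝ → X) (h : b < s) : pg b F G s = G s := if_neg (not_le.mpr h)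

lemma pg_integrableOn {X : Type*} [NormedAddCommGroup X] {b a c : ℝ} {F G : ℝ → X}
    (hab : a ≤ b) (hbc : b ≤ c)
    (hF : IntegrableOn F (Icc a b)) (hG : IntegrableOn G (Icc b c)) :
    IntegrableOn (pg b F G) (Icc a c) := by
  have h1 : IntegrableOn (pg b F G) (Icc a b) := by
    refine hF.congr_fun (fun s hs => (pg_left F G hs.2).symm) measurableSet_Icc
  have h2 : IntegrableOn (pg b F G) (Icc b c) := by
    refine hG.congr_fun_ae ?_
    filter_upwards [ae_restrict_of_ae (ae_ne b), ae_restrict_mem measurableSet_Icc] with s hs hmem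
    exact (pg_right F G (lt_of_le_of_ne hmem.1 (Ne.symm hs))).symm
  have : Icc a c ⊆ Icc a b ∪ Icc b c := by
    intro s hs
    rcases le_or_gt s b with h | h
    · exact Or.inl ⟨hs.1, h⟩
    · exact Or.inr ⟨h.le, hs.2⟩
  exact (h1.union h2).mono_set this


lemma pg_intervalIntegrable {X : Type*} [NormedAddCommGroup X] {b a c : ℝ} {F G : ℝ → X}
    (hab : a ≤ b) (hbc : b ≤ c)
    (hF : IntegrableOn F (Icc a b)) (hG : IntegrableOn G (Icc b c)) {u v : ℝ}
    (hu : a ≤ u) (huv : u ≤ v) (hv : v ≤ c) : IntervalIntegrable (pg b F G) volume u v := by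
  rw [← ioo_intIcc huv]
  exact (pg_integrableOn hab hbc hF hG).mono_set (Icc_subset_Icc hu hv)

lemma pg_int_left {X : Type*} [NormedAddCommGroup X] [NormedSpace ℝ X] {b : ℝ} {F G : ℝ → X}
    {u v : ℝ} (huv : u ≤ v) (hv : v ≤ b) :
    ∫ s in u..v, pg b F G s = ∫ s in u..v, F s := by
  refine intervalIntegral.integral_congr (fun s hs => ?_)
  rw [uIcc_of_le huv] at hs
  exact pg_left F G (hs.2.trans hv)

lemma pg_int_right {X : Type*} [NormedAddCommGroup X] [NormedSpace ℝ X] {b : ℝ} {F G : ℝ → X}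
    {u v : ℝ} (hu : b ≤ u) (huv : u ≤ v) :
    ∫ s in u..v, pg b F G s = ∫ s in u..v, G s := by
  refine intervalIntegral.integral_congr_ae ?_
  filter_upwards with s hmem
  rw [uIoc_of_le huv] at hmem
  exact pg_right F G (lt_of_le_of_lt hu hmem.1)

lemma pg_integral {X : Type*} [NormedAddCommGroup X] [NormedSpace ℝ X] {b a c : ℝ} {F G : ℝ → X}
    (hab : a ≤ b) (hbc : b ≤ c)
    (hF : IntegrableOn F (Icc a b)) (hG : IntegrableOn G (Icc b c)) :
    ∫ s in a..c, pg b F G s = (∫ s in a..b, F s) + ∫ s in b..c, G s := by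
  rw [← intervalIntegral.integral_add_adjacent_intervals
      (pg_intervalIntegrable hab hbc hF hG le_rfl hab hbc)
      (pg_intervalIntegrable hab hbc hF hG hab hbc le_rfl),
    pg_int_left hab le_rfl, pg_int_right le_rfl hbc]

lemma pg_isAC {a b c : ℝ} {f f' g g' : ℝ → E n} (hab : a ≤ b) (hbc : b ≤ c)
    (hf : IsAC a b f f') (hg : IsAC b c g g') (hfg : f b = g b) :
    IsAC a c (pg b f g) (pg b f' g') := by
  have hI := pg_integrableOn hab hbc hf.1 hg.1
  refine ⟨hI, fun u v hu huv hv => ?_⟩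
  rcases le_or_gt v b with hvb | hbv
  · rw [pg_left f g (huv.trans hvb), pg_left f g hvb, pg_int_left huv hvb]
    exact hf.2 u v hu huv hvb
  · rcases le_or_gt u b with hub | hbu
    · rw [pg_left f g hub, pg_right f g hbv,
        ← intervalIntegral.integral_add_adjacent_intervals
          (pg_intervalIntegrable hab hbc hf.1 hg.1 hu hub hbc)
          (pg_intervalIntegrable hab hbc hf.1 hg.1 hab hbv.le hv),
        pg_int_left hub le_rfl, pg_int_right le_rfl hbv.le]
      have h1 := hf.2 u b hu hub le_rfl
      have h2 := hg.2 b v le_rfl hbv.le hv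
      rw [← h1, ← h2, hfg]
      abel
    · rw [pg_right f g hbu, pg_right f g hbv, pg_int_right hbu.le huv]
      exact hg.2 u v hbu.le huv hv

def cset (L : E n → E n → E n → ℝ) (c : E n) (t : ℝ) (x y : E n) : Set ℝ :=
  { r | ∃ γ γ' : ℝ → E n, IsAC 0 t γ γ' ∧ γ 0 = x ∧ γ t = y ∧
    IntervalIntegrable (fun s => L c (γ s) (γ' s)) volume 0 t ∧
    r = ∫ s in (0:ℝ)..t, L c (γ s) (γ' s) }

lemma mC_eq (L : E n → E n → E n → ℝ) (c : E n) (t : ℝ) (x y : E n) :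
    mC L c t x y = sInf (cset L c t x y) := rfl

variable {L : E n → E n → E n → ℝ} {K0 : ℝ}

lemma cost_lb (hbd : ∀ x y v, ‖v‖ ^ 2 / 2 - K0 ≤ L x y v) {c x y : E n} {t : ℝ} (ht : 0 ≤ t)
    {r : ℝ} (hr : r ∈ cset L c t x y) : -K0 * t ≤ r := by
  obtain ⟨γ, γ', hAC, h0, ht', hInt, rfl⟩ := hr
  have h1 : ∫ s in (0:ℝ)..t, (-K0 : ℝ) ≤ ∫ s in (0:ℝ)..t, L c (γ s) (γ' s) := by
    refine intervalIntegral.integral_mono_on ht (intervalIntegrable_const) hInt (fun s _ => ?_)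
    nlinarith [hbd c (γ s) (γ' s), sq_nonneg ‖γ' s‖]
  calc -K0 * t = (t - 0) • (-K0 : ℝ) := by rw [smul_eq_mul]; ring
  _ = ∫ s in (0:ℝ)..t, (-K0 : ℝ) := (intervalIntegral.integral_const _).symm
  _ ≤ _ := h1

lemma line_mem (c x v : E n) (t : ℝ)
    (hcont : Continuous (fun q : E n × E n × E n => L q.1 q.2.1 q.2.2)) :
    (∫ s in (0:ℝ)..t, L c (x + (s - 0) • v) v) ∈ cset L c t x (x + t • v) := by
  refine ⟨fun s => x + (s - 0) • v, fun _ => v, isAC_line 0 t x v 0, by simp, by simp, ?_, rfl⟩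
  have hc2 : Continuous fun s : ℝ => (c, x + (s - 0) • v, v) :=
    continuous_const.prodMk ((continuous_const.add
      ((continuous_id.sub continuous_const).smul continuous_const)).prodMk continuous_const)
  exact (hcont.comp hc2).intervalIntegrable 0 t

lemma cset_nonempty (c x y : E n) {t : ℝ} (ht : 0 < t)
    (hcont : Continuous (fun q : E n × E n × E n => L q.1 q.2.1 q.2.2)) :
    (cset L c t x y).Nonempty := by
  have h := line_mem (L := L) c x (t⁻¹ • (y - x)) t hcont
  rw [smul_smul, mul_inv_cancel₀ ht.ne', one_smul, add_sub_cancel] at h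
  exact ⟨_, h⟩

lemma cset_bddBelow (hbd : ∀ x y v, ‖v‖ ^ 2 / 2 - K0 ≤ L x y v) (c x y : E n) {t : ℝ} (ht : 0 ≤ t) :
    BddBelow (cset L c t x y) :=
  ⟨-K0 * t, fun _ hr => cost_lb hbd ht hr⟩

lemma mC_ge (hbd : ∀ x y v, ‖v‖ ^ 2 / 2 - K0 ≤ L x y v)
    (hcont : Continuous (fun q : E n × E n × E n => L q.1 q.2.1 q.2.2))
    (c x y : E n) {t : ℝ} (ht : 0 < t) : -K0 * t ≤ mC L c t x y :=
  le_csInf (cset_nonempty c x y ht hcont) (fun _ hr => cost_lb hbd ht.le hr)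

lemma mC_line_le (hbd : ∀ x y v, L x y v ≤ ‖v‖ ^ 2 / 2 + K0)
    (hbd' : ∀ x y v, ‖v‖ ^ 2 / 2 - K0 ≤ L x y v)
    (hcont : Continuous (fun q : E n × E n × E n => L q.1 q.2.1 q.2.2))
    (c x v : E n) {t : ℝ} (ht : 0 ≤ t) :
    mC L c t x (x + t • v) ≤ t * (‖v‖ ^ 2 / 2 + K0) := by
  refine le_trans (csInf_le (cset_bddBelow hbd' c x _ ht) (line_mem c x v t hcont)) ?_
  have h1 : ∫ s in (0:ℝ)..t, L c (x + (s - 0) • v) v ≤ ∫ s in (0:ℝ)..t, (‖v‖ ^ 2 / 2 + K0) := by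
    refine intervalIntegral.integral_mono_on ht ?_ intervalIntegrable_const (fun s _ => hbd _ _ _)
    have hc2 : Continuous fun s : ℝ => (c, x + (s - 0) • v, v) :=
      continuous_const.prodMk ((continuous_const.add
        ((continuous_id.sub continuous_const).smul continuous_const)).prodMk continuous_const)
    exact (hcont.comp hc2).intervalIntegrable 0 t
  calc _ ≤ ∫ s in (0:ℝ)..t, (‖v‖ ^ 2 / 2 + K0) := h1
  _ = t * (‖v‖ ^ 2 / 2 + K0) := by rw [intervalIntegral.integral_const, smul_eq_mul]; ring_nf

lemma mC_le_straight (hbd : ∀ x y v, L x y v ≤ ‖v‖ ^ 2 / 2 + K0)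
    (hbd' : ∀ x y v, ‖v‖ ^ 2 / 2 - K0 ≤ L x y v)
    (hcont : Continuous (fun q : E n × E n × E n => L q.1 q.2.1 q.2.2))
    (c x y : E n) {t : ℝ} (ht : 0 < t) :
    mC L c t x y ≤ ‖y - x‖ ^ 2 / (2 * t) + K0 * t := by
  have h := mC_line_le hbd hbd' hcont c x (t⁻¹ • (y - x)) ht.le
  rw [smul_smul, mul_inv_cancel₀ ht.ne', one_smul, add_sub_cancel] at h
  refine h.trans (le_of_eq ?_)
  rw [norm_smul]
  simp only [norm_inv, Real.norm_eq_abs, abs_of_pos ht]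
  field_simp

lemma energy_intIntegrable (hbd : ∀ x y v, ‖v‖ ^ 2 / 2 - K0 ≤ L x y v)
    {c : E n} {γ γ' : ℝ → E n} {t : ℝ} (ht : 0 ≤ t) (hAC : IsAC 0 t γ γ')
    (hInt : IntervalIntegrable (fun s => L c (γ s) (γ' s)) volume 0 t) :
    IntervalIntegrable (fun s => ‖γ' s‖ ^ 2) volume 0 t := by
  rw [intervalIntegrable_iff_integrableOn_Ioc_of_le ht]
  have hγ' : IntegrableOn γ' (Ioc 0 t) volume :=
    hAC.1.mono_set Ioc_subset_Icc_self
  have hmeas : AEStronglyMeasurable (fun s => ‖γ' s‖ ^ 2) (volume.restrict (Ioc 0 t)) :=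
    (continuous_norm.pow 2).comp_aestronglyMeasurable hγ'.aestronglyMeasurable
  have hLi : IntegrableOn (fun s => 2 * (L c (γ s) (γ' s) + K0)) (Ioc 0 t) volume := by
    have := (intervalIntegrable_iff_integrableOn_Ioc_of_le ht).mp hInt
    exact ((this.add (integrableOn_const measure_Ioc_lt_top.ne)).const_mul 2)
  refine hLi.mono' hmeas ?_
  filter_upwards with s
  rw [Real.norm_eq_abs, abs_of_nonneg (by positivity)]
  nlinarith [hbd c (γ s) (γ' s)]

lemma energy_le (hbd : ∀ x y v, ‖v‖ ^ 2 / 2 - K0 ≤ L x y v)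
    {c : E n} {γ γ' : ℝ → E n} {t : ℝ} (ht : 0 ≤ t) (hAC : IsAC 0 t γ γ')
    (hInt : IntervalIntegrable (fun s => L c (γ s) (γ' s)) volume 0 t) :
    ∫ s in (0:ℝ)..t, ‖γ' s‖ ^ 2 ≤ 2 * (∫ s in (0:ℝ)..t, L c (γ s) (γ' s)) + 2 * K0 * t := by
  have hq := energy_intIntegrable hbd ht hAC hInt
  have h1 : ∫ s in (0:ℝ)..t, ‖γ' s‖ ^ 2 ≤ ∫ s in (0:ℝ)..t, (2 * (L c (γ s) (γ' s)) + 2 * K0) := by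
    refine intervalIntegral.integral_mono_on ht hq ((hInt.const_mul 2).add intervalIntegrable_const)
      (fun s _ => ?_)
    nlinarith [hbd c (γ s) (γ' s)]
  calc ∫ s in (0:ℝ)..t, ‖γ' s‖ ^ 2 ≤ _ := h1
  _ = 2 * (∫ s in (0:ℝ)..t, L c (γ s) (γ' s)) + 2 * K0 * t := by
      rw [intervalIntegral.integral_add (hInt.const_mul 2) intervalIntegrable_const,
        intervalIntegral.integral_const_mul, intervalIntegral.integral_const, smul_eq_mul]
      ring

lemma cauchy_schwarz_unit {γ' : ℝ → E n} {τ : ℝ}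
    (hγ' : IntegrableOn γ' (Icc τ (τ + 1)) volume)
    (hq : IntervalIntegrable (fun s => ‖γ' s‖ ^ 2) volume τ (τ + 1)) :
    ‖∫ s in τ..(τ + 1), γ' s‖ ^ 2 ≤ ∫ s in τ..(τ + 1), ‖γ' s‖ ^ 2 := by
  have hτ : τ ≤ τ + 1 := by linarith
  have hg : IntervalIntegrable (fun s => ‖γ' s‖) volume τ (τ + 1) :=
    ((ioo_intIcc hτ).mp hγ').norm
  set μ := ∫ s in τ..(τ + 1), ‖γ' s‖ with hμ
  have hμ0 : 0 ≤ μ := intervalIntegral.integral_nonneg hτ (fun s _ => norm_nonneg _)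
  have hnorm : ‖∫ s in τ..(τ + 1), γ' s‖ ≤ μ :=
    intervalIntegral.norm_integral_le_integral_norm hτ
  have h0 : 0 ≤ ∫ s in τ..(τ + 1), (‖γ' s‖ ^ 2 - 2 * μ * ‖γ' s‖ + μ ^ 2) :=
    intervalIntegral.integral_nonneg hτ (fun s _ => by nlinarith [sq_nonneg (‖γ' s‖ - μ)])
  have hsplit : ∫ s in τ..(τ + 1), (‖γ' s‖ ^ 2 - 2 * μ * ‖γ' s‖ + μ ^ 2)
      = (∫ s in τ..(τ + 1), ‖γ' s‖ ^ 2) - 2 * μ * μ + μ ^ 2 := by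
    rw [intervalIntegral.integral_add (hq.sub (hg.const_mul (2 * μ))) intervalIntegrable_const,
      intervalIntegral.integral_sub hq (hg.const_mul (2 * μ)),
      intervalIntegral.integral_const_mul, intervalIntegral.integral_const, smul_eq_mul, ← hμ]
    ring
  rw [hsplit] at h0
  nlinarith [hnorm, norm_nonneg (∫ s in τ..(τ + 1), γ' s)]

lemma pigeonhole {q : ℝ → ℝ} {t C₁ : ℝ} (ht : 1 ≤ t) (hC₁ : 0 < C₁)
    (hq : IntervalIntegrable q volume 0 t) (hq0 : ∀ s, 0 ≤ q s)
    (hsum : ∫ s in (0:ℝ)..t, q s ≤ C₁ * t) :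
    ∃ τ : ℝ, 0 ≤ τ ∧ τ + 1 ≤ t ∧ ∫ s in τ..(τ + 1), q s ≤ 2 * C₁ := by
  set N := ⌊t⌋₊ with hN
  have hN1 : 1 ≤ N := Nat.le_floor (by exact_mod_cast ht)
  have hNt : (N : ℝ) ≤ t := Nat.floor_le (by linarith)
  have htN : t < N + 1 := Nat.lt_floor_add_one t
  have ht2N : t ≤ 2 * N := by
    have : (1 : ℝ) ≤ N := by exact_mod_cast hN1
    linarith
  by_contra hcon
  push_neg at hcon
  have hsub : ∀ (u v : ℝ), 0 ≤ u → u ≤ v → v ≤ t → IntervalIntegrable q volume u v := by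
    intro u v hu huv hv
    refine hq.mono_set ?_
    rw [uIcc_of_le huv, uIcc_of_le (by linarith : (0:ℝ) ≤ t)]
    exact Icc_subset_Icc hu hv
  have hadj : ∀ k : ℕ, k < N → IntervalIntegrable q volume ((k : ℕ) : ℝ) ((k + 1 : ℕ) : ℝ) := by
    intro k hk
    refine hsub _ _ (by positivity) (by push_cast; linarith) ?_
    push_cast
    have : (k : ℝ) + 1 ≤ N := by exact_mod_cast Nat.succ_le_of_lt hk
    linarith
  have hsumeq : ∑ k ∈ Finset.range N, ∫ s in ((k : ℕ) : ℝ)..((k + 1 : ℕ) : ℝ), q s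
      = ∫ s in ((0 : ℕ) : ℝ)..((N : ℕ) : ℝ), q s :=
    intervalIntegral.sum_integral_adjacent_intervals hadj
  have hlb : (N : ℝ) * (2 * C₁) < ∑ k ∈ Finset.range N, ∫ s in ((k : ℕ) : ℝ)..((k + 1 : ℕ) : ℝ), q s := by
    have := Finset.sum_lt_sum_of_nonempty (s := Finset.range N)
      (Finset.nonempty_range_iff.mpr (by omega))
      (f := fun _ => 2 * C₁)
      (g := fun k => ∫ s in ((k : ℕ) : ℝ)..((k + 1 : ℕ) : ℝ), q s) ?_
    · simpa [Finset.sum_const, Finset.card_range, mul_comm] using this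
    · intro k hk
      have hk' := Finset.mem_range.mp hk
      have := hcon (k : ℝ) (by positivity) (by
        push_cast
        have : (k : ℝ) + 1 ≤ N := by exact_mod_cast Nat.succ_le_of_lt hk'
        linarith)
      push_cast
      linarith
  have hupper : ∫ s in ((0 : ℕ) : ℝ)..((N : ℕ) : ℝ), q s ≤ ∫ s in (0:ℝ)..t, q s := by
    have h1 : IntervalIntegrable q volume 0 N := hsub 0 N le_rfl (by exact_mod_cast N.cast_nonneg) hNt
    have h2 : IntervalIntegrable q volume N t := hsub N t (by exact_mod_cast N.cast_nonneg) hNt le_rfl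
    have h3 : (0:ℝ) ≤ ∫ s in (N:ℝ)..t, q s := intervalIntegral.integral_nonneg hNt (fun s _ => hq0 s)
    have h4 := intervalIntegral.integral_add_adjacent_intervals h1 h2
    push_cast
    push_cast at h4
    linarith
  have : C₁ * t < C₁ * t := by
    calc C₁ * t ≤ (N : ℝ) * (2 * C₁) := by nlinarith
    _ < _ := hlb
    _ ≤ ∫ s in (0:ℝ)..t, q s := hsumeq ▸ hupper
    _ ≤ C₁ * t := hsum
  exact lt_irrefl _ this

lemma isAC_congr {a b a' b' : ℝ} {γ γ' : ℝ → E n} (ha : a = a') (hb : b = b')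
    (h : IsAC a b γ γ') : IsAC a' b' γ γ' := ha ▸ hb ▸ h

lemma seg_cont {L : E n → E n → E n → ℝ}
    (hcont : Continuous (fun q : E n × E n × E n => L q.1 q.2.1 q.2.2))
    (c x v : E n) (a' : ℝ) : Continuous (fun s : ℝ => L c (x + (s - a') • v) v) :=
  hcont.comp (continuous_const.prodMk ((continuous_const.add
    ((continuous_id.sub continuous_const).smul continuous_const)).prodMk continuous_const))

lemma seg_cost (hbd2 : ∀ x y v, L x y v ≤ ‖v‖ ^ 2 / 2 + K0)
    (hcont : Continuous (fun q : E n × E n × E n => L q.1 q.2.1 q.2.2))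
    (c x v : E n) {a b : ℝ} (hab : a ≤ b) (a' : ℝ) :
    ∫ s in a..b, L c (x + (s - a') • v) v ≤ (b - a) * (‖v‖ ^ 2 / 2 + K0) := by
  have h1 : ∫ s in a..b, L c (x + (s - a') • v) v ≤ ∫ s in a..b, (‖v‖ ^ 2 / 2 + K0) :=
    intervalIntegral.integral_mono_on hab
      ((seg_cont hcont c x v a').intervalIntegrable a b) intervalIntegrable_const
      (fun s _ => hbd2 _ _ _)
  rw [intervalIntegral.integral_const, smul_eq_mul] at h1
  exact h1

lemma round_close (y : E n) : ‖intVec n (fun i => round (y i)) - y‖ ^ 2 ≤ (n : ℝ) / 4 := by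
  set w : E n := intVec n (fun i => round (y i)) - y with hw
  have hnn : (0:ℝ) ≤ ∑ i, ‖w i‖ ^ 2 := by positivity
  rw [EuclideanSpace.norm_eq, Real.sq_sqrt hnn]
  calc ∑ i, ‖w i‖ ^ 2 ≤ ∑ _i : Fin n, (1/4 : ℝ) := by
        refine Finset.sum_le_sum (fun i _ => ?_)
        have h1 : w i = ((round (y i) : ℤ) : ℝ) - y i := by
          rw [hw]; simp [intVec, PiLp.sub_apply]
        have h2 : |((round (y i) : ℤ) : ℝ) - y i| ≤ 1/2 := by
          rw [abs_sub_comm]; exact abs_sub_round (y i)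
        rw [h1, Real.norm_eq_abs, sq_abs]
        nlinarith [abs_nonneg (((round (y i) : ℤ) : ℝ) - y i),
          sq_abs (((round (y i) : ℤ) : ℝ) - y i)]
  _ = (n : ℝ) / 4 := by
        rw [Finset.sum_const, Finset.card_univ, Fintype.card_fin, nsmul_eq_mul]; ring

end S13

set_option maxHeartbeats 2000000 in
/-- Appendix Lemma: approximate doubling estimate
`m^c(2t, 0, 2y) ≤ 2 m^c(t, 0, y) + C` with `C = C(n, M0, K0)` uniform in the frozen
point `c`. -/
theorem stmt_13 (n : ℕ) (hn : 1 ≤ n) (M0 K0 : ℝ) (hM0 : 0 < M0) (hK0 : 0 < K0)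
    (L : E n → E n → E n → ℝ)
    (hcont : Continuous (fun q : E n × E n × E n => L q.1 q.2.1 q.2.2))
    (hper : ∀ (x y v : E n) (k : Fin n → ℤ), L x (y + intVec n k) v = L x y v)
    (hconv : ∀ x y, ConvexOn ℝ univ (fun v => L x y v))
    (hbd : ∀ x y v, ‖v‖ ^ 2 / 2 - K0 ≤ L x y v ∧ L x y v ≤ ‖v‖ ^ 2 / 2 + K0) :
    ∃ C : ℝ, 0 < C ∧
      ∀ (c : E n) (t : ℝ) (y : E n), 0 < t → ‖y‖ ≤ M0 * t →
        mC L c (2 * t) 0 ((2:ℝ) • y) ≤ 2 * mC L c t 0 y + C := by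
  classical
  have hbd1 : ∀ x y v, ‖v‖ ^ 2 / 2 - K0 ≤ L x y v := fun x y v => (hbd x y v).1
  have hbd2 : ∀ x y v, L x y v ≤ ‖v‖ ^ 2 / 2 + K0 := fun x y v => (hbd x y v).2
  refine ⟨2 * (n : ℝ) + 16 * K0 + 4 * M0 ^ 2 + 20, by positivity, ?_⟩
  intro c t y ht hy
  have hn0 : (0:ℝ) ≤ (n:ℝ) := Nat.cast_nonneg n
  have hy2 : ‖y‖ ^ 2 ≤ M0 ^ 2 * t ^ 2 := by nlinarith [norm_nonneg y]
  rcases le_or_gt t 1 with htle | htgt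
  · -- small time case
    have h2t : (0:ℝ) < 2 * t := by linarith
    have h1 := S13.mC_le_straight hbd2 hbd1 hcont c 0 ((2:ℝ) • y) h2t
    have h2 : ‖(2:ℝ) • y - 0‖ ^ 2 = 4 * ‖y‖ ^ 2 := by
      rw [sub_zero, norm_smul]
      have h4 : ‖(2:ℝ)‖ = 2 := by norm_num
      rw [h4]; ring
    have h4 := S13.mC_ge hbd1 hcont c 0 y ht
    have h5 : ‖(2:ℝ) • y - 0‖ ^ 2 / (2 * (2 * t)) ≤ M0 ^ 2 * t := by
      rw [h2, div_le_iff₀ (by linarith)]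
      nlinarith
    nlinarith [sq_nonneg M0]
  · -- main case t > 1
    have ht1 : (1:ℝ) ≤ t := htgt.le
    set C₁ : ℝ := M0 ^ 2 + 4 * K0 + 2 with hC₁def
    have hC₁ : 0 < C₁ := by positivity
    have hne := S13.cset_nonempty (L := L) c 0 y ht hcont
    set m := mC L c t 0 y with hm
    obtain ⟨A, hAmem, hAlt⟩ := exists_lt_of_csInf_lt hne
      (by rw [← S13.mC_eq, ← hm]; linarith only [] : sInf (S13.cset L c t 0 y) < m + 1)
    obtain ⟨γ, γ', hAC, hγ0, hγt, hInt, hAeq⟩ := hAmem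
    have hmub : m ≤ M0 ^ 2 * t / 2 + K0 * t := by
      have h1 := S13.mC_le_straight hbd2 hbd1 hcont c 0 y ht
      have h2 : ‖y - 0‖ ^ 2 / (2 * t) ≤ M0 ^ 2 * t / 2 := by
        rw [sub_zero, div_le_iff₀ (by linarith)]
        linarith only [hy2]
      rw [hm]; linarith only [h1, h2]
    -- energy bound
    have hEng := S13.energy_le hbd1 ht.le hAC hInt
    rw [← hAeq] at hEng
    have hEng' : ∫ s in (0:ℝ)..t, ‖γ' s‖ ^ 2 ≤ C₁ * t := by
      rw [hC₁def]; linarith only [hEng, hAlt, hmub, ht1]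
    have hqInt := S13.energy_intIntegrable hbd1 ht.le hAC hInt
    obtain ⟨τ, hτ0, hτ1, hτq⟩ := S13.pigeonhole ht1 hC₁ hqInt (fun s => by positivity) hEng'
    have hτt : τ ≤ t := by linarith only [hτ1]
    -- displacement on window
    have hγ'τ : IntegrableOn γ' (Icc τ (τ + 1)) volume := hAC.1.mono_set (Icc_subset_Icc hτ0 hτ1)
    have hqτ : IntervalIntegrable (fun s => ‖γ' s‖ ^ 2) volume τ (τ + 1) := by
      refine hqInt.mono_set ?_
      rw [uIcc_of_le (by linarith only [] : τ ≤ τ + 1), uIcc_of_le ht.le]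
      exact Icc_subset_Icc hτ0 hτ1
    have hdiff : γ (τ + 1) - γ τ = ∫ s in τ..(τ + 1), γ' s :=
      hAC.2 τ (τ + 1) hτ0 (by linarith only []) hτ1
    have hd : ‖γ (τ + 1) - γ τ‖ ^ 2 ≤ 2 * C₁ := by
      have h := S13.cauchy_schwarz_unit hγ'τ hqτ
      rw [← hdiff] at h
      linarith only [h, hτq]
    -- integer point near y
    set kk : Fin n → ℤ := fun i => round (y i) with hkkdef
    set k : E n := intVec n kk with hkdef
    have hky : ‖k - y‖ ^ 2 ≤ (n : ℝ) / 4 := by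
      rw [hkdef, hkkdef]; exact S13.round_close y
    -- glue times
    set t6 : ℝ := 2*t with ht6def
    set t2 : ℝ := t + 1/4 with ht2def
    set t3 : ℝ := t + 1/4 + τ with ht3def
    set t4 : ℝ := t + 3/4 + τ with ht4def
    set t5 : ℝ := 2*t - 1/4 with ht5def
    clear_value t6 t2 t3 t4 t5
    have o01 : (0:ℝ) ≤ t := ht.le
    have o12 : t ≤ t2 := by rw [ht2def]; linarith only []
    have o23 : t2 ≤ t3 := by rw [ht2def, ht3def]; linarith only [hτ0]
    have o34 : t3 ≤ t4 := by rw [ht3def, ht4def]; linarith only []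
    have o45 : t4 ≤ t5 := by rw [ht4def, ht5def]; linarith only [hτ1]
    have o56 : t5 ≤ t6 := by rw [ht5def, ht6def]; linarith only []
    -- pieces
    set u1 : E n := (4:ℝ) • (k - y) with hu1def
    set u2 : E n := (2:ℝ) • (γ (τ+1) - γ τ) with hu2def
    set u3 : E n := (4:ℝ) • (y - k) with hu3def
    set P2 : ℝ → E n := fun s => y + (s - t) • u1 with hP2def
    set P3 : ℝ → E n := fun s => γ (s - t2) + k with hP3def
    set P3' : ℝ → E n := fun s => γ' (s - t2) with hP3'def
    set P4 : ℝ → E n := fun s => (γ τ + k) + (s - t3) • u2 with hP4def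
    set P5 : ℝ → E n := fun s => γ (s - (t - 1/4)) + k with hP5def
    set P5' : ℝ → E n := fun s => γ' (s - (t - 1/4)) with hP5'def
    set P6 : ℝ → E n := fun s => (y + k) + (s - t5) • u3 with hP6def
    clear_value u1 u2 u3 P2 P3 P3' P4 P5 P5' P6
    -- IsAC of pieces
    have hP2AC : IsAC t t2 P2 (fun _ => u1) := by
      rw [hP2def]; exact S13.isAC_line t t2 y u1 t
    have hP4AC : IsAC t3 t4 P4 (fun _ => u2) := by
      rw [hP4def]; exact S13.isAC_line t3 t4 (γ τ + k) u2 t3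
    have hP6AC : IsAC t5 t6 P6 (fun _ => u3) := by
      rw [hP6def]; exact S13.isAC_line t5 t6 (y + k) u3 t5
    have hP3AC : IsAC t2 t3 P3 P3' := by
      rw [hP3def, hP3'def]
      refine S13.isAC_congr (zero_add t2) ?_ (S13.isAC_shift (S13.isAC_mono hAC le_rfl hτt) hτ0 t2 k)
      rw [ht2def, ht3def]; ring
    have hP5AC : IsAC t4 t5 P5 P5' := by
      rw [hP5def, hP5'def]
      refine S13.isAC_congr ?_ ?_
        (S13.isAC_shift (S13.isAC_mono hAC (by linarith only [hτ0] : (0:ℝ) ≤ τ + 1) le_rfl) hτ1 (t - 1/4) k)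
      · rw [ht4def]; ring
      · rw [ht5def]; ring
    -- junction values
    have hv1 : γ t = P2 t := by rw [hγt, hP2def]; simp
    have hv2 : P2 t2 = P3 t2 := by
      rw [hP2def, hP3def, ht2def]
      simp only
      rw [show t + 1/4 - t = (1/4 : ℝ) by ring, show t + 1/4 - (t + 1/4) = (0:ℝ) by ring,
        hγ0, hu1def, smul_smul]
      norm_num
    have hv3 : P3 t3 = P4 t3 := by
      rw [hP3def, hP4def, ht3def, ht2def]
      simp only
      rw [show t + 1/4 + τ - (t + 1/4) = τ by ring, show t + 1/4 + τ - (t + 1/4 + τ) = (0:ℝ) by ring]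
      simp
    have hv4 : P4 t4 = P5 t4 := by
      rw [hP4def, hP5def, ht4def, ht3def]
      simp only
      rw [show t + 3/4 + τ - (t + 1/4 + τ) = (1/2 : ℝ) by ring,
        show t + 3/4 + τ - (t - 1/4) = τ + 1 by ring, hu2def, smul_smul]
      norm_num
      abel
    have hv5 : P5 t5 = P6 t5 := by
      rw [hP5def, hP6def, ht5def]
      simp only
      rw [show 2*t - 1/4 - (t - 1/4) = t by ring, show 2*t - 1/4 - (2*t - 1/4) = (0:ℝ) by ring,
        hγt]
      simp
    -- glued curve
    set σ : ℝ → E n := S13.pg t γ (S13.pg t2 P2 (S13.pg t3 P3 (S13.pg t4 P4 (S13.pg t5 P5 P6)))) with hσdef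
    set σ' : ℝ → E n := S13.pg t γ' (S13.pg t2 (fun _ => u1) (S13.pg t3 P3' (S13.pg t4 (fun _ => u2) (S13.pg t5 P5' (fun _ => u3))))) with hσ'def
    clear_value σ σ'
    have hg5 : IsAC t4 t6 (S13.pg t5 P5 P6) (S13.pg t5 P5' (fun _ => u3)) :=
      S13.pg_isAC o45 o56 hP5AC hP6AC hv5
    have hg4 : IsAC t3 t6 (S13.pg t4 P4 (S13.pg t5 P5 P6)) (S13.pg t4 (fun _ => u2) (S13.pg t5 P5' (fun _ => u3))) := by
      refine S13.pg_isAC o34 (o45.trans o56) hP4AC hg5 ?_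
      rw [S13.pg_left P5 P6 o45]; exact hv4
    have hg3 : IsAC t2 t6 (S13.pg t3 P3 (S13.pg t4 P4 (S13.pg t5 P5 P6))) (S13.pg t3 P3' (S13.pg t4 (fun _ => u2) (S13.pg t5 P5' (fun _ => u3)))) := by
      refine S13.pg_isAC o23 (o34.trans (o45.trans o56)) hP3AC hg4 ?_
      rw [S13.pg_left P4 _ o34]; exact hv3
    have hg2 : IsAC t t6 (S13.pg t2 P2 (S13.pg t3 P3 (S13.pg t4 P4 (S13.pg t5 P5 P6)))) (S13.pg t2 (fun _ => u1) (S13.pg t3 P3' (S13.pg t4 (fun _ => u2) (S13.pg t5 P5' (fun _ => u3))))) := by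
      refine S13.pg_isAC o12 (o23.trans (o34.trans (o45.trans o56))) hP2AC hg3 ?_
      rw [S13.pg_left P3 _ o23]; exact hv2
    have hσAC : IsAC 0 t6 σ σ' := by
      rw [hσdef, hσ'def]
      refine S13.pg_isAC o01 (o12.trans (o23.trans (o34.trans (o45.trans o56)))) hAC hg2 ?_
      rw [S13.pg_left P2 _ o12]; exact hv1
    have hσ0 : σ 0 = 0 := by rw [hσdef, S13.pg_left _ _ o01, hγ0]
    have hσT : σ t6 = (2:ℝ) • y := by
      have s1 : t < t6 := by rw [ht6def]; linarith only [ht1]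
      have s2 : t2 < t6 := by rw [ht2def, ht6def]; linarith only [ht1]
      have s3 : t3 < t6 := by rw [ht3def, ht6def]; linarith only [ht1, hτ1]
      have s4 : t4 < t6 := by rw [ht4def, ht6def]; linarith only [ht1, hτ1]
      have s5 : t5 < t6 := by rw [ht5def, ht6def]; linarith only []
      rw [hσdef, S13.pg_right _ _ s1, S13.pg_right _ _ s2, S13.pg_right _ _ s3,
        S13.pg_right _ _ s4, S13.pg_right _ _ s5, hP6def, ht6def, ht5def]
      simp only
      rw [show 2*t - (2*t - 1/4) = (1/4:ℝ) by ring, hu3def, smul_smul,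
        show ((1:ℝ)/4 * 4) = 1 by norm_num, one_smul, two_smul]
      abel
    -- cost pieces
    set F1 : ℝ → ℝ := fun s => L c (γ s) (γ' s) with hF1def
    set F2 : ℝ → ℝ := fun s => L c (P2 s) u1 with hF2def
    set F3 : ℝ → ℝ := fun s => L c (P3 s) (P3' s) with hF3def
    set F4 : ℝ → ℝ := fun s => L c (P4 s) u2 with hF4def
    set F5 : ℝ → ℝ := fun s => L c (P5 s) (P5' s) with hF5def
    set F6 : ℝ → ℝ := fun s => L c (P6 s) u3 with hF6def
    clear_value F1 F2 F3 F4 F5 F6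
    have hInt1 : IntervalIntegrable F1 volume 0 t := hInt
    have hAe : A = ∫ s in (0:ℝ)..t, F1 s := hAeq
    have hLσ : (fun s => L c (σ s) (σ' s)) = S13.pg t F1 (S13.pg t2 F2 (S13.pg t3 F3 (S13.pg t4 F4 (S13.pg t5 F5 F6)))) := by
      funext s
      rw [hσdef, hσ'def, hF1def, hF2def, hF3def, hF4def, hF5def, hF6def]
      simp only [S13.pg]
      split_ifs <;> rfl
    have hF3eq : F3 = fun s => F1 (s - t2) := by
      funext s
      rw [hF3def, hP3def, hP3'def, hkdef, hF1def]
      exact hper c _ _ kk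
    have hF5eq : F5 = fun s => F1 (s - (t - 1/4)) := by
      funext s
      rw [hF5def, hP5def, hP5'def, hkdef, hF1def]
      exact hper c _ _ kk
    have hF1i : IntegrableOn F1 (Icc 0 t) volume := by
      rw [S13.ioo_intIcc ht.le]; exact hInt1
    have hF2i : IntegrableOn F2 (Icc t t2) volume := by
      rw [hF2def, hP2def]; exact (S13.seg_cont hcont c y u1 t).integrableOn_Icc
    have hF4i : IntegrableOn F4 (Icc t3 t4) volume := by
      rw [hF4def, hP4def]; exact (S13.seg_cont hcont c (γ τ + k) u2 t3).integrableOn_Icc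
    have hF6i : IntegrableOn F6 (Icc t5 t6) volume := by
      rw [hF6def, hP6def]; exact (S13.seg_cont hcont c (y + k) u3 t5).integrableOn_Icc
    have hF3i : IntegrableOn F3 (Icc t2 t3) volume := by
      rw [hF3eq, S13.ioo_intIcc o23]
      have h := (hInt.mono_set (by
        rw [uIcc_of_le hτ0, uIcc_of_le ht.le]; exact Icc_subset_Icc le_rfl hτt)).comp_sub_right t2
      rw [zero_add, show τ + t2 = t3 by rw [ht3def, ht2def]; ring] at h
      exact h
    have hF5i : IntegrableOn F5 (Icc t4 t5) volume := by
      rw [hF5eq, S13.ioo_intIcc o45]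
      have h := (hInt.mono_set (by
        rw [uIcc_of_le hτ1, uIcc_of_le ht.le]
        exact Icc_subset_Icc (by linarith only [hτ0]) le_rfl)).comp_sub_right (t - 1/4)
      rw [show τ + 1 + (t - 1/4) = t4 by rw [ht4def]; ring,
        show t + (t - 1/4) = t5 by rw [ht5def]; ring] at h
      exact h
    have hG5i : IntegrableOn (S13.pg t5 F5 F6) (Icc t4 t6) volume := S13.pg_integrableOn o45 o56 hF5i hF6i
    have hG4i : IntegrableOn (S13.pg t4 F4 (S13.pg t5 F5 F6)) (Icc t3 t6) volume :=
      S13.pg_integrableOn o34 (o45.trans o56) hF4i hG5i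
    have hG3i : IntegrableOn (S13.pg t3 F3 (S13.pg t4 F4 (S13.pg t5 F5 F6))) (Icc t2 t6) volume :=
      S13.pg_integrableOn o23 (o34.trans (o45.trans o56)) hF3i hG4i
    have hG2i : IntegrableOn (S13.pg t2 F2 (S13.pg t3 F3 (S13.pg t4 F4 (S13.pg t5 F5 F6)))) (Icc t t6) volume :=
      S13.pg_integrableOn o12 (o23.trans (o34.trans (o45.trans o56))) hF2i hG3i
    have hG1i : IntegrableOn (S13.pg t F1 (S13.pg t2 F2 (S13.pg t3 F3 (S13.pg t4 F4 (S13.pg t5 F5 F6))))) (Icc 0 t6) volume :=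
      S13.pg_integrableOn o01 (o12.trans (o23.trans (o34.trans (o45.trans o56)))) hF1i hG2i
    have hσInt : IntervalIntegrable (fun s => L c (σ s) (σ' s)) volume 0 t6 := by
      rw [hLσ, ← S13.ioo_intIcc (o01.trans (o12.trans (o23.trans (o34.trans (o45.trans o56)))))]
      exact hG1i
    -- membership
    have hmem : (∫ s in (0:ℝ)..t6, L c (σ s) (σ' s)) ∈ S13.cset L c t6 0 ((2:ℝ) • y) :=
      ⟨σ, σ', hσAC, hσ0, hσT, hσInt, rfl⟩
    have hle : mC L c t6 0 ((2:ℝ) • y) ≤ ∫ s in (0:ℝ)..t6, L c (σ s) (σ' s) := by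
      rw [S13.mC_eq]
      exact csInf_le (S13.cset_bddBelow hbd1 c 0 _ (by rw [ht6def]; linarith only [ht])) hmem
    -- compute/estimate the integral
    have hsplit : ∫ s in (0:ℝ)..t6, L c (σ s) (σ' s)
        = (∫ s in (0:ℝ)..t, F1 s) + ((∫ s in t..t2, F2 s) + ((∫ s in t2..t3, F3 s)
          + ((∫ s in t3..t4, F4 s) + ((∫ s in t4..t5, F5 s) + ∫ s in t5..t6, F6 s)))) := by
      rw [hLσ, S13.pg_integral o01 (o12.trans (o23.trans (o34.trans (o45.trans o56)))) hF1i hG2i,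
        S13.pg_integral o12 (o23.trans (o34.trans (o45.trans o56))) hF2i hG3i,
        S13.pg_integral o23 (o34.trans (o45.trans o56)) hF3i hG4i,
        S13.pg_integral o34 (o45.trans o56) hF4i hG5i,
        S13.pg_integral o45 o56 hF5i hF6i]
    -- values of the replay pieces
    have hI3 : ∫ s in t2..t3, F3 s = ∫ s in (0:ℝ)..τ, F1 s := by
      rw [hF3eq, intervalIntegral.integral_comp_sub_right (fun s => F1 s) t2,
        show t2 - t2 = (0:ℝ) by ring, show t3 - t2 = τ by rw [ht3def, ht2def]; ring]
    have hI5 : ∫ s in t4..t5, F5 s = ∫ s in (τ+1)..t, F1 s := by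
      rw [hF5eq, intervalIntegral.integral_comp_sub_right (fun s => F1 s) (t - 1/4),
        show t4 - (t - 1/4) = τ + 1 by rw [ht4def]; ring,
        show t5 - (t - 1/4) = t by rw [ht5def]; ring]
    -- adjacent splitting of A
    have hsub : ∀ (u v : ℝ), 0 ≤ u → u ≤ v → v ≤ t → IntervalIntegrable F1 volume u v := by
      intro u v hu huv hv
      refine hInt1.mono_set ?_
      rw [uIcc_of_le huv, uIcc_of_le ht.le]
      exact Icc_subset_Icc hu hv
    have hAsplit : (∫ s in (0:ℝ)..τ, F1 s) + ((∫ s in τ..(τ+1), F1 s) + ∫ s in (τ+1)..t, F1 s)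
        = ∫ s in (0:ℝ)..t, F1 s := by
      rw [intervalIntegral.integral_add_adjacent_intervals (hsub τ (τ+1) hτ0 (by linarith only []) hτ1)
        (hsub (τ+1) t (by linarith only [hτ0]) hτ1 le_rfl),
        intervalIntegral.integral_add_adjacent_intervals (hsub 0 τ le_rfl hτ0 hτt)
        (hsub τ t hτ0 hτt le_rfl)]
    have hB : -K0 ≤ ∫ s in τ..(τ+1), F1 s := by
      have h1 : ∫ s in τ..(τ+1), (-K0 : ℝ) ≤ ∫ s in τ..(τ+1), F1 s := by
        refine intervalIntegral.integral_mono_on (by linarith only []) intervalIntegrable_const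
          (hsub τ (τ+1) hτ0 (by linarith only []) hτ1) (fun s _ => ?_)
        rw [hF1def]
        linarith only [hbd1 c (γ s) (γ' s), sq_nonneg ‖γ' s‖]
      rw [intervalIntegral.integral_const, smul_eq_mul] at h1
      calc (-K0 : ℝ) = (τ + 1 - τ) * (-K0) := by ring
      _ ≤ _ := h1
    -- velocity norms
    have hnu1 : ‖u1‖ ^ 2 ≤ 4 * (n:ℝ) := by
      rw [hu1def, norm_smul]
      have h4 : ‖(4:ℝ)‖ = 4 := by norm_num
      rw [h4, mul_pow]
      norm_num
      linarith only [hky]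
    have hnu3 : ‖u3‖ ^ 2 ≤ 4 * (n:ℝ) := by
      rw [hu3def, norm_smul]
      have h4 : ‖(4:ℝ)‖ = 4 := by norm_num
      rw [h4, norm_sub_rev, mul_pow]
      norm_num
      linarith only [hky]
    have hnu2 : ‖u2‖ ^ 2 ≤ 8 * C₁ := by
      rw [hu2def, norm_smul]
      have h4 : ‖(2:ℝ)‖ = 2 := by norm_num
      rw [h4, mul_pow]
      norm_num
      linarith only [hd]
    -- segment costs
    have hI2 : ∫ s in t..t2, F2 s ≤ (1/4) * (‖u1‖ ^ 2 / 2 + K0) := by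
      have h := S13.seg_cost hbd2 hcont c y u1 o12 t
      rw [show t2 - t = (1/4:ℝ) by rw [ht2def]; ring] at h
      rw [hF2def, hP2def]
      exact h
    have hI4 : ∫ s in t3..t4, F4 s ≤ (1/2) * (‖u2‖ ^ 2 / 2 + K0) := by
      have h := S13.seg_cost hbd2 hcont c (γ τ + k) u2 o34 t3
      rw [show t4 - t3 = (1/2:ℝ) by rw [ht4def, ht3def]; ring] at h
      rw [hF4def, hP4def]
      exact h
    have hI6 : ∫ s in t5..t6, F6 s ≤ (1/4) * (‖u3‖ ^ 2 / 2 + K0) := by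
      have h := S13.seg_cost hbd2 hcont c (y + k) u3 o56 t5
      rw [show t6 - t5 = (1/4:ℝ) by rw [ht6def, ht5def]; ring] at h
      rw [hF6def, hP6def]
      exact h
    -- final arithmetic
    have htotal : ∫ s in (0:ℝ)..t6, L c (σ s) (σ' s) ≤ 2 * m + (2 * (n:ℝ) + 16 * K0 + 4 * M0 ^ 2 + 20) := by
      rw [hsplit, ← hAe, hI3, hI5]
      have e1 : (∫ s in (0:ℝ)..τ, F1 s) + (∫ s in (τ+1)..t, F1 s)
          = A - ∫ s in τ..(τ+1), F1 s := by rw [hAe, ← hAsplit]; ring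
      have hC₁' : C₁ = M0 ^ 2 + 4 * K0 + 2 := hC₁def
      linarith only [hI2, hI4, hI6, hB, e1, hnu1, hnu2, hnu3, hAlt, hC₁', hn0, hK0, sq_nonneg M0]
    exact hle.trans htotal
end
end

section
/- Let n ≥ 1 and M0, K0 > 0. Let L : ℝⁿ × ℝⁿ × ℝⁿ → ℝ be continuous, ℤⁿ-periodic in its second argument, convex in its third argument, and satisfy |v|²/2 − K0 ≤ L(x,y,v) ≤ |v|²/2 + K0 for all x, y, v ∈ ℝⁿ. For c, x, y ∈ ℝⁿ and t > 0 define m^c(t,x,y) := inf{ ∫₀ᵗ L(c, γ(s), γ̇(s)) ds : γ : [0,t] → ℝⁿ absolutely continuous, γ(0) = x, γ(t) = y }. Then there exists a constant C > 0 depending only on n, M0, K0 such that for every c ∈ ℝⁿ, every t > 0, and every y ∈ ℝⁿ with |y| ≤ M0 t, one has m^c(t, y, 2y) ≤ m^c(t, 0, y) + C. -/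
open MeasureTheory Real Set

noncomputable section

namespace Stmt14

/-! ### Generic integration helpers -/

variable {F : Type*} [NormedAddCommGroup F] [NormedSpace ℝ F]

lemma ae_ne (b : ℝ) : ∀ᵐ x : ℝ, x ≠ b := by
  rw [ae_iff]
  have : {x : ℝ | ¬ x ≠ b} = {b} := by ext x; simp
  rw [this]
  exact Real.volume_singleton

lemma integral_congr_Ioo {f g : ℝ → F} {a b : ℝ} (hab : a ≤ b)
    (h : ∀ x ∈ Ioo a b, f x = g x) :
    ∫ x in a..b, f x = ∫ x in a..b, g x := by
  apply intervalIntegral.integral_congr_ae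
  filter_upwards [ae_ne b] with x hxb hx
  rw [uIoc_of_le hab] at hx
  exact h x ⟨hx.1, lt_of_le_of_ne hx.2 hxb⟩

lemma II_congr_Ioo {f g : ℝ → F} {a b : ℝ} (hab : a ≤ b)
    (h : ∀ x ∈ Ioo a b, f x = g x) (hf : IntervalIntegrable f volume a b) :
    IntervalIntegrable g volume a b := by
  rw [intervalIntegrable_iff] at hf ⊢
  refine hf.congr ?_
  rw [uIoc_of_le hab, Filter.EventuallyEq, ae_restrict_iff' measurableSet_Ioc]
  filter_upwards [ae_ne b] with x hxb hx
  exact h x ⟨hx.1, lt_of_le_of_ne hx.2 hxb⟩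

lemma II_of_IOn {f : ℝ → F} {A B a b : ℝ} (h : IntegrableOn f (Icc A B) volume)
    (hA : A ≤ a) (hab : a ≤ b) (hB : b ≤ B) : IntervalIntegrable f volume a b := by
  have h2 : IntegrableOn f (Icc a b) volume := h.mono_set (Icc_subset_Icc hA hB)
  rw [← uIcc_of_le hab] at h2
  exact h2.intervalIntegrable

lemma II_mono {f : ℝ → F} {A B a b : ℝ} (h : IntervalIntegrable f volume A B)
    (hA : A ≤ a) (hab : a ≤ b) (hB : b ≤ B) : IntervalIntegrable f volume a b :=
  h.mono_set (by
    rw [uIcc_of_le hab, uIcc_of_le (hA.trans (hab.trans hB))]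
    exact Icc_subset_Icc hA hB)

/-! ### Absolutely continuous curve constructors -/

lemma IsAC.mono {n : ℕ} {a b a' b' : ℝ} {γ γ' : ℝ → E n} (h : IsAC a b γ γ')
    (h1 : a ≤ a') (h2 : b' ≤ b) : IsAC a' b' γ γ' :=
  ⟨h.1.mono_set (Icc_subset_Icc h1 h2),
    fun c d hc hcd hd => h.2 c d (h1.trans hc) hcd (hd.trans h2)⟩

lemma isAC_line {n : ℕ} (a b : ℝ) (p v : E n) :
    IsAC a b (fun s => p + (s - a) • v) (fun _ => v) := by
  constructor
  · exact integrableOn_const measure_Icc_lt_top.ne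
  · intro c d _ _ _
    rw [intervalIntegral.integral_const, add_sub_add_left_eq_sub, ← sub_smul,
      sub_sub_sub_cancel_right]

lemma IsAC.translate {n : ℕ} {a b : ℝ} {γ γ' : ℝ → E n} (h : IsAC a b γ γ') (v : E n) :
    IsAC a b (fun s => γ s + v) γ' :=
  ⟨h.1, fun c d hc hcd hd => by
    rw [add_sub_add_right_eq_sub]; exact h.2 c d hc hcd hd⟩

lemma IsAC.comp_add {n : ℕ} {a b τ : ℝ} {γ γ' : ℝ → E n}
    (h : IsAC (a + τ) (b + τ) γ γ') (hab : a ≤ b) :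
    IsAC a b (fun s => γ (s + τ)) (fun s => γ' (s + τ)) := by
  constructor
  · have h1 : IntervalIntegrable γ' volume (a + τ) (b + τ) :=
      II_of_IOn h.1 le_rfl (by linarith) le_rfl
    have h2 := h1.comp_add_right τ
    have h3 : IntervalIntegrable (fun s => γ' (s + τ)) volume a b := by
      simpa using h2
    rw [intervalIntegrable_iff, uIoc_of_le hab] at h3
    exact h3.congr_set_ae (Ioc_ae_eq_Icc (μ := volume)).symm
  · intro c d hc hcd hd
    rw [intervalIntegral.integral_comp_add_right]
    exact h.2 (c + τ) (d + τ) (by linarith) (by linarith) (by linarith)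

lemma IsAC.glue {n : ℕ} {a b c : ℝ} {γ₁ γ₁' γ₂ γ₂' : ℝ → E n}
    (hab : a ≤ b) (hbc : b ≤ c)
    (h1 : IsAC a b γ₁ γ₁') (h2 : IsAC b c γ₂ γ₂') (hm : γ₁ b = γ₂ b) :
    IsAC a c (fun s => if s ≤ b then γ₁ s else γ₂ s)
             (fun s => if s ≤ b then γ₁' s else γ₂' s) := by
  set η' : ℝ → E n := fun s => if s ≤ b then γ₁' s else γ₂' s with hη'
  have hint : IntegrableOn η' (Icc a c) volume := by
    rw [← Icc_union_Icc_eq_Icc hab hbc]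
    apply IntegrableOn.union
    · refine h1.1.congr ?_
      rw [Filter.EventuallyEq, ae_restrict_iff' measurableSet_Icc]
      filter_upwards with x hx
      simp [η', hx.2]
    · refine h2.1.congr ?_
      rw [Filter.EventuallyEq, ae_restrict_iff' measurableSet_Icc]
      filter_upwards [ae_ne b] with x hxb hx
      have : ¬ x ≤ b := not_le.2 (lt_of_le_of_ne hx.1 (Ne.symm hxb))
      simp [η', this]
  refine ⟨hint, ?_⟩
  intro c' d' hc' hcd hd'
  rcases le_or_gt d' b with hdb | hdb
  · have e : EqOn η' γ₁' (Set.uIcc c' d') := by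
      intro x hx
      rw [uIcc_of_le hcd] at hx
      simp [η', hx.2.trans hdb]
    rw [intervalIntegral.integral_congr e]
    simp only [if_pos hdb, if_pos (hcd.trans hdb)]
    exact h1.2 c' d' hc' hcd hdb
  · rcases le_or_gt c' b with hcb | hcb
    · have i1 : IntervalIntegrable η' volume c' b := II_of_IOn hint hc' hcb hbc
      have i2 : IntervalIntegrable η' volume b d' := II_of_IOn hint hab hdb.le hd'
      rw [← intervalIntegral.integral_add_adjacent_intervals i1 i2]
      have A1 : ∫ s in c'..b, η' s = γ₁ b - γ₁ c' := by
        have e : EqOn η' γ₁' (Set.uIcc c' b) := by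
          intro x hx
          rw [uIcc_of_le hcb] at hx
          simp [η', hx.2]
        rw [intervalIntegral.integral_congr e]
        exact (h1.2 c' b hc' hcb le_rfl).symm
      have A2 : ∫ s in b..d', η' s = γ₂ d' - γ₂ b := by
        rw [integral_congr_Ioo hdb.le (g := γ₂')
          (fun x hx => by simp [η', not_le.2 hx.1])]
        exact (h2.2 b d' le_rfl hdb.le hd').symm
      rw [A1, A2]
      simp only [if_neg (not_le.2 hdb), if_pos hcb]
      rw [hm]; abel
    · rw [integral_congr_Ioo hcd (g := γ₂')
        (fun x hx => by simp [η', not_le.2 (hcb.trans hx.1)])]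
      simp only [if_neg (not_le.2 hcb), if_neg (not_le.2 (hcb.trans_le hcd))]
      exact h2.2 c' d' hcb.le hcd hd'

lemma IsAC.glue3 {n : ℕ} {p q T : ℝ} {γ₁ γ₁' γ₂ γ₂' γ₃ γ₃' : ℝ → E n}
    (h0p : (0:ℝ) ≤ p) (hpq : p ≤ q) (hqT : q ≤ T)
    (h1 : IsAC 0 p γ₁ γ₁') (h2 : IsAC p q γ₂ γ₂') (h3 : IsAC q T γ₃ γ₃')
    (e1 : γ₁ p = γ₂ p) (e2 : γ₂ q = γ₃ q) :
    IsAC 0 T (fun s => if s ≤ p then γ₁ s else if s ≤ q then γ₂ s else γ₃ s)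
             (fun s => if s ≤ p then γ₁' s else if s ≤ q then γ₂' s else γ₃' s) := by
  have g12 := IsAC.glue h0p hpq h1 h2 e1
  have hmatch : (if q ≤ p then γ₁ q else γ₂ q) = γ₃ q := by
    by_cases hqp : q ≤ p
    · obtain rfl : p = q := le_antisymm hpq hqp
      rw [if_pos hqp, e1, e2]
    · rw [if_neg hqp, e2]
  have g := IsAC.glue (h0p.trans hpq) hqT g12 h3 hmatch
  have reassoc : ∀ (f1 f2 f3 : ℝ → E n),
      (fun s => if s ≤ q then (if s ≤ p then f1 s else f2 s) else f3 s)
        = (fun s => if s ≤ p then f1 s else if s ≤ q then f2 s else f3 s) := by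
    intro f1 f2 f3
    funext s
    by_cases hsp : s ≤ p <;> by_cases hsq : s ≤ q <;> simp [hsp, hsq]
    exact absurd (hsp.trans hpq) hsq
  rw [reassoc γ₁ γ₂ γ₃, reassoc γ₁' γ₂' γ₃'] at g
  exact g

end Stmt14

namespace Stmt14

/-! ### Basic facts about the cost `mC` -/

variable {n : ℕ} {L : E n → E n → E n → ℝ} {K0 : ℝ}

/-- The set of admissible costs. -/
def costSet (L : E n → E n → E n → ℝ) (c : E n) (t : ℝ) (x y : E n) : Set ℝ :=
  { r | ∃ γ γ' : ℝ → E n, IsAC 0 t γ γ' ∧ γ 0 = x ∧ γ t = y ∧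
    IntervalIntegrable (fun s => L c (γ s) (γ' s)) volume 0 t ∧
    r = ∫ s in (0:ℝ)..t, L c (γ s) (γ' s) }

lemma mC_eq (c : E n) (t : ℝ) (x y : E n) :
    mC L c t x y = sInf (costSet L c t x y) := rfl

lemma L_lb (hbd : ∀ x y v, ‖v‖ ^ 2 / 2 - K0 ≤ L x y v ∧ L x y v ≤ ‖v‖ ^ 2 / 2 + K0)
    (c x v : E n) : -K0 ≤ L c x v :=
  le_trans (by nlinarith [sq_nonneg ‖v‖]) (hbd c x v).1

lemma mem_lb (hbd : ∀ x y v, ‖v‖ ^ 2 / 2 - K0 ≤ L x y v ∧ L x y v ≤ ‖v‖ ^ 2 / 2 + K0)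
    {c : E n} {t : ℝ} {x y : E n} {r : ℝ} (ht : 0 ≤ t)
    (hr : r ∈ costSet L c t x y) : -K0 * t ≤ r := by
  obtain ⟨γ, γ', hAC, h0, h1, hI, rfl⟩ := hr
  have h := intervalIntegral.integral_mono_on (f := fun _ => -K0) (μ := volume) ht
    intervalIntegrable_const hI (fun s _ => L_lb hbd c (γ s) (γ' s))
  calc -K0 * t = ∫ _ in (0:ℝ)..t, (-K0) := by
        rw [intervalIntegral.integral_const, smul_eq_mul]; ring
  _ ≤ _ := h

lemma costSet_bddBelow
    (hbd : ∀ x y v, ‖v‖ ^ 2 / 2 - K0 ≤ L x y v ∧ L x y v ≤ ‖v‖ ^ 2 / 2 + K0)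
    {t : ℝ} (ht : 0 ≤ t) (c x y : E n) : BddBelow (costSet L c t x y) :=
  ⟨-K0 * t, fun _ hr => mem_lb hbd ht hr⟩

lemma mC_le_of_mem
    (hbd : ∀ x y v, ‖v‖ ^ 2 / 2 - K0 ≤ L x y v ∧ L x y v ≤ ‖v‖ ^ 2 / 2 + K0)
    {t : ℝ} (ht : 0 ≤ t) {c x y : E n} {r : ℝ}
    (hr : r ∈ costSet L c t x y) : mC L c t x y ≤ r :=
  csInf_le (costSet_bddBelow hbd ht c x y) hr

lemma straight_mem (hcont : Continuous (fun q : E n × E n × E n => L q.1 q.2.1 q.2.2))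
    {t : ℝ} (ht : 0 < t) (c x y : E n) :
    (∫ s in (0:ℝ)..t, L c (x + (s - 0) • (t⁻¹ • (y - x))) (t⁻¹ • (y - x)))
      ∈ costSet L c t x y := by
  refine ⟨_, _, isAC_line 0 t x (t⁻¹ • (y - x)), by simp, ?_, ?_, rfl⟩
  · rw [sub_zero, smul_smul, mul_inv_cancel₀ ht.ne', one_smul]
    abel
  · have hc : Continuous fun s : ℝ =>
        ((c, (x + (s - 0) • (t⁻¹ • (y - x)), t⁻¹ • (y - x))) : E n × E n × E n) := by
      fun_prop
    exact (hcont.comp hc).intervalIntegrable 0 t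

lemma straight_cost_le
    (hbd : ∀ x y v, ‖v‖ ^ 2 / 2 - K0 ≤ L x y v ∧ L x y v ≤ ‖v‖ ^ 2 / 2 + K0)
    (hcont : Continuous (fun q : E n × E n × E n => L q.1 q.2.1 q.2.2))
    {t : ℝ} (ht : 0 < t) (c x y : E n) :
    (∫ s in (0:ℝ)..t, L c (x + (s - 0) • (t⁻¹ • (y - x))) (t⁻¹ • (y - x)))
      ≤ ‖y - x‖ ^ 2 / (2 * t) + K0 * t := by
  set v := t⁻¹ • (y - x) with hv
  have hnv : ‖v‖ = ‖y - x‖ / t := by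
    rw [hv, norm_smul, norm_inv, Real.norm_eq_abs, abs_of_pos ht, div_eq_inv_mul]
  have hc : Continuous fun s : ℝ => L c (x + (s - 0) • v) v := by
    have hc2 : Continuous fun s : ℝ => ((c, (x + (s - 0) • v, v)) : E n × E n × E n) := by
      fun_prop
    exact hcont.comp hc2
  calc (∫ s in (0:ℝ)..t, L c (x + (s - 0) • v) v)
      ≤ ∫ _ in (0:ℝ)..t, (‖v‖ ^ 2 / 2 + K0) :=
        intervalIntegral.integral_mono_on ht.le (hc.intervalIntegrable 0 t)
          intervalIntegrable_const (fun s _ => (hbd c _ v).2)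
  _ = t * (‖v‖ ^ 2 / 2 + K0) := by
        rw [intervalIntegral.integral_const, smul_eq_mul]; ring
  _ = ‖y - x‖ ^ 2 / (2 * t) + K0 * t := by
        rw [hnv]; field_simp

lemma mC_le_straight
    (hbd : ∀ x y v, ‖v‖ ^ 2 / 2 - K0 ≤ L x y v ∧ L x y v ≤ ‖v‖ ^ 2 / 2 + K0)
    (hcont : Continuous (fun q : E n × E n × E n => L q.1 q.2.1 q.2.2))
    {t : ℝ} (ht : 0 < t) (c x y : E n) :
    mC L c t x y ≤ ‖y - x‖ ^ 2 / (2 * t) + K0 * t :=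
  (mC_le_of_mem hbd ht.le (straight_mem hcont ht c x y)).trans
    (straight_cost_le hbd hcont ht c x y)

lemma mC_lb
    (hbd : ∀ x y v, ‖v‖ ^ 2 / 2 - K0 ≤ L x y v ∧ L x y v ≤ ‖v‖ ^ 2 / 2 + K0)
    (hcont : Continuous (fun q : E n × E n × E n => L q.1 q.2.1 q.2.2))
    {t : ℝ} (ht : 0 < t) (c x y : E n) :
    -K0 * t ≤ mC L c t x y :=
  le_csInf ⟨_, straight_mem hcont ht c x y⟩ (fun _ hr => mem_lb hbd ht.le hr)

lemma exists_near (hcont : Continuous (fun q : E n × E n × E n => L q.1 q.2.1 q.2.2))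
    {t : ℝ} (ht : 0 < t) (c x y : E n) :
    ∃ r ∈ costSet L c t x y, r < mC L c t x y + 1 :=
  Real.lt_sInf_add_pos ⟨_, straight_mem hcont ht c x y⟩ one_pos

lemma norm_fract_sq_le (n : ℕ) (y : E n) :
    ‖y - intVec n (fun i => ⌊y i⌋)‖ ^ 2 ≤ n := by
  rw [EuclideanSpace.norm_eq, Real.sq_sqrt (by positivity)]
  calc ∑ i, ‖(y - intVec n fun i => ⌊y i⌋) i‖ ^ 2 ≤ ∑ _i : Fin n, (1:ℝ) := by
        apply Finset.sum_le_sum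
        intro i _
        have hv : (y - intVec n fun i => ⌊y i⌋) i = y i - (⌊y i⌋ : ℝ) := by simp [intVec]
        have h1 : (⌊y i⌋ : ℝ) ≤ y i := Int.floor_le _
        have h2 : y i < (⌊y i⌋ : ℝ) + 1 := Int.lt_floor_add_one _
        rw [hv, Real.norm_eq_abs]
        rw [abs_of_nonneg (by linarith)]
        nlinarith
  _ = n := by simp

end Stmt14

namespace Stmt14

variable {n : ℕ} {L : E n → E n → E n → ℝ} {K0 : ℝ}

/-- Step A: going from `y` to `2y` in time `t` is at most the cost of going from
`0` to `y` in time `t-2` plus a constant, by integer translation and two short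
straight segments. -/
lemma stepA
    (hbd : ∀ x y v, ‖v‖ ^ 2 / 2 - K0 ≤ L x y v ∧ L x y v ≤ ‖v‖ ^ 2 / 2 + K0)
    (hcont : Continuous (fun q : E n × E n × E n => L q.1 q.2.1 q.2.2))
    (hper : ∀ (x y v : E n) (k : Fin n → ℤ), L x (y + intVec n k) v = L x y v)
    {c y : E n} {t : ℝ} (ht : 6 ≤ t) :
    mC L c t y ((2:ℝ) • y) ≤ mC L c (t-2) 0 y + ((n:ℝ) + 2*K0) := by
  have ht2 : (0:ℝ) < t - 2 := by linarith
  set kv : E n := intVec n (fun i => ⌊y i⌋) with hkv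
  set z : E n := y - kv with hzdef
  have hz2 : ‖z‖^2 ≤ (n:ℝ) := by rw [hzdef, hkv]; exact norm_fract_sq_le n y
  have key : ∀ r ∈ costSet L c (t-2) 0 y,
      mC L c t y ((2:ℝ) • y) ≤ r + ((n:ℝ) + 2*K0) := by
    rintro r ⟨γ, γ', hAC, hγ0, hγT, hI, rfl⟩
    set g : ℝ → ℝ := fun s => L c (γ s) (γ' s) with hg
    set η₁ : ℝ → E n := fun s => y + (s - 0) • (-z) with hη₁
    set η₂ : ℝ → E n := fun s => γ (s + (-1)) + kv with hη₂
    set η₂' : ℝ → E n := fun s => γ' (s + (-1)) with hη₂'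
    set η₃ : ℝ → E n := fun s => (y + kv) + (s - (t-1)) • z with hη₃
    have AC1 : IsAC 0 1 η₁ (fun _ => -z) := isAC_line 0 1 y (-z)
    have AC2 : IsAC 1 (t-1) η₂ η₂' := by
      have h0 : IsAC (1 + -1) ((t-1) + -1) γ γ' := by
        rw [show (1:ℝ) + -1 = 0 by ring, show (t-1) + -1 = t-2 by ring]
        exact hAC
      exact IsAC.translate (IsAC.comp_add h0 (by linarith)) kv
    have AC3 : IsAC (t-1) t η₃ (fun _ => z) := isAC_line (t-1) t (y + kv) z
    have e1 : η₁ 1 = η₂ 1 := by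
      show y + ((1:ℝ) - 0) • (-z) = γ (1 + -1) + kv
      rw [show (1:ℝ) + -1 = 0 by ring, hγ0, sub_zero, one_smul, hzdef]
      abel
    have e2 : η₂ (t-1) = η₃ (t-1) := by
      show γ ((t-1) + -1) + kv = (y + kv) + ((t-1) - (t-1)) • z
      rw [show (t-1) + -1 = t-2 by ring, hγT, sub_self, zero_smul, add_zero]
    set η : ℝ → E n := fun s => if s ≤ 1 then η₁ s else if s ≤ t-1 then η₂ s else η₃ s
      with hηdef
    set η' : ℝ → E n := fun s => if s ≤ 1 then -z else if s ≤ t-1 then η₂' s else z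
      with hη'def
    have hACη : IsAC 0 t η η' :=
      IsAC.glue3 zero_le_one (by linarith) (by linarith) AC1 AC2 AC3 e1 e2
    have hη0 : η 0 = y := by
      show (if (0:ℝ) ≤ 1 then η₁ 0 else if (0:ℝ) ≤ t-1 then η₂ 0 else η₃ 0) = y
      rw [if_pos (zero_le_one : (0:ℝ) ≤ 1)]
      show y + ((0:ℝ) - 0) • (-z) = y
      simp
    have hηt : η t = (2:ℝ) • y := by
      show (if t ≤ 1 then η₁ t else if t ≤ t-1 then η₂ t else η₃ t) = (2:ℝ) • y
      rw [if_neg (by linarith : ¬ t ≤ 1), if_neg (by linarith : ¬ t ≤ t-1)]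
      show (y + kv) + (t - (t-1)) • z = (2:ℝ) • y
      rw [show t - (t-1) = (1:ℝ) by ring, one_smul, two_smul, hzdef]
      abel
    set f : ℝ → ℝ := fun s => L c (η s) (η' s) with hf
    -- piece 1
    have hf1 : ∀ s ∈ Icc (0:ℝ) 1, f s = L c (η₁ s) (-z) := by
      intro s hs
      show L c (if s ≤ 1 then η₁ s else if s ≤ t-1 then η₂ s else η₃ s)
             (if s ≤ 1 then -z else if s ≤ t-1 then η₂' s else z) = L c (η₁ s) (-z)
      rw [if_pos hs.2, if_pos hs.2]
    have hcont1 : Continuous fun s : ℝ => L c (η₁ s) (-z) := by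
      have h2 : Continuous fun s : ℝ => ((c, (η₁ s, -z)) : E n × E n × E n) := by
        simp only [hη₁]; fun_prop
      exact hcont.comp h2
    have hI1 : IntervalIntegrable f volume 0 1 :=
      II_congr_Ioo zero_le_one (fun x hx => (hf1 x (Ioo_subset_Icc_self hx)).symm)
        (hcont1.intervalIntegrable 0 1)
    have hc1 : ∫ s in (0:ℝ)..1, f s ≤ (n:ℝ)/2 + K0 := by
      have e : ∫ s in (0:ℝ)..1, f s = ∫ s in (0:ℝ)..1, L c (η₁ s) (-z) :=
        intervalIntegral.integral_congr
          (fun x hx => hf1 x (by rwa [uIcc_of_le zero_le_one] at hx))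
      rw [e]
      calc ∫ s in (0:ℝ)..1, L c (η₁ s) (-z)
          ≤ ∫ _ in (0:ℝ)..1, (‖(-z)‖^2/2 + K0) :=
            intervalIntegral.integral_mono_on zero_le_one (hcont1.intervalIntegrable 0 1)
              intervalIntegrable_const (fun s _ => (hbd c (η₁ s) (-z)).2)
      _ = ‖z‖^2/2 + K0 := by
            rw [intervalIntegral.integral_const, smul_eq_mul, norm_neg]; ring
      _ ≤ (n:ℝ)/2 + K0 := by linarith
    -- piece 2
    have hg1 : IntervalIntegrable (fun s => g (s + -1)) volume 1 (t-1) := by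
      have h2 := hI.comp_add_right (-1)
      rw [show (0:ℝ) - (-1) = 1 by ring, show (t-2) - (-1) = t-1 by ring] at h2
      exact h2
    have hf2 : ∀ s ∈ Ioo (1:ℝ) (t-1), f s = g (s + -1) := by
      intro s hs
      have h1 : ¬ s ≤ 1 := not_le.2 hs.1
      have h2 : s ≤ t-1 := hs.2.le
      show L c (if s ≤ 1 then η₁ s else if s ≤ t-1 then η₂ s else η₃ s)
             (if s ≤ 1 then -z else if s ≤ t-1 then η₂' s else z) = g (s + -1)
      rw [if_neg h1, if_neg h1, if_pos h2, if_pos h2]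
      show L c (γ (s + -1) + kv) (γ' (s + -1)) = L c (γ (s + -1)) (γ' (s + -1))
      exact hper c (γ (s + -1)) (γ' (s + -1)) _
    have hI2 : IntervalIntegrable f volume 1 (t-1) :=
      II_congr_Ioo (by linarith) (fun x hx => (hf2 x hx).symm) hg1
    have hc2 : ∫ s in (1:ℝ)..(t-1), f s = ∫ s in (0:ℝ)..(t-2), g s := by
      rw [integral_congr_Ioo (by linarith : (1:ℝ) ≤ t-1) hf2,
        intervalIntegral.integral_comp_add_right g (-1),
        show (1:ℝ) + -1 = 0 by ring, show (t-1) + -1 = t-2 by ring]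
    -- piece 3
    have hf3 : ∀ s ∈ Ioo (t-1) t, f s = L c (η₃ s) z := by
      intro s hs
      have h2 : ¬ s ≤ t-1 := not_le.2 hs.1
      have h1 : ¬ s ≤ 1 := by
        intro hc
        exact h2 (by linarith)
      show L c (if s ≤ 1 then η₁ s else if s ≤ t-1 then η₂ s else η₃ s)
             (if s ≤ 1 then -z else if s ≤ t-1 then η₂' s else z) = L c (η₃ s) z
      rw [if_neg h1, if_neg h1, if_neg h2, if_neg h2]
    have hcont3 : Continuous fun s : ℝ => L c (η₃ s) z := by
      have h2 : Continuous fun s : ℝ => ((c, (η₃ s, z)) : E n × E n × E n) := by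
        simp only [hη₃]; fun_prop
      exact hcont.comp h2
    have hI3 : IntervalIntegrable f volume (t-1) t :=
      II_congr_Ioo (by linarith) (fun x hx => (hf3 x hx).symm)
        (hcont3.intervalIntegrable _ _)
    have hc3 : ∫ s in (t-1)..t, f s ≤ (n:ℝ)/2 + K0 := by
      rw [integral_congr_Ioo (by linarith : t-1 ≤ t) hf3]
      calc ∫ s in (t-1)..t, L c (η₃ s) z
          ≤ ∫ _ in (t-1)..t, (‖z‖^2/2 + K0) :=
            intervalIntegral.integral_mono_on (by linarith)
              (hcont3.intervalIntegrable _ _) intervalIntegrable_const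
              (fun s _ => (hbd c (η₃ s) z).2)
      _ = ‖z‖^2/2 + K0 := by
            rw [intervalIntegral.integral_const, smul_eq_mul,
              show t - (t-1) = (1:ℝ) by ring, one_mul]
      _ ≤ (n:ℝ)/2 + K0 := by linarith
    -- total
    have hItot : IntervalIntegrable f volume 0 t := (hI1.trans hI2).trans hI3
    have hmem : (∫ s in (0:ℝ)..t, f s) ∈ costSet L c t y ((2:ℝ) • y) :=
      ⟨η, η', hACη, hη0, hηt, hItot, rfl⟩
    have hsplit : ∫ s in (0:ℝ)..t, f s
        = (∫ s in (0:ℝ)..1, f s) + (∫ s in (1:ℝ)..(t-1), f s) + (∫ s in (t-1)..t, f s) := by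
      rw [← intervalIntegral.integral_add_adjacent_intervals (hI1.trans hI2) hI3,
        ← intervalIntegral.integral_add_adjacent_intervals hI1 hI2]
    calc mC L c t y ((2:ℝ) • y) ≤ ∫ s in (0:ℝ)..t, f s := mC_le_of_mem hbd (by linarith) hmem
    _ = (∫ s in (0:ℝ)..1, f s) + (∫ s in (1:ℝ)..(t-1), f s) + (∫ s in (t-1)..t, f s) := hsplit
    _ ≤ ((n:ℝ)/2 + K0) + (∫ s in (0:ℝ)..(t-2), g s) + ((n:ℝ)/2 + K0) := by
        rw [hc2]
        exact add_le_add (add_le_add hc1 le_rfl) hc3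
    _ = (∫ s in (0:ℝ)..(t-2), g s) + ((n:ℝ) + 2*K0) := by ring
  have hne : (costSet L c (t-2) 0 y).Nonempty := ⟨_, straight_mem hcont ht2 c 0 y⟩
  have hlb : mC L c t y ((2:ℝ) • y) - ((n:ℝ) + 2*K0) ≤ sInf (costSet L c (t-2) 0 y) :=
    le_csInf hne (fun r hr => by linarith [key r hr])
  rw [mC_eq c (t-2) 0 y]
  linarith

end Stmt14

namespace Stmt14

variable {n : ℕ} {L : E n → E n → E n → ℝ} {K0 : ℝ}

set_option maxHeartbeats 1600000 in
/-- Step B: shortening the time from `t` to `t-2` costs at most a constant: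
cut out a cheap window `[j, j+3]` of a near-optimal curve and traverse its
displacement by a straight segment in unit time. -/
lemma stepB (hK0 : 0 < K0)
    (hbd : ∀ x y v, ‖v‖ ^ 2 / 2 - K0 ≤ L x y v ∧ L x y v ≤ ‖v‖ ^ 2 / 2 + K0)
    (hcont : Continuous (fun q : E n × E n × E n => L q.1 q.2.1 q.2.2))
    {M0 : ℝ} (hM0 : 0 < M0) {c y : E n} {t : ℝ} (ht : 6 ≤ t) (hy : ‖y‖ ≤ M0 * t) :
    mC L c (t-2) 0 y ≤ mC L c t 0 y + (18*(M0^2/2 + 2*K0 + 1)^2 + 4*K0 + 1) := by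
  have ht0 : (0:ℝ) < t := by linarith
  set F : ℝ := M0^2/2 + 2*K0 + 1 with hF
  have hF0 : 0 ≤ F := by rw [hF]; nlinarith [sq_nonneg M0]
  clear_value F
  obtain ⟨r, hrmem, hrlt⟩ := exists_near hcont ht0 c 0 y
  obtain ⟨γ, γ', hAC, hγ0, hγT, hI, rfl⟩ := hrmem
  set g : ℝ → ℝ := fun s => L c (γ s) (γ' s) with hg
  -- bound on the near-optimal cost
  have hmCub : mC L c t 0 y ≤ (M0^2/2 + K0) * t := by
    have h1 := mC_le_straight hbd hcont ht0 c 0 y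
    have h2 : ‖y - 0‖^2/(2*t) ≤ M0^2*t/2 := by
      rw [sub_zero, div_le_iff₀ (by linarith : (0:ℝ) < 2*t)]
      nlinarith [norm_nonneg y]
    linarith
  have hrub : (∫ s in (0:ℝ)..t, g s) < (M0^2/2 + K0) * t + 1 := by linarith
  -- integrability of speed and energy
  have hnormI : IntervalIntegrable (fun s => ‖γ' s‖) volume 0 t :=
    II_of_IOn hAC.1.norm le_rfl ht0.le le_rfl
  have hsqI : IntervalIntegrable (fun s => ‖γ' s‖^2) volume 0 t := by
    rw [intervalIntegrable_iff]
    have hIg' : IntegrableOn g (Set.uIoc 0 t) volume := intervalIntegrable_iff.1 hI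
    have hmeas : AEStronglyMeasurable (fun s => ‖γ' s‖^2) (volume.restrict (Set.uIoc 0 t)) := by
      have h1 : AEStronglyMeasurable γ' (volume.restrict (Set.uIoc 0 t)) :=
        hAC.1.aestronglyMeasurable.mono_measure
          (Measure.restrict_mono (by rw [uIoc_of_le ht0.le]; exact Ioc_subset_Icc_self) le_rfl)
      have h2 := h1.norm.mul h1.norm
      simpa [pow_two, Pi.mul_def] using h2
    have hdom : Integrable (fun s => 2 * g s + 2*K0) (volume.restrict (Set.uIoc 0 t)) := by
      refine (hIg'.const_mul 2).add ?_
      refine integrableOn_const ?_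
      rw [uIoc_of_le ht0.le]
      exact measure_Ioc_lt_top.ne
    refine Integrable.mono' hdom hmeas ?_
    refine Filter.Eventually.of_forall (fun s => ?_)
    rw [Real.norm_eq_abs, abs_of_nonneg (sq_nonneg _)]
    show ‖γ' s‖^2 ≤ 2 * L c (γ s) (γ' s) + 2*K0
    nlinarith [(hbd c (γ s) (γ' s)).1]
  -- the total speed is at most F * t
  have hEnergy : ∫ s in (0:ℝ)..t, ‖γ' s‖^2 ≤ 2*(∫ s in (0:ℝ)..t, g s) + 2*K0*t := by
    have h1 : ∫ s in (0:ℝ)..t, ‖γ' s‖^2 ≤ ∫ s in (0:ℝ)..t, (2*g s + 2*K0) := by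
      refine intervalIntegral.integral_mono_on ht0.le hsqI
        ((hI.const_mul 2).add intervalIntegrable_const) (fun s _ => ?_)
      show ‖γ' s‖^2 ≤ 2 * L c (γ s) (γ' s) + 2*K0
      nlinarith [(hbd c (γ s) (γ' s)).1]
    have h2 : ∫ s in (0:ℝ)..t, (2*g s + 2*K0) = 2*(∫ s in (0:ℝ)..t, g s) + 2*K0*t := by
      rw [intervalIntegral.integral_add (hI.const_mul 2) intervalIntegrable_const,
        intervalIntegral.integral_const_mul, intervalIntegral.integral_const, smul_eq_mul]
      ring
    linarith
  have hL1 : ∫ s in (0:ℝ)..t, ‖γ' s‖ ≤ F * t := by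
    have h1 : ∫ s in (0:ℝ)..t, ‖γ' s‖ ≤ ∫ s in (0:ℝ)..t, ((‖γ' s‖^2 + 1)/2) := by
      refine intervalIntegral.integral_mono_on ht0.le hnormI
        ((hsqI.add intervalIntegrable_const).div_const 2) (fun s _ => ?_)
      nlinarith [sq_nonneg (‖γ' s‖ - 1)]
    have h2 : ∫ s in (0:ℝ)..t, ((‖γ' s‖^2 + 1)/2)
        = ((∫ s in (0:ℝ)..t, ‖γ' s‖^2) + t)/2 := by
      rw [intervalIntegral.integral_div,
        intervalIntegral.integral_add hsqI intervalIntegrable_const,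
        intervalIntegral.integral_const, smul_eq_mul]
      ring
    rw [hF]
    have h3 : (∫ s in (0:ℝ)..t, g s) < (M0^2/2 + K0) * t + 1 := hrub
    nlinarith [hEnergy]
  -- choose a cheap window [3i, 3i+3]
  set N : ℕ := ⌊t/3⌋₊ with hN
  have hN1 : 1 ≤ N := Nat.le_floor (by push_cast; linarith)
  have h3N : 3*(N:ℝ) ≤ t := by
    have h := Nat.floor_le (show (0:ℝ) ≤ t/3 by linarith)
    rw [← hN] at h
    linarith
  have h6N : t ≤ 6*(N:ℝ) := by
    have h := Nat.lt_floor_add_one (t/3)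
    rw [← hN] at h
    linarith
  have hexists : ∃ i : ℕ, i < N ∧ (∫ s in (3*(i:ℝ))..(3*(i:ℝ)+3), ‖γ' s‖) ≤ 6*F := by
    by_contra hcon
    push_neg at hcon
    have hint : ∀ k, k < N → IntervalIntegrable (fun s => ‖γ' s‖) volume
        (3*((k:ℕ):ℝ)) (3*(((k+1:ℕ)):ℝ)) := by
      intro k hk
      have hk' : ((k:ℝ)) + 1 ≤ (N:ℝ) := by exact_mod_cast Nat.succ_le_of_lt hk
      refine II_mono hnormI (by positivity) ?_ ?_
      · push_cast; linarith
      · push_cast; linarith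
    have hsum := intervalIntegral.sum_integral_adjacent_intervals (μ := volume)
      (a := fun k : ℕ => 3*((k:ℕ):ℝ)) (f := fun s => ‖γ' s‖) hint
    have hsum2 : ∑ k ∈ Finset.range N, ∫ s in (3*(k:ℝ))..(3*(k:ℝ)+3), ‖γ' s‖
        = ∫ s in (0:ℝ)..(3*(N:ℝ)), ‖γ' s‖ := by
      calc ∑ k ∈ Finset.range N, ∫ s in (3*(k:ℝ))..(3*(k:ℝ)+3), ‖γ' s‖
          = ∑ k ∈ Finset.range N, ∫ s in (3*((k:ℕ):ℝ))..(3*(((k+1:ℕ)):ℝ)), ‖γ' s‖ := by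
            refine Finset.sum_congr rfl (fun k _ => ?_)
            rw [show (3*((k:ℝ))+3) = (3*(((k+1:ℕ)):ℝ)) by push_cast; ring]
      _ = ∫ s in (3*(((0:ℕ)):ℝ))..(3*((N:ℕ):ℝ)), ‖γ' s‖ := hsum
      _ = ∫ s in (0:ℝ)..(3*(N:ℝ)), ‖γ' s‖ := by norm_num
    have hmono2 : ∫ s in (0:ℝ)..(3*(N:ℝ)), ‖γ' s‖ ≤ ∫ s in (0:ℝ)..t, ‖γ' s‖ :=
      intervalIntegral.integral_mono_interval le_rfl (by positivity) h3N
        (Filter.Eventually.of_forall (fun s => norm_nonneg _)) hnormI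
    have hgt : ∀ k ∈ Finset.range N, 6*F < ∫ s in (3*(k:ℝ))..(3*(k:ℝ)+3), ‖γ' s‖ :=
      fun k hk => hcon k (Finset.mem_range.1 hk)
    have hNne : (Finset.range N).Nonempty := by
      rw [Finset.nonempty_range_iff]
      omega
    have hsumlt := Finset.sum_lt_sum_of_nonempty hNne hgt
    rw [Finset.sum_const, Finset.card_range, nsmul_eq_mul] at hsumlt
    have hFt : F*t ≤ (N:ℝ)*(6*F) := by nlinarith
    linarith [hsum2, hmono2, hL1, hsumlt, hFt]
  obtain ⟨i, hiN, hwin⟩ := hexists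
  set j : ℝ := 3*(i:ℝ) with hj
  have hj0 : 0 ≤ j := by rw [hj]; positivity
  have hj3 : j + 3 ≤ t := by
    have h1 : (i:ℝ) + 1 ≤ (N:ℝ) := by exact_mod_cast Nat.succ_le_of_lt hiN
    rw [hj]
    linarith
  set d : E n := γ (j+3) - γ j with hd
  have hnd : ‖d‖ ≤ 6*F := by
    have hid := hAC.2 j (j+3) hj0 (by linarith) hj3
    rw [hd, hid]
    exact le_trans (intervalIntegral.norm_integral_le_integral_norm (by linarith)) hwin
  -- the competitor curve
  set η₂ : ℝ → E n := fun s => γ j + (s - j) • d with hη₂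
  set η₃ : ℝ → E n := fun s => γ (s + 2) with hη₃
  set η₃' : ℝ → E n := fun s => γ' (s + 2) with hη₃'
  have AC1 : IsAC 0 j γ γ' := IsAC.mono hAC le_rfl (by linarith)
  have AC2 : IsAC j (j+1) η₂ (fun _ => d) := isAC_line j (j+1) (γ j) d
  have AC3 : IsAC (j+1) (t-2) η₃ η₃' := by
    have h0 : IsAC ((j+1) + 2) ((t-2) + 2) γ γ' := by
      rw [show (j+1) + 2 = j + 3 by ring, show (t-2) + 2 = t by ring]
      exact IsAC.mono hAC (by linarith) le_rfl
    exact IsAC.comp_add h0 (by linarith)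
  have e1 : γ j = η₂ j := by
    show γ j = γ j + (j - j) • d
    rw [sub_self, zero_smul, add_zero]
  have e2 : η₂ (j+1) = η₃ (j+1) := by
    show γ j + ((j+1) - j) • d = γ ((j+1) + 2)
    rw [show (j+1) - j = (1:ℝ) by ring, one_smul, show (j+1)+2 = j + 3 by ring, hd]
    abel
  set η : ℝ → E n := fun s => if s ≤ j then γ s else if s ≤ j+1 then η₂ s else η₃ s
    with hηdef
  set η' : ℝ → E n := fun s => if s ≤ j then γ' s else if s ≤ j+1 then d else η₃' s
    with hη'def
  have hACη : IsAC 0 (t-2) η η' :=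
    IsAC.glue3 hj0 (by linarith) (by linarith) AC1 AC2 AC3 e1 e2
  have hη0 : η 0 = 0 := by
    show (if (0:ℝ) ≤ j then γ 0 else if (0:ℝ) ≤ j+1 then η₂ 0 else η₃ 0) = 0
    rw [if_pos hj0, hγ0]
  have hηT : η (t-2) = y := by
    have h1 : ¬ (t-2 ≤ j) := by linarith
    show (if t-2 ≤ j then γ (t-2) else if t-2 ≤ j+1 then η₂ (t-2) else η₃ (t-2)) = y
    rw [if_neg h1]
    by_cases hc : t-2 ≤ j+1
    · rw [if_pos hc]
      show γ j + ((t-2) - j) • d = y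
      rw [show (t-2) - j = (1:ℝ) by linarith, one_smul, hd,
        show γ j + (γ (j+3) - γ j) = γ (j+3) from by abel,
        show j + 3 = t by linarith]
      exact hγT
    · rw [if_neg hc]
      show γ ((t-2) + 2) = y
      rw [show (t-2) + 2 = t by ring]
      exact hγT
  set f : ℝ → ℝ := fun s => L c (η s) (η' s) with hf
  -- piece 1
  have hf1 : ∀ s ∈ Icc (0:ℝ) j, f s = g s := by
    intro s hs
    show L c (if s ≤ j then γ s else if s ≤ j+1 then η₂ s else η₃ s)
           (if s ≤ j then γ' s else if s ≤ j+1 then d else η₃' s) = g s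
    rw [if_pos hs.2, if_pos hs.2]
  have hI1 : IntervalIntegrable f volume 0 j :=
    II_congr_Ioo hj0 (fun x hx => (hf1 x (Ioo_subset_Icc_self hx)).symm)
      (II_mono hI le_rfl hj0 (by linarith))
  have hc1 : ∫ s in (0:ℝ)..j, f s = ∫ s in (0:ℝ)..j, g s :=
    intervalIntegral.integral_congr (fun x hx => hf1 x (by rwa [uIcc_of_le hj0] at hx))
  -- piece 2
  have hf2 : ∀ s ∈ Ioo j (j+1), f s = L c (η₂ s) d := by
    intro s hs
    have h1 : ¬ s ≤ j := not_le.2 hs.1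
    have h2 : s ≤ j+1 := hs.2.le
    show L c (if s ≤ j then γ s else if s ≤ j+1 then η₂ s else η₃ s)
           (if s ≤ j then γ' s else if s ≤ j+1 then d else η₃' s) = L c (η₂ s) d
    rw [if_neg h1, if_neg h1, if_pos h2, if_pos h2]
  have hcont2 : Continuous fun s : ℝ => L c (η₂ s) d := by
    have h2 : Continuous fun s : ℝ => ((c, (η₂ s, d)) : E n × E n × E n) := by
      simp only [hη₂]; fun_prop
    exact hcont.comp h2
  have hI2 : IntervalIntegrable f volume j (j+1) :=
    II_congr_Ioo (by linarith) (fun x hx => (hf2 x hx).symm)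
      (hcont2.intervalIntegrable _ _)
  have hc2 : ∫ s in j..(j+1), f s ≤ 18*F^2 + K0 := by
    rw [integral_congr_Ioo (by linarith : j ≤ j+1) hf2]
    calc ∫ s in j..(j+1), L c (η₂ s) d
        ≤ ∫ _ in j..(j+1), (‖d‖^2/2 + K0) :=
          intervalIntegral.integral_mono_on (by linarith)
            (hcont2.intervalIntegrable _ _) intervalIntegrable_const
            (fun s _ => (hbd c (η₂ s) d).2)
    _ = ‖d‖^2/2 + K0 := by
          rw [intervalIntegral.integral_const, smul_eq_mul,
            show j+1-j = (1:ℝ) by ring, one_mul]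
    _ ≤ 18*F^2 + K0 := by
          have h36 : ‖d‖^2 ≤ 36*F^2 := by
            nlinarith [mul_self_le_mul_self (norm_nonneg d) hnd]
          linarith
  -- piece 3
  have hg3 : IntervalIntegrable (fun s => g (s+2)) volume (j+1) (t-2) := by
    have h2 := (II_mono hI (by linarith : (0:ℝ) ≤ j+3) (by linarith) le_rfl).comp_add_right 2
    rw [show j+3-2 = j+1 by ring] at h2
    exact h2
  have hf3 : ∀ s ∈ Ioo (j+1) (t-2), f s = g (s+2) := by
    intro s hs
    have h2 : ¬ s ≤ j+1 := not_le.2 hs.1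
    have h1 : ¬ s ≤ j := fun hc => h2 (by linarith)
    show L c (if s ≤ j then γ s else if s ≤ j+1 then η₂ s else η₃ s)
           (if s ≤ j then γ' s else if s ≤ j+1 then d else η₃' s) = g (s+2)
    rw [if_neg h1, if_neg h1, if_neg h2, if_neg h2]
  have hI3 : IntervalIntegrable f volume (j+1) (t-2) :=
    II_congr_Ioo (by linarith) (fun x hx => (hf3 x hx).symm) hg3
  have hc3 : ∫ s in (j+1)..(t-2), f s = ∫ s in (j+3)..t, g s := by
    rw [integral_congr_Ioo (by linarith : j+1 ≤ t-2) hf3,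
      intervalIntegral.integral_comp_add_right g 2,
      show j+1+2 = j+3 by ring, show t-2+2 = t by ring]
  -- window lower bound
  have hwlb : -(3*K0) ≤ ∫ s in j..(j+3), g s := by
    have h := intervalIntegral.integral_mono_on (f := fun _ => -K0) (μ := volume)
      (by linarith : j ≤ j+3) intervalIntegrable_const
      (II_mono hI hj0 (by linarith) hj3) (fun s _ => L_lb hbd c (γ s) (γ' s))
    calc -(3*K0) = ∫ _ in j..(j+3), (-K0) := by
          rw [intervalIntegral.integral_const, smul_eq_mul]; ring
    _ ≤ _ := h
  -- decomposition of the original cost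
  have hrdec : ∫ s in (0:ℝ)..t, g s
      = (∫ s in (0:ℝ)..j, g s) + (∫ s in j..(j+3), g s) + (∫ s in (j+3)..t, g s) := by
    rw [← intervalIntegral.integral_add_adjacent_intervals
        ((II_mono hI le_rfl hj0 (by linarith)).trans (II_mono hI hj0 (by linarith) hj3))
        (II_mono hI (by linarith) (by linarith) le_rfl),
      ← intervalIntegral.integral_add_adjacent_intervals
        (II_mono hI le_rfl hj0 (by linarith)) (II_mono hI hj0 (by linarith) hj3)]
  -- assemble
  have hItot : IntervalIntegrable f volume 0 (t-2) := (hI1.trans hI2).trans hI3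
  have hmem : (∫ s in (0:ℝ)..(t-2), f s) ∈ costSet L c (t-2) 0 y :=
    ⟨η, η', hACη, hη0, hηT, hItot, rfl⟩
  have hsplit : ∫ s in (0:ℝ)..(t-2), f s
      = (∫ s in (0:ℝ)..j, f s) + (∫ s in j..(j+1), f s) + (∫ s in (j+1)..(t-2), f s) := by
    rw [← intervalIntegral.integral_add_adjacent_intervals (hI1.trans hI2) hI3,
      ← intervalIntegral.integral_add_adjacent_intervals hI1 hI2]
  calc mC L c (t-2) 0 y ≤ ∫ s in (0:ℝ)..(t-2), f s := mC_le_of_mem hbd (by linarith) hmem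
  _ = (∫ s in (0:ℝ)..j, f s) + (∫ s in j..(j+1), f s) + (∫ s in (j+1)..(t-2), f s) := hsplit
  _ ≤ (∫ s in (0:ℝ)..j, g s) + (18*F^2 + K0) + (∫ s in (j+3)..t, g s) := by
      rw [hc1, hc3]
      exact add_le_add (add_le_add le_rfl hc2) le_rfl
  _ = (∫ s in (0:ℝ)..t, g s) - (∫ s in j..(j+3), g s) + (18*F^2 + K0) := by
      rw [hrdec]; ring
  _ ≤ (∫ s in (0:ℝ)..t, g s) + 3*K0 + (18*F^2 + K0) := by linarith
  _ ≤ mC L c t 0 y + (18*F^2 + 4*K0 + 1) := by linarith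

end Stmt14

/-- Translation estimate from the proof of the Appendix Lemma:
`m^c(t, y, 2y) ≤ m^c(t, 0, y) + C` with `C = C(n, M0, K0)` uniform in the frozen
point `c`. -/
theorem stmt_14 (n : ℕ) (hn : 1 ≤ n) (M0 K0 : ℝ) (hM0 : 0 < M0) (hK0 : 0 < K0)
    (L : E n → E n → E n → ℝ)
    (hcont : Continuous (fun q : E n × E n × E n => L q.1 q.2.1 q.2.2))
    (hper : ∀ (x y v : E n) (k : Fin n → ℤ), L x (y + intVec n k) v = L x y v)
    (hconv : ∀ x y, ConvexOn ℝ univ (fun v => L x y v))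
    (hbd : ∀ x y v, ‖v‖ ^ 2 / 2 - K0 ≤ L x y v ∧ L x y v ≤ ‖v‖ ^ 2 / 2 + K0) :
    ∃ C : ℝ, 0 < C ∧
      ∀ (c : E n) (t : ℝ) (y : E n), 0 < t → ‖y‖ ≤ M0 * t →
        mC L c t y ((2:ℝ) • y) ≤ mC L c t 0 y + C := by
  refine ⟨3*M0^2 + 18*(M0^2/2 + 2*K0 + 1)^2 + (n:ℝ) + 20*K0 + 2, ?_, ?_⟩
  · have hn0 : (0:ℝ) ≤ (n:ℝ) := Nat.cast_nonneg n
    nlinarith [sq_nonneg M0, sq_nonneg (M0^2/2 + 2*K0 + 1)]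
  · intro c t y ht hy
    rcases le_or_gt 6 t with h6 | h6
    · have hA := Stmt14.stepA hbd hcont hper (c := c) (y := y) h6
      have hB := Stmt14.stepB hK0 hbd hcont hM0 (c := c) h6 hy
      have hn0 : (0:ℝ) ≤ (n:ℝ) := Nat.cast_nonneg n
      nlinarith [sq_nonneg M0]
    · have h1 := Stmt14.mC_le_straight hbd hcont ht c y ((2:ℝ) • y)
      have h2 := Stmt14.mC_lb hbd hcont ht c 0 y
      have h3 : (2:ℝ) • y - y = y := by rw [two_smul]; abel
      rw [h3] at h1
      have h4 : ‖y‖^2/(2*t) ≤ M0^2*t/2 := by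
        rw [div_le_iff₀ (by linarith : (0:ℝ) < 2*t)]
        nlinarith [norm_nonneg y]
      have h5 : M0^2*t/2 ≤ 3*M0^2 := by nlinarith [sq_nonneg M0]
      have h6' : -(6*K0) ≤ -K0*t := by nlinarith
      have h7 : K0*t ≤ 6*K0 := by nlinarith
      have hn0 : (0:ℝ) ≤ (n:ℝ) := Nat.cast_nonneg n
      have hF2 : (0:ℝ) ≤ 18*(M0^2/2 + 2*K0 + 1)^2 := by positivity
      linarith
end
end
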